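/- arXiv:1210.3285 — 11 statements merged into one kernel-verified Lean document; each statement's English description precedes it below -/
import Mathlib

section
/- In any magma with a unary operation ' satisfying x·(x'·x) = x, x·(x'·(y·(y'·((z·u)'·w')'))) = y·(y'·(x·(x'·((w·z)·u)))), and x'' = x, the operation · is associative: (x·y)·z = x·(y·z). -/
theorem two_base_implies_assoc {S : Type*} (m : S → S → S) (i : S → S)
    (hA : ∀ x, m x (m (i x) x) = x)
    (hB : ∀ x y z u w,
      m x (m (i x) (m y (m (i y) (i (m (i (m z u)) (i w)))))) =
      m y (m (i y) (m x (m (i x) (m (m w z) u)))))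
    (hC : ∀ x, i (i x) = x) :
    ∀ x y z, m (m x y) z = m x (m y z) := by
  have e3 : ∀ X0, i (i X0) = X0 := fun X0 => (hC X0)
  have e4 : ∀ X0, m X0 (m (i X0) X0) = X0 := fun X0 => (hA X0)
  have e5 : ∀ X0, m (i X0) (m X0 (i X0)) = i X0 := fun X0 => (Eq.trans (congrArg (m (i X0)) (congrArg (fun t => m t (i X0)) ((e3 X0).symm))) (e4 (i X0)))
  have e6 : ∀ X0 X1 X2 X3 X4, m X0 (m (i X0) (m X1 (m (i X1) (i (m (i (m X2 X3)) (i X4)))))) = m X1 (m (i X1) (m X0 (m (i X0) (m (m X4 X2) X3)))) := fun X0 X1 X2 X3 X4 => (hB X0 X1 X2 X3 X4)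
  have e7 : ∀ X0 X1 X2 X3 X4, m X0 (m (i X0) (m X1 (m (i X1) (m (m (i X2) X3) X4)))) = m X1 (m (i X1) (m X0 (m (i X0) (i (m (i (m X3 X4)) X2))))) := fun X0 X1 X2 X3 X4 => (Eq.trans ((e6 X1 X0 X3 X4 (i X2)).symm) (congrArg (m X1) (congrArg (m (i X1)) (congrArg (m X0) (congrArg (m (i X0)) (congrArg i (congrArg (m (i (m X3 X4))) (e3 X2))))))))
  have e15 : ∀ X0 X1 X2 X3 X4, m X0 (m (i X0) (m (i X1) (m X1 (m (m X2 X3) X4)))) = m (i X1) (m X1 (m X0 (m (i X0) (i (m (i (m X3 X4)) (i X2)))))) := fun X0 X1 X2 X3 X4 => (Eq.trans (Eq.trans (congrArg (m X0) (congrArg (m (i X0)) (congrArg (m (i X1)) (congrArg (fun t => m t (m (m X2 X3) X4)) ((e3 X1).symm))))) ((e6 (i X1) X0 X3 X4 X2).symm)) (congrArg (m (i X1)) (congrArg (fun t => m t (m X0 (m (i X0) (i (m (i (m X3 X4)) (i X2)))))) (e3 X1))))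
  have e16 : ∀ X0 X1 X2 X3 X4, m X0 (m (i X0) (m (i X1) (m X1 (m (m (i X2) X3) X4)))) = m (i X1) (m X1 (m X0 (m (i X0) (i (m (i (m X3 X4)) X2))))) := fun X0 X1 X2 X3 X4 => (Eq.trans (e15 X0 X1 (i X2) X3 X4) (congrArg (m (i X1)) (congrArg (m X1) (congrArg (m X0) (congrArg (m (i X0)) (congrArg i (congrArg (m (i (m X3 X4))) (e3 X2))))))))
  have e23 : ∀ X0 X1 X2 X3 X4, m (i X0) (m X0 (m X1 (m (i X1) (m (m X2 X3) X4)))) = m X1 (m (i X1) (m (i X0) (m X0 (i (m (i (m X3 X4)) (i X2)))))) := fun X0 X1 X2 X3 X4 => (Eq.trans (Eq.trans (congrArg (m (i X0)) (congrArg (fun t => m t (m X1 (m (i X1) (m (m X2 X3) X4)))) ((e3 X0).symm))) ((e6 X1 (i X0) X3 X4 X2).symm)) (congrArg (m X1) (congrArg (m (i X1)) (congrArg (m (i X0)) (congrArg (fun t => m t (i (m (i (m X3 X4)) (i X2)))) (e3 X0))))))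
  have e24 : ∀ X0 X1 X2 X3 X4, m (i X0) (m X0 (m X1 (m (i X1) (m (m (i X2) X3) X4)))) = m X1 (m (i X1) (m (i X0) (m X0 (i (m (i (m X3 X4)) X2))))) := fun X0 X1 X2 X3 X4 => (Eq.trans (e23 X0 X1 (i X2) X3 X4) (congrArg (m X1) (congrArg (m (i X1)) (congrArg (m (i X0)) (congrArg (m X0) (congrArg i (congrArg (m (i (m X3 X4))) (e3 X2))))))))
  have e42 : ∀ X0 X1 X2 X3 X4, m (i X0) (m X0 (m (i X1) (m X1 (i (m (i (m X2 X3)) (i X4)))))) = m (i X1) (m X1 (m (i X0) (m X0 (m (m X4 X2) X3)))) := fun X0 X1 X2 X3 X4 => (Eq.trans (Eq.trans (congrArg (m (i X0)) (congrArg (m X0) (congrArg (m (i X1)) (congrArg (fun t => m t (i (m (i (m X2 X3)) (i X4)))) ((e3 X1).symm))))) ((e15 (i X1) X0 X4 X2 X3).symm)) (congrArg (m (i X1)) (congrArg (fun t => m t (m (i X0) (m X0 (m (m X4 X2) X3)))) (e3 X1))))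
  have e43 : ∀ X0 X1 X2 X3 X4, m (i X0) (m X0 (m (i X1) (m X1 (m (m (i X2) X3) X4)))) = m (i X1) (m X1 (m (i X0) (m X0 (i (m (i (m X3 X4)) X2))))) := fun X0 X1 X2 X3 X4 => (Eq.trans ((e42 X1 X0 X3 X4 (i X2)).symm) (congrArg (m (i X1)) (congrArg (m X1) (congrArg (m (i X0)) (congrArg (m X0) (congrArg i (congrArg (m (i (m X3 X4))) (e3 X2))))))))
  have e87 : ∀ X0 X1 X2 X3, m (m (m (i X0) X1) X2) (m (i (m (m (i X0) X1) X2)) (m X3 (m (i X3) (i (m (i (m X1 X2)) X0))))) = m X3 (m (i X3) (m (m (i X0) X1) X2)) := fun X0 X1 X2 X3 => (Eq.trans ((e7 X3 (m (m (i X0) X1) X2) X0 X1 X2).symm) (congrArg (m X3) (congrArg (m (i X3)) (e4 (m (m (i X0) X1) X2)))))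
  have e101 : ∀ X0 X1 X2 X3, m (m (m (i X0) X1) X2) (m (i (m (m (i X0) X1) X2)) (m (i X3) (m X3 (i (m (i (m X1 X2)) X0))))) = m (i X3) (m X3 (m (m (i X0) X1) X2)) := fun X0 X1 X2 X3 => (Eq.trans ((e24 X3 (m (m (i X0) X1) X2) X0 X1 X2).symm) (congrArg (m (i X3)) (congrArg (m X3) (e4 (m (m (i X0) X1) X2)))))
  have e108 : ∀ X0 X1 X2 X3, m (i (m (i (m X0 X1)) X2)) (m (m (i (m X0 X1)) X2) (m (i X3) (m X3 (m (m (i X2) X0) X1)))) = m (i X3) (m X3 (i (m (i (m X0 X1)) X2))) := fun X0 X1 X2 X3 => (Eq.trans (e43 (m (i (m X0 X1)) X2) X3 X2 X0 X1) (congrArg (m (i X3)) (congrArg (m X3) (e5 (m (i (m X0 X1)) X2)))))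
  have e163 : ∀ X0 X1 X2, m (i (m (i (m X0 X1)) X2)) (m (m (i (m X0 X1)) X2) (m (m (i X2) X0) X1)) = m (m (m (i X2) X0) X1) (m (i (m (m (i X2) X0) X1)) (i (m (i (m X0 X1)) X2))) := fun X0 X1 X2 => (Eq.trans ((e101 X2 X0 X1 (m (i (m X0 X1)) X2)).symm) (congrArg (m (m (m (i X2) X0) X1)) (congrArg (m (i (m (m (i X2) X0) X1))) (e5 (m (i (m X0 X1)) X2)))))
  have e164 : ∀ X0 X1 X2, m (i (m (i (m X0 X1)) X2)) (m (m (i (m X0 X1)) X2) (m (i (m (i (m X0 X1)) X2)) (m (m (i (m X0 X1)) X2) (m (m (i X2) X0) X1)))) = i (m (i (m X0 X1)) X2) := fun X0 X1 X2 => (Eq.trans (e108 X0 X1 X2 (m (i (m X0 X1)) X2)) (e5 (m (i (m X0 X1)) X2)))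
  have e174 : ∀ X0 X1 X2, m (i (m (i (m X0 X1)) X2)) (m (m (i (m X0 X1)) X2) (m (m (m (i X2) X0) X1) (m (i (m (m (i X2) X0) X1)) (i (m (i (m X0 X1)) X2))))) = i (m (i (m X0 X1)) X2) := fun X0 X1 X2 => (Eq.trans (congrArg (m (i (m (i (m X0 X1)) X2))) (congrArg (m (m (i (m X0 X1)) X2)) ((e163 X0 X1 X2).symm))) (e164 X0 X1 X2))
  have e175 : ∀ X0 X1 X2, m (m (m (i X0) X1) X2) (m (i (m (m (i X0) X1) X2)) (m (i (m (i (m X1 X2)) X0)) (m (m (i (m X1 X2)) X0) (m (m (i X0) X1) X2)))) = i (m (i (m X1 X2)) X0) := fun X0 X1 X2 => (Eq.trans (e16 (m (m (i X0) X1) X2) (m (i (m X1 X2)) X0) X0 X1 X2) (e174 X1 X2 X0))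
  have e176 : ∀ X0 X1 X2, i (m (i (m X0 X1)) X2) = m (m (i X2) X0) X1 := fun X0 X1 X2 => (Eq.trans (Eq.trans (Eq.trans ((e175 X2 X0 X1).symm) (congrArg (m (m (m (i X2) X0) X1)) (congrArg (m (i (m (m (i X2) X0) X1))) (e163 X0 X1 X2)))) (e87 X2 X0 X1 (m (m (i X2) X0) X1))) (e4 (m (m (i X2) X0) X1)))
  have e177 : ∀ X0 X1 X2, i (m (m (i X0) X1) X2) = m (i (m X1 X2)) X0 := fun X0 X1 X2 => (Eq.trans (congrArg i ((e176 X1 X2 X0).symm)) (e3 (m (i (m X1 X2)) X0)))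
  have e178 : ∀ X0 X1 X2, i (m (m X0 X1) X2) = m (i (m X1 X2)) (i X0) := fun X0 X1 X2 => (Eq.trans (congrArg i (congrArg (fun t => m t X2) (congrArg (fun t => m t X1) ((e3 X0).symm)))) (e177 (i X0) X1 X2))
  have e179 : ∀ X0 X1, i (m (i X0) X1) = m (m (i X1) X0) (m (i X0) X0) := fun X0 X1 => (Eq.trans (congrArg i (congrArg (fun t => m t X1) (congrArg i ((e4 X0).symm)))) (e176 X0 (m (i X0) X0) X1))
  have e181 : ∀ X0 X1, m (m (i (m X0 X1)) X0) (i X0) = i (m X0 X1) := fun X0 X1 => (Eq.trans (Eq.trans (congrArg (fun t => m t (i X0)) ((e177 X0 X0 X1).symm)) ((e178 X0 (m (i X0) X0) X1).symm)) (congrArg i (congrArg (fun t => m t X1) (e4 X0))))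
  have e182 : ∀ X0, m (m (i X0) X0) (i X0) = i X0 := fun X0 => (Eq.trans (Eq.trans (congrArg (fun t => m t (i X0)) (congrArg (fun t => m t X0) (congrArg i ((e4 X0).symm)))) (e181 X0 (m (i X0) X0))) (congrArg i (e4 X0)))
  have e183 : ∀ X0, m (i (m X0 (i X0))) X0 = X0 := fun X0 => (Eq.trans (Eq.trans ((e177 X0 X0 (i X0)).symm) (congrArg i (e182 X0))) (e3 X0))
  have e184 : ∀ X0, i (m X0 (i X0)) = m X0 (i X0) := fun X0 => (Eq.trans ((e181 X0 (i X0)).symm) (congrArg (fun t => m t (i X0)) (e183 X0)))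
  have e188 : ∀ X0 X1, m (i (m X0 X1)) (m X0 (i X0)) = i (m X0 X1) := fun X0 X1 => (Eq.trans ((e177 (m X0 (i X0)) X0 X1).symm) (congrArg i (congrArg (fun t => m t X1) (e183 X0))))
  have e189 : ∀ X0 X1, m (m X0 (i X0)) (m X0 X1) = m X0 X1 := fun X0 X1 => (Eq.trans (Eq.trans (Eq.trans (congrArg (fun t => m t (m X0 X1)) ((e184 X0).symm)) ((e177 (m X0 X1) X0 (i X0)).symm)) (congrArg i (e181 X0 X1))) (e3 (m X0 X1)))
  have e191 : ∀ X0 X1, m (m (m (i X0) X1) (m (i X1) X1)) (i X1) = m (m (i X0) X1) (i X1) := fun X0 X1 => (Eq.trans (Eq.trans (Eq.trans (congrArg (fun t => m t (i X1)) ((e179 X1 X0).symm)) ((e178 X1 (i X1) X0).symm)) (congrArg i (congrArg (fun t => m t X0) ((e184 X1).symm)))) (e176 X1 (i X1) X0))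
  have e195 : ∀ X0 X1, i (m X0 X1) = m (m (i X1) (i X0)) (m X0 (i X0)) := fun X0 X1 => (Eq.trans (Eq.trans (congrArg i (congrArg (fun t => m t X1) ((e3 X0).symm))) (e179 (i X0) X1)) (congrArg (m (m (i X1) (i X0))) (congrArg (fun t => m t (i X0)) (e3 X0))))
  have e202 : ∀ X0 X1 X2 X3, m (m (i X0) (m (i X1) X2)) X3 = m (m (m (i X0) (i X1)) (m X1 (i X1))) (m X2 X3) := fun X0 X1 X2 X3 => (Eq.trans (Eq.trans (Eq.trans ((e176 (m (i X1) X2) X3 X0).symm) (congrArg i (congrArg (fun t => m t X0) (e177 X1 X2 X3)))) (e177 (m X2 X3) X1 X0)) (congrArg (fun t => m t (m X2 X3)) (e195 X1 X0)))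
  have e209 : ∀ X0 X1 X2, m (m (m (i X0) X1) (i X1)) (m X1 X2) = m (m (i X0) X1) X2 := fun X0 X1 X2 => (Eq.trans (Eq.trans (Eq.trans (Eq.trans (Eq.trans (congrArg (fun t => m t (m X1 X2)) ((e191 X0 X1).symm)) (congrArg (fun t => m t (m X1 X2)) (congrArg (fun t => m t (i X1)) ((e179 X1 X0).symm)))) (congrArg (fun t => m t (m X1 X2)) ((e178 X1 (i X1) X0).symm))) ((e177 (m X1 X2) (m X1 (i X1)) X0).symm)) (congrArg i (congrArg (fun t => m t X0) (e188 X1 X2)))) (e176 X1 X2 X0))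
  have e210 : ∀ X0 X1, m (m (i X0) X0) X1 = m (i X0) (m X0 X1) := fun X0 X1 => (Eq.trans ((e209 X0 X0 X1).symm) (congrArg (fun t => m t (m X0 X1)) (e182 X0)))
  have e212 : ∀ X0 X1, m (m X0 (i X0)) X1 = m X0 (m (i X0) X1) := fun X0 X1 => (Eq.trans (Eq.trans (congrArg (fun t => m t X1) (congrArg (fun t => m t (i X0)) ((e3 X0).symm))) (e210 (i X0) X1)) (congrArg (fun t => m t (m (i X0) X1)) (e3 X0)))
  have e213 : ∀ X0 X1, m X0 (m (i X0) (m X0 X1)) = m X0 X1 := fun X0 X1 => (Eq.trans ((e212 X0 (m X0 X1)).symm) (e189 X0 X1))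
  have e214 : ∀ X0 X1 X2, m (m (m (m (i X0) (i X1)) (m X1 (i X1))) X1) X2 = m (m (m (i X0) (i X1)) (m X1 (i X1))) (m X1 X2) := fun X0 X1 X2 => (Eq.trans (Eq.trans (Eq.trans (congrArg (fun t => m t X2) (congrArg (fun t => m t X1) ((e195 X1 X0).symm))) ((e209 (m X1 X0) X1 X2).symm)) (congrArg (fun t => m t (m X1 X2)) (e181 X1 X0))) (congrArg (fun t => m t (m X1 X2)) (e195 X1 X0)))
  have e215 : ∀ X0 X1 X2, m (m (m X0 X1) (i X1)) (m X1 X2) = m (m X0 X1) X2 := fun X0 X1 X2 => (Eq.trans (Eq.trans (congrArg (fun t => m t (m X1 X2)) (congrArg (fun t => m t (i X1)) (congrArg (fun t => m t X1) ((e3 X0).symm)))) (e209 (i X0) X1 X2)) (congrArg (fun t => m t X2) (congrArg (fun t => m t X1) (e3 X0))))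
  have e220 : ∀ X0 X1 X2, m (m (m X0 (i X1)) X1) (m (i X1) X2) = m (m X0 (i X1)) X2 := fun X0 X1 X2 => (Eq.trans (congrArg (fun t => m t (m (i X1) X2)) (congrArg (m (m X0 (i X1))) ((e3 X1).symm))) (e215 X0 (i X1) X2))
  have e221 : ∀ X0 X1 X2, m (m (i X0) (m X1 (i X1))) (m X1 X2) = m (m (i X0) X1) X2 := fun X0 X1 X2 => (Eq.trans (Eq.trans ((e176 (m X1 (i X1)) (m X1 X2) X0).symm) (congrArg i (congrArg (fun t => m t X0) (congrArg i (e189 X1 X2))))) (e176 X1 X2 X0))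
  have e222 : ∀ X0 X1 X2, m (m X0 (m X1 (i X1))) (m X1 X2) = m (m X0 X1) X2 := fun X0 X1 X2 => (Eq.trans (Eq.trans (congrArg (fun t => m t (m X1 X2)) (congrArg (fun t => m t (m X1 (i X1))) ((e3 X0).symm))) (e221 (i X0) X1 X2)) (congrArg (fun t => m t X2) (congrArg (fun t => m t X1) (e3 X0))))
  have e229 : ∀ X0 X1 X2, m (m (i X0) X1) (m (i X1) (m X1 X2)) = m (m (i X0) X1) X2 := fun X0 X1 X2 => (Eq.trans (Eq.trans ((e176 X1 (m (i X1) (m X1 X2)) X0).symm) (congrArg i (congrArg (fun t => m t X0) (congrArg i (e213 X1 X2))))) (e176 X1 X2 X0))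
  have e230 : ∀ X0 X1 X2, m (m X0 X1) (m (i X1) (m X1 X2)) = m (m X0 X1) X2 := fun X0 X1 X2 => (Eq.trans (Eq.trans (congrArg (fun t => m t (m (i X1) (m X1 X2))) (congrArg (fun t => m t X1) ((e3 X0).symm))) (e229 (i X0) X1 X2)) (congrArg (fun t => m t X2) (congrArg (fun t => m t X1) (e3 X0))))
  have e231 : ∀ X0 X1 X2, m (m (m X0 (i X1)) X1) X2 = m (m X0 (i X1)) (m X1 X2) := fun X0 X1 X2 => (Eq.trans ((e230 (m X0 (i X1)) X1 X2).symm) (e220 X0 X1 (m X1 X2)))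
  have e232 : ∀ X0 X1 X2, m (m X0 (i X1)) (m X1 (m (i X1) X2)) = m (m X0 (i X1)) X2 := fun X0 X1 X2 => (Eq.trans (congrArg (m (m X0 (i X1))) (congrArg (fun t => m t (m (i X1) X2)) ((e3 X1).symm))) (e230 X0 (i X1) X2))
  have e233 : ∀ X0 X1 X2, m (m (m X0 X1) (i X1)) X2 = m (m X0 X1) (m (i X1) X2) := fun X0 X1 X2 => (Eq.trans ((e232 (m X0 X1) X1 X2).symm) (e215 X0 X1 (m (i X1) X2)))
  have e236 : ∀ X0 X1 X2, m (m (m (i X0) (i X1)) (m X1 (i X1))) X2 = m (m (i X0) (i X1)) X2 := fun X0 X1 X2 => (Eq.trans (Eq.trans (Eq.trans (Eq.trans (Eq.trans (Eq.trans (congrArg (fun t => m t X2) ((e195 X1 X0).symm)) (congrArg (fun t => m t X2) ((e181 X1 X0).symm))) (e233 (i (m X1 X0)) X1 X2)) (congrArg (fun t => m t (m (i X1) X2)) (congrArg (fun t => m t X1) (e195 X1 X0)))) (e214 X0 X1 (m (i X1) X2))) (e222 (m (i X0) (i X1)) X1 (m (i X1) X2))) (e220 (i X0) X1 X2))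
  have e245 : ∀ X0 X1 X2 X3, m (m (i X0) (m (i X1) X2)) X3 = m (m (i X0) (i X1)) (m X2 X3) := fun X0 X1 X2 X3 => (Eq.trans (e202 X0 X1 X2 X3) (e236 X0 X1 (m X2 X3)))
  have e248 : ∀ X0 X1 X2 X3, m (m X0 (m (i X1) X2)) X3 = m (m X0 (i X1)) (m X2 X3) := fun X0 X1 X2 X3 => (Eq.trans (Eq.trans (congrArg (fun t => m t X3) (congrArg (fun t => m t (m (i X1) X2)) ((e3 X0).symm))) (e245 (i X0) X1 X2 X3)) (congrArg (fun t => m t (m X2 X3)) (congrArg (fun t => m t (i X1)) (e3 X0))))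
  have e249 : ∀ X0 X1 X2 X3, m (m X0 (m X1 X2)) X3 = m (m X0 X1) (m X2 X3) := fun X0 X1 X2 X3 => (Eq.trans (Eq.trans (congrArg (fun t => m t X3) (congrArg (m X0) (congrArg (fun t => m t X2) ((e3 X1).symm)))) (e248 X0 (i X1) X2 X3)) (congrArg (fun t => m t (m X2 X3)) (congrArg (m X0) (e3 X1))))
  have e250 : ∀ X0 X1 X2, m (m X0 X1) X2 = m X0 (m X1 X2) := fun X0 X1 X2 => (Eq.trans (Eq.trans (Eq.trans (congrArg (fun t => m t X2) ((e189 X0 X1).symm)) (e249 (m X0 (i X0)) X0 X1 X2)) (e231 X0 X0 (m X1 X2))) (e189 X0 (m X1 X2)))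
  intro x y z
  exact (e250 x y z)
end

section
/- In any magma with a unary operation ' satisfying x·(x'·x) = x, the identity x·(x'·(y·(y'·((z·u)'·w')'))) = y·(y'·(x·(x'·((w·z)·u)))), x'' = x, and associativity (x·y)·z = x·(y·z), the identity (x·x')·(y'·y) = (y'·y)·(x·x') holds (idempotents of the form x·x' and y'·y commute). -/
theorem two_base_implies_idempotents_commute {S : Type*} (m : S → S → S) (i : S → S)
    (hA : ∀ x, m x (m (i x) x) = x)
    (hB : ∀ x y z u w,
      m x (m (i x) (m y (m (i y) (i (m (i (m z u)) (i w)))))) =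
      m y (m (i y) (m x (m (i x) (m (m w z) u)))))
    (hC : ∀ x, i (i x) = x)
    (hD : ∀ x y z, m (m x y) z = m x (m y z)) :
    ∀ x y, m (m x (i x)) (m (i y) y) = m (m (i y) y) (m x (i x)) := by
  letI : Semigroup S := { mul := m, mul_assoc := hD }
  have a1 : ∀ t : S, t * (i t * t) = t := hA
  have c1 : ∀ t : S, i (i t) = t := hC
  have b1 : ∀ x y z u w : S,
      x * (i x * (y * (i y * i (i (z * u) * i w)))) =
      y * (i y * (x * (i x * (w * z * u)))) := hB
  have a2 : ∀ t : S, i t * (t * i t) = i t := by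
    intro t; have h := a1 (i t); rwa [c1] at h
  have a3 : ∀ t s : S, t * (i t * (t * s)) = t * s := by
    intro t s
    calc t * (i t * (t * s)) = t * (i t * t) * s := by simp only [mul_assoc]
    _ = t * s := by rw [a1]
  have a4 : ∀ t s : S, i t * (t * (i t * s)) = i t * s := by
    intro t s
    calc i t * (t * (i t * s)) = i t * (t * i t) * s := by simp only [mul_assoc]
    _ = i t * s := by rw [a2]
  -- collapsed hB with x := y
  have t1 : ∀ s z u w : S,
      s * (i s * i (i (z * u) * i w)) = s * (i s * (w * (z * u))) := by
    intro s z u w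
    have h := b1 s s z u w
    rw [a4, a4] at h
    rw [mul_assoc] at h
    exact h
  -- c * e' = c * e for forms c, e
  have t4 : ∀ s t : S, s * (i s * i (t * i t)) = s * (i s * (t * i t)) := by
    intro s t
    have h := t1 s (i t) (t * i t) t
    rw [a2] at h
    rw [c1] at h
    exact h
  -- c * (p*q)' = c * (q' * p')
  have t5 : ∀ s p q : S, s * (i s * i (p * q)) = s * (i s * (i q * i p)) := by
    intro s p q
    have h := t1 s (i p) (p * i p) (i q)
    rw [a2] at h
    rw [c1, c1] at h
    exact h
  -- E F t = F E t
  have t2 : ∀ p q t : S, p * (i p * (q * (i q * t))) = q * (i q * (p * (i p * t))) := by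
    intro p q t
    have h := b1 p q (i t) t t
    rw [mul_assoc t (i t) t] at h
    rw [a1 t] at h
    have h2 := t1 q (i t) t t
    rw [a1] at h2
    rw [h2] at h
    exact h
  have idem : ∀ t : S, (t * i t) * (t * i t) = t * i t := by
    intro t
    rw [mul_assoc]
    rw [a2]
  have t4t : ∀ s t r : S,
      s * (i s * (i (t * i t) * r)) = s * (i s * (t * (i t * r))) := by
    intro s t r
    have h := congrArg (· * r) (t4 s t)
    simpa only [mul_assoc] using h
  -- c * (E*F)' = c * (F*E)
  have t6g : ∀ s a b : S,
      s * (i s * i ((a * i a) * (b * i b))) = s * (i s * ((b * i b) * (a * i a))) := by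
    intro s a b
    calc s * (i s * i ((a * i a) * (b * i b)))
        = s * (i s * (i (b * i b) * i (a * i a))) := t5 s (a * i a) (b * i b)
      _ = s * (i s * (b * (i b * i (a * i a)))) := t4t s b (i (a * i a))
      _ = s * (i s * (b * (i b * (a * i a)))) := by rw [t4 b a]
      _ = s * (i s * ((b * i b) * (a * i a))) := by simp only [mul_assoc]
  have t6t : ∀ s a b r : S,
      s * (i s * (i ((a * i a) * (b * i b)) * r)) =
      s * (i s * (b * (i b * (a * (i a * r))))) := by
    intro s a b r
    have h := congrArg (· * r) (t6g s a b)
    simpa only [mul_assoc] using h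
  have comm : ∀ a b : S, (a * i a) * (b * i b) = (b * i b) * (a * i a) := by
    intro a b
    -- h1 : P * (iP * iQ) = P
    have h1 : ((a * i a) * (b * i b)) *
        (i ((a * i a) * (b * i b)) * i ((b * i b) * (a * i a))) =
        (a * i a) * (b * i b) :=
      (t6g ((a * i a) * (b * i b)) b a).trans (a1 ((a * i a) * (b * i b)))
    -- h2 : P * (iP * iQ) = Q * iQ
    have h2 : ((a * i a) * (b * i b)) *
        (i ((a * i a) * (b * i b)) * i ((b * i b) * (a * i a))) =
        ((b * i b) * (a * i a)) * i ((b * i b) * (a * i a)) := by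
      calc ((a * i a) * (b * i b)) *
            (i ((a * i a) * (b * i b)) * i ((b * i b) * (a * i a)))
          = a * (i a * (b * (i b *
              (i ((a * i a) * (b * i b)) * i ((b * i b) * (a * i a)))))) := by
            simp only [mul_assoc]
        _ = a * (i a * (b * (i b * (b * (i b *
              (a * (i a * i ((b * i b) * (a * i a))))))))) := by
            rw [t6t b a b (i ((b * i b) * (a * i a)))]
        _ = a * (i a * (b * (i b * (a * (i a * i ((b * i b) * (a * i a))))))) := by
            rw [a4]
        _ = b * (i b * (a * (i a * (a * (i a * i ((b * i b) * (a * i a))))))) :=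
            t2 a b _
        _ = b * (i b * (a * (i a * i ((b * i b) * (a * i a))))) := by rw [a3]
        _ = ((b * i b) * (a * i a)) * i ((b * i b) * (a * i a)) := by
            simp only [mul_assoc]
    -- hP : P = Q * iQ, so P is a "form"
    have hP : (a * i a) * (b * i b) =
        ((b * i b) * (a * i a)) * i ((b * i b) * (a * i a)) := h1.symm.trans h2
    -- hPP : P * P = P
    have hPP : ((a * i a) * (b * i b)) * ((a * i a) * (b * i b)) =
        (a * i a) * (b * i b) := by
      rw [hP]; exact idem ((b * i b) * (a * i a))
    -- hPQ : P * Q = Q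
    have hPQ : ((a * i a) * (b * i b)) * ((b * i b) * (a * i a)) =
        (b * i b) * (a * i a) := by
      calc ((a * i a) * (b * i b)) * ((b * i b) * (a * i a))
          = a * (i a * (b * (i b * (b * (i b * (a * i a)))))) := by
            simp only [mul_assoc]
        _ = a * (i a * (b * (i b * (a * i a)))) := by rw [a4]
        _ = b * (i b * (a * (i a * (a * i a)))) := t2 a b _
        _ = b * (i b * (a * i a)) := by rw [a3]
        _ = (b * i b) * (a * i a) := by simp only [mul_assoc]
    -- e1 : Q * (iQ * iP) = Q * (iQ * P)
    have e1 : ((b * i b) * (a * i a)) * (i ((b * i b) * (a * i a)) *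
          i ((a * i a) * (b * i b))) =
        ((b * i b) * (a * i a)) * (i ((b * i b) * (a * i a)) *
          ((a * i a) * (b * i b))) := by
      rw [show i ((a * i a) * (b * i b)) =
          i (((b * i b) * (a * i a)) * i ((b * i b) * (a * i a))) from congrArg i hP]
      rw [t4 ((b * i b) * (a * i a)) ((b * i b) * (a * i a))]
      rw [← hP]
    -- e2 : Q * (iQ * iP) = Q * (iQ * Q)
    have e2 : ((b * i b) * (a * i a)) * (i ((b * i b) * (a * i a)) *
          i ((a * i a) * (b * i b))) =
        ((b * i b) * (a * i a)) * (i ((b * i b) * (a * i a)) *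
          ((b * i b) * (a * i a))) :=
      t6g ((b * i b) * (a * i a)) a b
    -- hfin : P * P = P * Q
    have hfin : ((a * i a) * (b * i b)) * ((a * i a) * (b * i b)) =
        ((a * i a) * (b * i b)) * ((b * i b) * (a * i a)) := by
      calc ((a * i a) * (b * i b)) * ((a * i a) * (b * i b))
          = (((b * i b) * (a * i a)) * i ((b * i b) * (a * i a))) *
              ((a * i a) * (b * i b)) := congrArg (· * ((a * i a) * (b * i b))) hP
        _ = ((b * i b) * (a * i a)) * (i ((b * i b) * (a * i a)) *
              ((a * i a) * (b * i b))) := mul_assoc _ _ _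
        _ = ((b * i b) * (a * i a)) * (i ((b * i b) * (a * i a)) *
              ((b * i b) * (a * i a))) := e1.symm.trans e2
        _ = (((b * i b) * (a * i a)) * i ((b * i b) * (a * i a))) *
              ((b * i b) * (a * i a)) := (mul_assoc _ _ _).symm
        _ = ((a * i a) * (b * i b)) * ((b * i b) * (a * i a)) :=
              congrArg (· * ((b * i b) * (a * i a))) hP.symm
    calc (a * i a) * (b * i b)
        = ((a * i a) * (b * i b)) * ((a * i a) * (b * i b)) := hPP.symm
      _ = ((a * i a) * (b * i b)) * ((b * i b) * (a * i a)) := hfin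
      _ = (b * i b) * (a * i a) := hPQ
  intro x y
  have h := comm x (i y)
  rw [c1] at h
  exact h
end

section
/- In any semigroup with a unary operation ' satisfying x·x'·x = x, x''= x, and x'·x·y·y' = y·y'·x'·x, the identities x'·x·x' = x' and (x·y)' = y'·x' hold; in particular such algebras are exactly the inverse semigroups with ' being the natural inversion. -/
theorem four_base_gives_inverse_semigroup {S : Type*} [Semigroup S] (i : S → S)
    (h1 : ∀ x : S, x * i x * x = x)
    (h2 : ∀ x : S, i (i x) = x)
    (h3 : ∀ x y : S, i x * x * y * i y = y * i y * (i x * x)) :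
    (∀ x : S, i x * x * i x = i x) ∧
    (∀ x y : S, i (x * y) = i y * i x) ∧
    (∀ a b : S, a * b * a = a → b * a * b = b → b = i a) := by
  have h1' : ∀ x : S, i x * x * i x = i x := by
    intro x
    have := h1 (i x)
    rwa [h2] at this
  have h1r : ∀ z : S, z * (i z * z) = z := fun z => by rw [← mul_assoc]; exact h1 z
  have h1'r : ∀ z : S, i z * (z * i z) = i z := fun z => by rw [← mul_assoc]; exact h1' z
  -- right-assoc versions of commuting special idempotents
  have c12' : ∀ x y : S, i x * (x * (y * i y)) = y * (i y * (i x * x)) := by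
    intro x y
    have := h3 x y
    simpa only [mul_assoc] using this
  have c21' : ∀ x y : S, x * (i x * (i y * y)) = i y * (y * (x * i x)) := by
    intro x y
    have := h3 (i x) (i y)
    rw [h2, h2] at this
    simpa only [mul_assoc] using this
  -- every idempotent is fixed by i
  have key : ∀ e : S, e * e = e → i e = e := by
    intro e he
    have A : e * (i e * (i e * e)) = i e := by
      rw [c21' e e, ← mul_assoc e e, he, ← mul_assoc]
      exact h1' e
    have B : e * i e = i e := by
      calc e * i e = e * (e * (i e * (i e * e))) := by rw [A]
        _ = (e * e) * (i e * (i e * e)) := by rw [mul_assoc]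
        _ = e * (i e * (i e * e)) := by rw [he]
        _ = i e := A
    have C : i e * e = i e := by
      calc i e * e = (e * (i e * (i e * e))) * e := by rw [A]
        _ = e * (i e * (i e * (e * e))) := by simp only [mul_assoc]
        _ = e * (i e * (i e * e)) := by rw [he]
        _ = i e := A
    have := h1 e
    rw [B, C] at this
    exact this
  -- idempotents commute
  have ecomm : ∀ e f : S, e * e = e → f * f = f → e * f = f * e := by
    intro e f he hf
    have h := c12' e f
    rw [key e he, key f hf, hf, he] at h
    rwa [← mul_assoc e e f, he, ← mul_assoc f f e, hf] at h
  -- uniqueness of inverses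
  have uniq : ∀ a b : S, a * b * a = a → b * a * b = b → b = i a := by
    intro a b hab hba
    have hba' : b * (a * b) = b := by rw [← mul_assoc]; exact hba
    have eab : (a * b) * (a * b) = a * b := by rw [← mul_assoc, hab]
    have eba : (b * a) * (b * a) = b * a := by rw [← mul_assoc, hba]
    have eaia : (a * i a) * (a * i a) = a * i a := by rw [← mul_assoc, h1 a]
    have eiaa : (i a * a) * (i a * a) = i a * a := by rw [← mul_assoc, h1' a]
    have hb : b = i a * a * b := by
      calc b = b * a * b := hba.symm
        _ = b * (a * i a * a) * b := by rw [h1 a]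
        _ = ((b * a) * (i a * a)) * b := by simp only [mul_assoc]
        _ = ((i a * a) * (b * a)) * b := by rw [ecomm _ _ eba eiaa]
        _ = i a * a * b := by simp only [mul_assoc]; rw [hba']
    have hia : i a = i a * a * b := by
      calc i a = i a * a * i a := (h1' a).symm
        _ = i a * (a * b * a) * i a := by rw [hab]
        _ = i a * ((a * b) * (a * i a)) := by simp only [mul_assoc]
        _ = i a * ((a * i a) * (a * b)) := by rw [ecomm _ _ eab eaia]
        _ = (i a * a * i a) * (a * b) := by simp only [mul_assoc]
        _ = i a * a * b := by rw [h1' a, mul_assoc]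
    exact hb.trans hia.symm
  refine ⟨h1', ?_, uniq⟩
  intro x y
  have P : (x * y) * (i y * i x) * (x * y) = x * y := by
    calc (x * y) * (i y * i x) * (x * y)
        = x * ((y * (i y * (i x * x))) * y) := by simp only [mul_assoc]
      _ = x * ((i x * (x * (y * i y))) * y) := by rw [← c12' x y]
      _ = (x * (i x * x)) * (y * (i y * y)) := by simp only [mul_assoc]
      _ = x * y := by rw [h1r, h1r]
  have Q : (i y * i x) * (x * y) * (i y * i x) = i y * i x := by
    calc (i y * i x) * (x * y) * (i y * i x)
        = i y * ((i x * (x * (y * i y))) * i x) := by simp only [mul_assoc]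
      _ = i y * ((y * (i y * (i x * x))) * i x) := by rw [c12' x y]
      _ = (i y * (y * i y)) * ((i x * x) * i x) := by simp only [mul_assoc]
      _ = i y * i x := by rw [h1'r y, h1' x]
  exact (uniq (x * y) (i y * i x) P Q).symm
end

section
/- In any semigroup with a unary operation ' satisfying the identities x·(y·z'') = (x·y)·z, x = (x·x')·x, and (x·x')·(y'·y) = (y'·y)·(x·x'), the identity x'' = x holds, and consequently x·x'·x = x and x'·x·x' = x'. -/
theorem AK_three_base {S : Type*} (m : S → S → S) (i : S → S)
    (h1 : ∀ x y z, m x (m y (i (i z))) = m (m x y) z)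
    (h2 : ∀ x, m (m x (i x)) x = x)
    (h3 : ∀ x y, m (m x (i x)) (m (i y) y) = m (m (i y) y) (m x (i x))) :
    (∀ x, i (i x) = x) ∧
    (∀ x, m (m x (i x)) x = x) ∧
    (∀ x, m (m (i x) x) (i x) = i x) := by
  have eq0 : ∀ v0 v1 v2 : S, (m v0 (m v1 (i (i v2)))) = (m (m v0 v1) v2) := fun v0 v1 v2 => (h1 v0 v1 v2)
  have eq1 : ∀ v0 : S, (m (m v0 (i v0)) v0) = v0 := fun v0 => (h2 v0)
  have eq2 : ∀ v0 v1 : S, (m (m v0 (i v0)) (m (i v1) v1)) = (m (m (i v1) v1) (m v0 (i v0))) := fun v0 v1 => (h3 v0 v1)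
  have eq4 : ∀ v0 v1 : S, (m (m (m v0 (i (i v1))) (i v1)) v1) = (m v0 (i (i v1))) := fun v0 v1 => (Eq.trans (Eq.symm (congrArg (fun HOLE => (m HOLE v1)) (eq0 v0 (i (i v1)) (i v1)))) (Eq.trans (Eq.symm (eq0 v0 (m (i (i v1)) (i (i (i v1)))) v1)) (congrArg (fun HOLE => (m v0 HOLE)) (eq1 (i (i v1))))))
  have eq5 : ∀ v0 : S, (m (i v0) (i (i v0))) = (m (i v0) v0) := fun v0 => (Eq.trans (Eq.symm (eq4 (i v0) v0)) (congrArg (fun HOLE => (m HOLE v0)) (eq1 (i v0))))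
  have eq6 : ∀ v0 : S, (m (m (i (i v0)) (i v0)) v0) = (i (i v0)) := fun v0 => (Eq.symm (Eq.trans (Eq.symm (eq1 (i (i v0)))) (Eq.trans (Eq.symm (eq4 (m (i (i v0)) (i (i (i v0)))) v0)) (congrArg (fun HOLE => (m (m HOLE (i v0)) v0)) (eq1 (i (i v0)))))))
  have eq10 : ∀ v0 : S, (m (m (i v0) v0) (i v0)) = (i v0) := fun v0 => (Eq.symm (Eq.trans (Eq.symm (eq1 (i v0))) (congrArg (fun HOLE => (m HOLE (i v0))) (eq5 v0))))
  have eq11 : ∀ v0 v1 : S, (m (m v0 (i v1)) v1) = (m v0 (m (i v1) v1)) := fun v0 v1 => (Eq.trans (Eq.symm (eq0 v0 (i v1) v1)) (congrArg (fun HOLE => (m v0 HOLE)) (eq5 v1)))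
  have eq12 : ∀ v0 : S, (m (m (i v0) v0) (m (i v0) v0)) = (m (i v0) v0) := fun v0 => (Eq.symm (Eq.trans (Eq.trans (Eq.symm (eq5 v0)) (Eq.trans (Eq.symm (eq4 (i v0) v0)) (congrArg (fun HOLE => (m (m HOLE (i v0)) v0)) (eq5 v0)))) (eq11 (m (i v0) v0) v0)))
  have eq14 : ∀ v0 v1 : S, (m (m v0 (m (i (i v1)) (i v1))) v1) = (m v0 (i (i v1))) := fun v0 v1 => (Eq.trans (Eq.symm (eq0 v0 (m (i (i v1)) (i v1)) v1)) (congrArg (fun HOLE => (m v0 HOLE)) (eq10 (i v1))))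
  have eq16 : ∀ v0 : S, (m (i (i (i v0))) (i (i v0))) = (m (i (i (i v0))) v0) := fun v0 => (Eq.trans (Eq.symm (eq4 (i (i (i v0))) v0)) (congrArg (fun HOLE => (m HOLE v0)) (eq6 (i v0))))
  have eq20 : ∀ v0 v1 v2 : S, (m v0 (m (m v1 (i (i (i v2)))) v2)) = (m (m v0 v1) (m (i v2) v2)) := fun v0 v1 v2 => (Eq.symm (Eq.trans (Eq.trans (Eq.symm (Eq.trans (congrArg (fun HOLE => (m HOLE v2)) (eq0 v0 v1 (i v2))) (eq11 (m v0 v1) v2))) (Eq.trans (Eq.symm (eq0 v0 (m v1 (i (i (i v2)))) v2)) (congrArg (fun HOLE => (m v0 HOLE)) (eq11 v1 (i (i v2)))))) (congrArg (fun HOLE => (m v0 HOLE)) (eq0 v1 (i (i (i v2))) v2))))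
  have eq21 : ∀ v0 v1 : S, (m (m v0 (i (i v1))) (m (i v1) v1)) = (m v0 (i (i v1))) := fun v0 v1 => (Eq.trans (Eq.symm (eq11 (m v0 (i (i v1))) v1)) (eq4 v0 v1))
  have eq26 : ∀ v0 v1 : S, (m (m v0 (i (i (i v1)))) v1) = (m v0 (m (i (i (i v1))) v1)) := fun v0 v1 => (Eq.trans (Eq.symm (eq0 v0 (i (i (i v1))) v1)) (congrArg (fun HOLE => (m v0 HOLE)) (eq16 v1)))
  have eq29 : ∀ v0 : S, (m (m (i (i (i v0))) v0) (i v0)) = (i (i (i v0))) := fun v0 => (Eq.symm (Eq.trans (Eq.symm (eq6 (i v0))) (congrArg (fun HOLE => (m HOLE (i v0))) (eq16 v0))))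
  have eq38 : ∀ v0 v1 : S, (m (m v0 (m (i (i (i v1))) v1)) (i v1)) = (m v0 (i (i (i v1)))) := fun v0 v1 => (Eq.symm (Eq.trans (Eq.trans (Eq.symm (eq14 v0 (i v1))) (congrArg (fun HOLE => (m HOLE (i v1))) (eq0 v0 (i (i (i v1))) v1))) (congrArg (fun HOLE => (m HOLE (i v1))) (eq26 v0 v1))))
  have eq62 : ∀ v0 v1 : S, (m (m (i v1) v1) (m (i v0) v0)) = (m (m (i v0) v0) (m (i v1) v1)) := fun v0 v1 => (Eq.trans (Eq.trans (Eq.symm (congrArg (fun HOLE => (m HOLE (m (i v0) v0))) (eq5 v1))) (Eq.trans (Eq.symm (Eq.symm (eq2 (i v1) v0))) (eq0 (m (i v0) v0) (i v1) v1))) (eq11 (m (i v0) v0) v1))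
  have eq70 : ∀ v0 v1 v2 : S, (m v0 (m v1 (m (i (i (i v2))) v2))) = (m (m v0 v1) (m (i v2) v2)) := fun v0 v1 v2 => (Eq.symm (Eq.trans (Eq.symm (eq20 v0 v1 v2)) (congrArg (fun HOLE => (m v0 HOLE)) (eq26 v1 v2))))
  have eq86 : ∀ v0 : S, (m (m (i v0) v0) (m (i (i (i v0))) v0)) = (m (i (i (i v0))) v0) := fun v0 => (Eq.trans (Eq.trans (Eq.symm (Eq.trans (eq0 (m (i v0) v0) (i (i (i v0))) v0) (eq26 (m (i v0) v0) v0))) (Eq.trans (Eq.symm (eq62 v0 (i (i v0)))) (eq21 (i (i (i v0))) v0))) (eq16 v0))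
  have eq88 : ∀ v0 : S, (m (m (i v0) v0) (i (i (i v0)))) = (i (i (i v0))) := fun v0 => (Eq.trans (Eq.trans (Eq.symm (eq38 (m (i v0) v0) v0)) (congrArg (fun HOLE => (m HOLE (i v0))) (eq86 v0))) (eq29 v0))
  have eq90 : ∀ v0 v1 : S, (m (m v0 (m (i v1) v1)) (i v1)) = (m v0 (i (i (i v1)))) := fun v0 v1 => (Eq.trans (Eq.symm (eq0 v0 (m (i v1) v1) (i v1))) (congrArg (fun HOLE => (m v0 HOLE)) (eq88 v1)))
  have eq101 : ∀ v0 : S, (i (i (i v0))) = (i v0) := fun v0 => (Eq.trans (Eq.trans (Eq.symm (eq88 v0)) (Eq.trans (Eq.symm (eq90 (m (i v0) v0) v0)) (congrArg (fun HOLE => (m HOLE (i v0))) (eq12 v0)))) (eq10 v0))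
  have eq104 : ∀ v0 v1 v2 : S, (m (m v0 v1) (i v2)) = (m v0 (m v1 (i v2))) := fun v0 v1 v2 => (Eq.trans (Eq.symm (eq0 v0 v1 (i v2))) (congrArg (fun HOLE => (m v0 (m v1 HOLE))) (eq101 v2)))
  have eq107 : ∀ v0 v1 v2 : S, (m (m v0 v1) (m (i v2) v2)) = (m v0 (m v1 (m (i v2) v2))) := fun v0 v1 v2 => (Eq.trans (Eq.trans (Eq.symm (eq20 v0 v1 v2)) (congrArg (fun HOLE => (m v0 (m (m v1 HOLE) v2))) (eq101 v2))) (congrArg (fun HOLE => (m v0 HOLE)) (eq11 v1 v2)))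
  have eq109 : ∀ v0 v1 : S, (m (m v0 (i v0)) (m v0 (i v1))) = (m v0 (i v1)) := fun v0 v1 => (Eq.trans (Eq.symm (eq104 (m v0 (i v0)) v0 v1)) (congrArg (fun HOLE => (m HOLE (i v1))) (eq1 v0)))
  have eq111 : ∀ v0 v1 v2 v3 : S, (m v0 (m v1 (m (i (i v3)) (i v2)))) = (m (m v0 v1) (m v3 (i v2))) := fun v0 v1 v2 v3 => (Eq.trans (Eq.trans (Eq.symm (congrArg (fun HOLE => (m v0 HOLE)) (eq104 v1 (i (i v3)) v2))) (Eq.trans (Eq.symm (eq104 v0 (m v1 (i (i v3))) v2)) (congrArg (fun HOLE => (m HOLE (i v2))) (eq0 v0 v1 v3)))) (eq104 (m v0 v1) v3 v2))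
  have eq132 : ∀ v0 v1 : S, (m v0 (i (i v1))) = (m v0 v1) := fun v0 v1 => (Eq.trans (Eq.trans (Eq.symm (eq109 v0 (i v1))) (eq0 (m v0 (i v0)) v0 v1)) (congrArg (fun HOLE => (m HOLE v1)) (eq1 v0)))
  have eq137 : ∀ v0 v1 v2 : S, (m (m v0 v1) v2) = (m v0 (m v1 v2)) := fun v0 v1 v2 => (Eq.trans (Eq.symm (eq0 v0 v1 v2)) (congrArg (fun HOLE => (m v0 HOLE)) (eq132 v1 v2)))
  have eq138 : ∀ v0 v1 : S, (m v0 (m (i (i v1)) (i v1))) = (m v0 (m v1 (i v1))) := fun v0 v1 => (Eq.trans (Eq.trans (Eq.symm (eq11 v0 (i v1))) (congrArg (fun HOLE => (m HOLE (i v1))) (eq132 v0 v1))) (eq104 v0 v1 v1))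
  have eq140 : ∀ v0 v1 : S, (m (i v1) (m (i (i v1)) (m v0 (i v0)))) = (m v0 (m (i v0) (m (i v1) v1))) := fun v0 v1 => (Eq.trans (Eq.trans (Eq.symm (Eq.trans (eq137 (i (i (i v1))) (i (i v1)) (m v0 (i v0))) (congrArg (fun HOLE => (m HOLE (m (i (i v1)) (m v0 (i v0))))) (eq101 v1)))) (Eq.trans (Eq.symm (eq2 v0 (i (i v1)))) (congrArg (fun HOLE => (m (m v0 (i v0)) HOLE)) (eq132 (i (i (i v1))) v1)))) (Eq.trans (Eq.trans (eq137 v0 (i v0) (m (i (i (i v1))) v1)) (eq70 v0 (i v0) v1)) (eq107 v0 (i v0) v1)))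
  have eq181 : ∀ v0 : S, (m (i (i v0)) (i v0)) = (m v0 (i v0)) := fun v0 => (Eq.symm (Eq.trans (Eq.symm (Eq.trans (Eq.trans (Eq.trans (eq137 (i (i v0)) (i (i (i v0))) (m v0 (i v0))) (eq140 v0 (i v0))) (eq111 v0 (i v0) v0 v0)) (eq109 v0 v0))) (Eq.trans (Eq.symm (eq138 (m (i (i v0)) (i (i (i v0)))) v0)) (eq109 (i (i v0)) v0))))
  have eq182 : ∀ v0 : S, (i (i v0)) = v0 := fun v0 => (Eq.trans (Eq.trans (Eq.symm (eq10 (i v0))) (congrArg (fun HOLE => (m HOLE (i (i v0)))) (eq181 v0))) (Eq.trans (Eq.trans (eq104 v0 (i v0) (i v0)) (eq0 v0 (i v0) v0)) (eq1 v0)))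

  exact ⟨eq182, h2, eq10⟩
end

section
/- In Schein's axiom system for inverse semigroups, the identity (x·y)' = y'·x' is a consequence of the other four identities: associativity, x'' = x, x·x'·x = x, and (x·x')·(y'·y) = (y'·y)·(x·x'). -/
theorem schein_antiautomorphism {S : Type*} [Semigroup S] (i : S → S)
    (h1 : ∀ x : S, i (i x) = x)
    (h2 : ∀ x : S, x * i x * x = x)
    (h3 : ∀ x y : S, x * i x * (i y * y) = i y * y * (x * i x)) :
    ∀ x y : S, i (x * y) = i y * i x := by
  -- i x * x * i x = i x
  have h2' : ∀ x : S, i x * x * i x = i x := fun x => by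
    have := h2 (i x); rwa [h1] at this
  -- all elements of form a * i a commute
  have ecomm : ∀ a b : S, (a * i a) * (b * i b) = (b * i b) * (a * i a) := fun a b => by
    have := h3 a (i b); rwa [h1] at this
  -- i of an idempotent is itself
  have idem_i : ∀ e : S, e * e = e → i e = e := by
    intro e he
    have hg : (i e * e) * (e * i e) = i e := by
      calc (i e * e) * (e * i e) = i e * (e * e) * i e := by
            simp only [mul_assoc]
        _ = i e * e * i e := by rw [he]
        _ = i e := h2' e
    have hcomm : (e * i e) * (i e * e) = (i e * e) * (e * i e) := by
      have := ecomm e (i e); rwa [h1] at this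
    have e_eq : e * ((e * i e) * (i e * e)) * e = (e * i e) * (i e * e) := by
      calc e * ((e * i e) * (i e * e)) * e
          = ((e * e) * i e) * (i e * (e * e)) := by simp only [mul_assoc]
        _ = (e * i e) * (i e * e) := by rw [he]
    have e_eq2 : e * ((i e * e) * (e * i e)) * e = e := by
      calc e * ((i e * e) * (e * i e)) * e
          = (e * i e * e) * (e * i e * e) := by simp only [mul_assoc]
        _ = e * e := by rw [h2]
        _ = e := he
    calc i e = (i e * e) * (e * i e) := hg.symm
      _ = (e * i e) * (i e * e) := hcomm.symm
      _ = e * ((e * i e) * (i e * e)) * e := e_eq.symm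
      _ = e * ((i e * e) * (e * i e)) * e := by rw [hcomm.symm]
      _ = e := e_eq2
  -- idempotents commute
  have idemcomm : ∀ e f : S, e * e = e → f * f = f → e * f = f * e := by
    intro e f he hf
    have he' : e * i e = e := by rw [idem_i e he, he]
    have hf' : f * i f = f := by rw [idem_i f hf, hf]
    calc e * f = (e * i e) * (f * i f) := by rw [he', hf']
      _ = (f * i f) * (e * i e) := ecomm e f
      _ = f * e := by rw [he', hf']
  intro x y
  set a := x * y with ha
  set b := i y * i x with hb
  set c := i (x * y) with hc
  -- commuting helpers
  have cyx : (y * i y) * (i x * x) = (i x * x) * (y * i y) := by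
    have := ecomm y (i x); rwa [h1] at this
  have aba : a * b * a = a := by
    calc a * b * a = x * ((y * i y) * (i x * x)) * y := by
          simp only [ha, hb, mul_assoc]
      _ = x * ((i x * x) * (y * i y)) * y := by rw [cyx]
      _ = (x * i x * x) * (y * i y * y) := by simp only [mul_assoc]
      _ = x * y := by rw [h2, h2]
  have bab : b * a * b = b := by
    calc b * a * b = i y * ((i x * x) * (y * i y)) * i x := by
          simp only [ha, hb, mul_assoc]
      _ = i y * ((y * i y) * (i x * x)) * i x := by rw [cyx]
      _ = (i y * y * i y) * (i x * x * i x) := by simp only [mul_assoc]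
      _ = i y * i x := by rw [h2', h2']
  have aca : a * c * a = a := h2 (x * y)
  have cac : c * a * c = c := h2' (x * y)
  -- idempotents
  have iab : (a * b) * (a * b) = a * b := by
    calc (a * b) * (a * b) = (a * b * a) * b := by simp only [mul_assoc]
      _ = a * b := by rw [aba]
  have iba : (b * a) * (b * a) = b * a := by
    calc (b * a) * (b * a) = (b * a * b) * a := by simp only [mul_assoc]
      _ = b * a := by rw [bab]
  have iac : (a * c) * (a * c) = a * c := by
    calc (a * c) * (a * c) = (a * c * a) * c := by simp only [mul_assoc]
      _ = a * c := by rw [aca]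
  have ica : (c * a) * (c * a) = c * a := by
    calc (c * a) * (c * a) = (c * a * c) * a := by simp only [mul_assoc]
      _ = c * a := by rw [cac]
  have hbcab : b = c * a * b := by
    calc b = b * a * b := bab.symm
      _ = b * (a * c * a) * b := by rw [aca]
      _ = ((b * a) * (c * a)) * b := by simp only [mul_assoc]
      _ = ((c * a) * (b * a)) * b := by rw [idemcomm _ _ iba ica]
      _ = c * a * (b * a * b) := by simp only [mul_assoc]
      _ = c * a * b := by rw [bab]
  have hcbac : c = b * a * c := by
    calc c = c * a * c := cac.symm
      _ = c * (a * b * a) * c := by rw [aba]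
      _ = ((c * a) * (b * a)) * c := by simp only [mul_assoc]
      _ = ((b * a) * (c * a)) * c := by rw [idemcomm _ _ ica iba]
      _ = b * a * (c * a * c) := by simp only [mul_assoc]
      _ = b * a * c := by rw [cac]
  have : b = c := by
    calc b = c * a * b := hbcab
      _ = (b * a * c) * a * b := by rw [← hcbac]
      _ = b * ((a * c) * (a * b)) := by simp only [mul_assoc]
      _ = b * ((a * b) * (a * c)) := by rw [idemcomm _ _ iac iab]
      _ = (b * a * b) * (a * c) := by simp only [mul_assoc]
      _ = b * (a * c) := by rw [bab]
      _ = b * a * c := (mul_assoc b a c).symm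
      _ = c := hcbac.symm
  exact this.symm
end

section
/- In the magma with x·(x'·x) = x and the long identity, the derived identity ((x·y)'·z')' = (z·x)·y holds. -/
theorem two_base_derived_10 {S : Type*} (m : S → S → S) (i : S → S)
    (hA : ∀ x, m x (m (i x) x) = x)
    (hB : ∀ x y z u w,
      m x (m (i x) (m y (m (i y) (i (m (i (m z u)) (i w)))))) =
      m y (m (i y) (m x (m (i x) (m (m w z) u))))) :
    ∀ x y z, i (m (i (m x y)) (i z)) = m (m z x) y := by
  intro x y z
  set L : S → S → S := fun a t => m a (m (i a) t) with hL
  set P : S := i (m (i (m x y)) (i z)) with hP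
  set Q : S := m (m z x) y with hQ
  -- Axiom A in L-form
  have hA' : ∀ a, L a a = a := hA
  -- Axiom B in L-form, specialized to our z,u,w
  have hB' : ∀ a b, L a (L b P) = L b (L a Q) := fun a b => hB a b x y z
  have hI : L Q (L Q P) = Q := by
    have := hB' Q Q
    rw [hA' Q, hA' Q] at this
    exact this
  have hII : P = L P (L P Q) := by
    have := hB' P P
    rw [hA' P, hA' P] at this
    exact this
  have hIII : L Q P = L P Q := by
    have := hB' Q P
    rw [hA' P, hA' Q] at this
    exact this
  have hIV : L P (L Q P) = L Q (L P Q) := hB' P Q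
  calc P = L P (L P Q) := hII
    _ = L P (L Q P) := by rw [hIII]
    _ = L Q (L P Q) := hIV
    _ = L Q (L Q P) := by rw [hIII]
    _ = Q := hI
end

section
/- In the magma with x·(x'·x) = x and the long identity, the derived identity (x·y)·(y'·y) = (y'·x')' holds. -/
theorem two_base_derived_11 {S : Type*} (m : S → S → S) (i : S → S)
    (hA : ∀ x, m x (m (i x) x) = x)
    (hB : ∀ x y z u w,
      m x (m (i x) (m y (m (i y) (i (m (i (m z u)) (i w)))))) =
      m y (m (i y) (m x (m (i x) (m (m w z) u))))) :
    ∀ x y, m (m x y) (m (i y) y) = i (m (i y) (i x)) := by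
  -- Write T a b := m a (m (i a) b).  Axiom B reads T x (T y P) = T y (T x Q)
  -- with P := ((zu)'w')' and Q := (wz)u.  We first prove the key identity P = Q.
  have key : ∀ z u w, i (m (i (m z u)) (i w)) = m (m w z) u := by
    intro z u w
    set P := i (m (i (m z u)) (i w)) with hPdef
    set Q := m (m w z) u with hQdef
    have hB' : ∀ x y, m x (m (i x) (m y (m (i y) P))) = m y (m (i y) (m x (m (i x) Q))) :=
      fun x y => hB x y z u w
    -- [1] : T x P = T P (T x Q)
    have h1 : ∀ x, m x (m (i x) P) = m P (m (i P) (m x (m (i x) Q))) := by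
      intro x
      have h := hB' x P
      rwa [hA P] at h
    -- [3] : T Q P = T P Q
    have h3 : m Q (m (i Q) P) = m P (m (i P) Q) := by
      have h := h1 Q
      rwa [hA Q] at h
    -- [2] with y := Q, then rewrite with [3] : T Q (T P Q) = Q
    have h5 : m Q (m (i Q) (m P (m (i P) Q))) = Q := by
      have h := hB' Q Q
      rw [hA Q, hA Q] at h
      rw [← h3]
      exact h
    -- [4] : T P (T x P) = T x (T P Q)
    have h4 : ∀ x, m P (m (i P) (m x (m (i x) P))) = m x (m (i x) (m P (m (i P) Q))) :=
      fun x => hB' P x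
    -- [5'] : T x (T P Q) = T Q (T x Q)
    have h5' : ∀ x, m x (m (i x) (m P (m (i P) Q))) = m Q (m (i Q) (m x (m (i x) Q))) := by
      intro x
      have h := hB' x Q
      rwa [h3] at h
    -- [6] at x := P : P = T Q (T P Q)
    have h6 : m P (m (i P) (m P (m (i P) P))) = m Q (m (i Q) (m P (m (i P) Q))) :=
      (h4 P).trans (h5' P)
    rw [hA P, hA P] at h6
    -- conclude P = Q
    exact h6.trans h5
  intro x y
  have h := key y (m (i y) y) x
  rw [hA y] at h
  exact h.symm
end

section
/- In the magma with x·(x'·x) = x and the long identity, the derived identity x·(x'·(y·(y'·(z·u)))) = y·(y'·(x·(x'·(z·u)))) holds. -/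
theorem two_base_derived_12 {S : Type*} (m : S → S → S) (i : S → S)
    (hA : ∀ x, m x (m (i x) x) = x)
    (hB : ∀ x y z u w,
      m x (m (i x) (m y (m (i y) (i (m (i (m z u)) (i w)))))) =
      m y (m (i y) (m x (m (i x) (m (m w z) u))))) :
    ∀ x y z u,
      m x (m (i x) (m y (m (i y) (m z u)))) =
      m y (m (i y) (m x (m (i x) (m z u)))) := by
  -- Lemma L2 : [x]N = [N][x]P  (hB with y := N, simplified by hA)
  have L2 : ∀ x z u w,
      m x (m (i x) (i (m (i (m z u)) (i w)))) =
      m (i (m (i (m z u)) (i w))) (m (i (i (m (i (m z u)) (i w))))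
        (m x (m (i x) (m (m w z) u)))) := by
    intro x z u w
    have h := hB x (i (m (i (m z u)) (i w))) z u w
    rwa [hA (i (m (i (m z u)) (i w)))] at h
  -- Lemma L1 : [P][y]N = [y]P  (hB with x := P, simplified by hA)
  have L1 : ∀ y z u w,
      m (m (m w z) u) (m (i (m (m w z) u))
        (m y (m (i y) (i (m (i (m z u)) (i w)))))) =
      m y (m (i y) (m (m w z) u)) := by
    intro y z u w
    have h := hB (m (m w z) u) y z u w
    rwa [hA (m (m w z) u)] at h
  -- Lemma L3 : [P]N = [N]P
  have L3 : ∀ z u w,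
      m (m (m w z) u) (m (i (m (m w z) u)) (i (m (i (m z u)) (i w)))) =
      m (i (m (i (m z u)) (i w))) (m (i (i (m (i (m z u)) (i w)))) (m (m w z) u)) := by
    intro z u w
    have h := L2 (m (m w z) u) z u w
    rwa [hA (m (m w z) u)] at h
  -- Lemma L4 : N = [N][N]P
  have L4 : ∀ z u w,
      i (m (i (m z u)) (i w)) =
      m (i (m (i (m z u)) (i w))) (m (i (i (m (i (m z u)) (i w))))
        (m (i (m (i (m z u)) (i w))) (m (i (i (m (i (m z u)) (i w))))
          (m (m w z) u)))) := by
    intro z u w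
    have h := L2 (i (m (i (m z u)) (i w))) z u w
    rwa [hA (i (m (i (m z u)) (i w)))] at h
  -- Lemma L5 : [P][P]N = P
  have L5 : ∀ z u w,
      m (m (m w z) u) (m (i (m (m w z) u))
        (m (m (m w z) u) (m (i (m (m w z) u)) (i (m (i (m z u)) (i w)))))) =
      m (m w z) u := by
    intro z u w
    have h := L1 (m (m w z) u) z u w
    rwa [hA (m (m w z) u)] at h
  -- Key lemma : N = P, i.e. i ((z·u)' · w')' = (w·z)·u
  have key : ∀ z u w, i (m (i (m z u)) (i w)) = m (m w z) u := by
    intro z u w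
    calc i (m (i (m z u)) (i w))
        = m (i (m (i (m z u)) (i w))) (m (i (i (m (i (m z u)) (i w))))
            (m (i (m (i (m z u)) (i w))) (m (i (i (m (i (m z u)) (i w))))
              (m (m w z) u)))) := L4 z u w
      _ = m (i (m (i (m z u)) (i w))) (m (i (i (m (i (m z u)) (i w))))
            (m (m (m w z) u) (m (i (m (m w z) u)) (i (m (i (m z u)) (i w)))))) := by
            rw [← L3 z u w]
      _ = m (m (m w z) u) (m (i (m (m w z) u))
            (m (i (m (i (m z u)) (i w))) (m (i (i (m (i (m z u)) (i w))))
              (m (m w z) u)))) := hB (i (m (i (m z u)) (i w))) (m (m w z) u) z u w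
      _ = m (m (m w z) u) (m (i (m (m w z) u))
            (m (m (m w z) u) (m (i (m (m w z) u)) (i (m (i (m z u)) (i w)))))) := by
            rw [← L3 z u w]
      _ = m (m w z) u := L5 z u w
  intro x y z u
  have h := hB x y (m (i z) z) u z
  rw [key (m (i z) z) u z, hA z] at h
  exact h
end

section
/- In the magma with x·(x'·x) = x, the long identity, and assuming additionally x'' = x, the derived identity (x·y)' = y'·x' holds. -/
theorem two_base_derived_13 {S : Type*} (m : S → S → S) (i : S → S)
    (hA : ∀ x, m x (m (i x) x) = x)
    (hB : ∀ x y z u w,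
      m x (m (i x) (m y (m (i y) (i (m (i (m z u)) (i w)))))) =
      m y (m (i y) (m x (m (i x) (m (m w z) u)))))
    (hC : ∀ x, i (i x) = x) :
    ∀ x y, i (m x y) = m (i y) (i x) := by
  have e3 : ∀ x : S, (i (i x)) = x := by
    intro x
    conv_lhs => rw [hC x]
  have e4 : ∀ x : S, (m x (m (i x) x)) = x := by
    intro x
    conv_lhs => rw [hA x]
  have e5 : ∀ x_a : S, (m (i x_a) (m x_a (i x_a))) = (i x_a) := by
    intro x_a
    conv_lhs => enter [2,1]; rw [← e3 x_a]
    conv_lhs => rw [e4 (i x_a)]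
  have e6 : ∀ u w x y z : S, (m x (m (i x) (m y (m (i y) (i (m (i (m z u)) (i w))))))) = (m y (m (i y) (m x (m (i x) (m (m w z) u))))) := by
    intro u w x y z
    conv_lhs => rw [hB x y z u w]
  have e7 : ∀ u x x_a y z : S, (m x (m (i x) (m y (m (i y) (i (m (i (m z u)) x_a)))))) = (m y (m (i y) (m x (m (i x) (m (m (i x_a) z) u))))) := by
    intro u x x_a y z
    conv_lhs => enter [2,2,2,2,1,2]; rw [← e3 x_a]
    conv_lhs => rw [e6 u (i x_a) x y z]
  have e9 : ∀ u w x_a y z : S, (m (i x_a) (m x_a (m y (m (i y) (i (m (i (m z u)) (i w))))))) = (m y (m (i y) (m (i x_a) (m x_a (m (m w z) u))))) := by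
    intro u w x_a y z
    conv_lhs => enter [2,1]; rw [← e3 x_a]
    conv_lhs => rw [e6 u w (i x_a) y z]
    conv_lhs => enter [2,2,2,1]; rw [e3 x_a]
  have e18 : ∀ u w x z : S, (m (i (m (i (m z u)) (i w))) (m (m (i (m z u)) (i w)) (m x (m (i x) (m (m w z) u))))) = (m x (m (i x) (i (m (i (m z u)) (i w))))) := by
    intro u w x z
    conv_lhs => enter [2,1]; rw [← e3 (m (i (m z u)) (i w))]
    conv_lhs => rw [← e6 u w x (i (m (i (m z u)) (i w))) z]
    conv_lhs => enter [2,2]; rw [e4 (i (m (i (m z u)) (i w)))]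
  have e43 : ∀ u w x_a z : S, (m (i (m (i (m z u)) (i w))) (m (m (i (m z u)) (i w)) (m (i x_a) (m x_a (m (m w z) u))))) = (m (i x_a) (m x_a (i (m (i (m z u)) (i w))))) := by
    intro u w x_a z
    conv_lhs => enter [2,1]; rw [← e3 (m (i (m z u)) (i w))]
    conv_lhs => rw [← e9 u w x_a (i (m (i (m z u)) (i w))) z]
    conv_lhs => enter [2,2]; rw [e4 (i (m (i (m z u)) (i w)))]
  have e51 : ∀ u w z : S, (m (i (m (i (m z u)) (i w))) (m (m (i (m z u)) (i w)) (m (m w z) u))) = (m (m (m w z) u) (m (i (m (m w z) u)) (i (m (i (m z u)) (i w))))) := by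
    intro u w z
    conv_lhs => enter [2,2]; rw [← e4 (m (m w z) u)]
    conv_lhs => rw [e18 u w (m (m w z) u) z]
  have e680 : ∀ u_a w_a z_a : S, (i (m (i (m z_a u_a)) (i w_a))) = (m (m w_a z_a) u_a) := by
    intro u_a w_a z_a
    conv_lhs => rw [← e5 (m (i (m z_a u_a)) (i w_a))]
    conv_lhs => rw [← e43 u_a w_a (m (i (m z_a u_a)) (i w_a)) z_a]
    conv_lhs => enter [2,2]; rw [e51 u_a w_a z_a]
    conv_lhs => rw [e9 u_a w_a (m (i (m z_a u_a)) (i w_a)) (m (m w_a z_a) u_a) z_a]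
    conv_lhs => enter [2,2]; rw [e51 u_a w_a z_a]
    conv_lhs => rw [e7 u_a (m (m w_a z_a) u_a) (i w_a) (m (m w_a z_a) u_a) z_a]
    conv_lhs => enter [2,2,2,2,1,1]; rw [e3 w_a]
    conv_lhs => enter [2,2]; rw [e4 (m (m w_a z_a) u_a)]
    conv_lhs => rw [e4 (m (m w_a z_a) u_a)]
  have e681 : ∀ u_a_a w_a_a z_a_a : S, (m (i (m z_a_a u_a_a)) (i w_a_a)) = (i (m (m w_a_a z_a_a) u_a_a)) := by
    intro u_a_a w_a_a z_a_a
    conv_lhs => rw [← e3 (m (i (m z_a_a u_a_a)) (i w_a_a))]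
    conv_lhs => enter [1]; rw [e680 u_a_a w_a_a z_a_a]
  have e682 : ∀ u_a x_a z_a : S, (i (m (i (m z_a u_a)) x_a)) = (m (m (i x_a) z_a) u_a) := by
    intro u_a x_a z_a
    conv_lhs => enter [1,2]; rw [← e3 x_a]
    conv_lhs => rw [e680 u_a (i x_a) z_a]
  have e683 : ∀ u_a_a x_a z_a_a : S, (i (m (m (i x_a) z_a_a) u_a_a)) = (m (i (m z_a_a u_a_a)) x_a) := by
    intro u_a_a x_a z_a_a
    conv_lhs => rw [← e681 u_a_a (i x_a) z_a_a]
    conv_lhs => enter [2]; rw [e3 x_a]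
  have e685 : ∀ w_a x_a : S, (m (m w_a x_a) (m (i x_a) x_a)) = (i (m (i x_a) (i w_a))) := by
    intro w_a x_a
    conv_lhs => rw [← e680 (m (i x_a) x_a) w_a x_a]
    conv_lhs => enter [1,1,1]; rw [e4 x_a]
  have e687 : ∀ u_a_a x_a_a : S, (m (i (m (m x_a_a (i x_a_a)) u_a_a)) x_a_a) = (i (m (i x_a_a) u_a_a)) := by
    intro u_a_a x_a_a
    conv_lhs => rw [← e683 u_a_a x_a_a (m x_a_a (i x_a_a))]
    conv_lhs => enter [1,1]; rw [e5 x_a_a]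
  have e688 : ∀ w_a x_a_a : S, (m (m w_a (i x_a_a)) (m x_a_a (i x_a_a))) = (i (m x_a_a (i w_a))) := by
    intro w_a x_a_a
    conv_lhs => rw [← e680 (m x_a_a (i x_a_a)) w_a (i x_a_a)]
    conv_lhs => enter [1,1,1]; rw [e5 x_a_a]
    conv_lhs => enter [1,1]; rw [e3 x_a_a]
  have e690 : ∀ x_a_a_a : S, (m (m x_a_a_a (i x_a_a_a)) x_a_a_a) = x_a_a_a := by
    intro x_a_a_a
    conv_lhs => enter [1]; rw [← e3 (m x_a_a_a (i x_a_a_a))]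
    conv_lhs => enter [1,1]; rw [← e688 x_a_a_a x_a_a_a]
    conv_lhs => rw [e687 (m x_a_a_a (i x_a_a_a)) x_a_a_a]
    conv_lhs => enter [1]; rw [e5 x_a_a_a]
    conv_lhs => rw [e3 x_a_a_a]
  have e691 : ∀ x_a : S, (m (m (i x_a) x_a) (i x_a)) = (i x_a) := by
    intro x_a
    conv_lhs => enter [1,2]; rw [← e3 x_a]
    conv_lhs => rw [e690 (i x_a)]
  have e692 : ∀ x_a_a_a_a : S, (i (m (i x_a_a_a_a) x_a_a_a_a)) = (m (i x_a_a_a_a) x_a_a_a_a) := by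
    intro x_a_a_a_a
    conv_lhs => rw [← e687 x_a_a_a_a x_a_a_a_a]
    conv_lhs => enter [1,1]; rw [e690 x_a_a_a_a]
  have e694 : ∀ x_a_a : S, (m (i (m x_a_a (i x_a_a))) x_a_a) = x_a_a := by
    intro x_a_a
    conv_lhs => rw [← e683 (i x_a_a) x_a_a x_a_a]
    conv_lhs => enter [1]; rw [e691 x_a_a]
    conv_lhs => rw [e3 x_a_a]
  have e696 : ∀ x_a : S, (i (m x_a (i x_a))) = (m x_a (i x_a)) := by
    intro x_a
    conv_lhs => enter [1,1]; rw [← e3 x_a]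
    conv_lhs => rw [e692 (i x_a)]
    conv_lhs => enter [1]; rw [e3 x_a]
  have e698 : ∀ u_a_a x_a_a_a : S, (m (i (m x_a_a_a u_a_a)) (m x_a_a_a (i x_a_a_a))) = (i (m x_a_a_a u_a_a)) := by
    intro u_a_a x_a_a_a
    conv_lhs => rw [← e683 u_a_a (m x_a_a_a (i x_a_a_a)) x_a_a_a]
    conv_lhs => enter [1,1]; rw [e694 x_a_a_a]
  have e701 : ∀ x_a x_a_a_a_a : S, (m (m (i x_a) (m x_a_a_a_a (i x_a_a_a_a))) x_a_a_a_a) = (i (m (i x_a_a_a_a) x_a)) := by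
    intro x_a x_a_a_a_a
    conv_lhs => rw [← e682 x_a_a_a_a x_a (m x_a_a_a_a (i x_a_a_a_a))]
    conv_lhs => enter [1,1,1]; rw [e690 x_a_a_a_a]
  have e702 : ∀ u_a_a_a x_a_a_a_a : S, (i (m (i x_a_a_a_a) (m x_a_a_a_a u_a_a_a))) = (m (i (m x_a_a_a_a u_a_a_a)) x_a_a_a_a) := by
    intro u_a_a_a x_a_a_a_a
    conv_lhs => rw [← e701 (m x_a_a_a_a u_a_a_a) x_a_a_a_a]
    conv_lhs => enter [1]; rw [e698 u_a_a_a x_a_a_a_a]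
  have e703 : ∀ u_a_a_a_a x_a_a_a_a_a : S, (m (m (i x_a_a_a_a_a) x_a_a_a_a_a) u_a_a_a_a) = (m (i x_a_a_a_a_a) (m x_a_a_a_a_a u_a_a_a_a)) := by
    intro u_a_a_a_a x_a_a_a_a_a
    conv_lhs => rw [← e682 u_a_a_a_a x_a_a_a_a_a x_a_a_a_a_a]
    conv_lhs => enter [1]; rw [← e702 u_a_a_a_a x_a_a_a_a_a]
    conv_lhs => rw [e3 (m (i x_a_a_a_a_a) (m x_a_a_a_a_a u_a_a_a_a))]
  have e706 : ∀ x_a x_a_a_a_a_a : S, (m (m (i x_a) (i x_a_a_a_a_a)) x_a_a_a_a_a) = (m (i (m x_a_a_a_a_a x_a)) x_a_a_a_a_a) := by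
    intro x_a x_a_a_a_a_a
    conv_lhs => rw [← e682 x_a_a_a_a_a x_a (i x_a_a_a_a_a)]
    conv_lhs => enter [1,1]; rw [e692 x_a_a_a_a_a]
    conv_lhs => rw [e683 x_a x_a_a_a_a_a x_a_a_a_a_a]
  have e710 : ∀ x_a x_a_a : S, (i (m (m x_a_a (i x_a_a)) x_a)) = (m (m (i x_a) x_a_a) (i x_a_a)) := by
    intro x_a x_a_a
    conv_lhs => enter [1,1]; rw [← e696 x_a_a]
    conv_lhs => rw [e682 (i x_a_a) x_a x_a_a]
  have e714 : ∀ u_a_a_a_a x_a : S, (m (m x_a (i x_a)) u_a_a_a_a) = (m x_a (m (i x_a) u_a_a_a_a)) := by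
    intro u_a_a_a_a x_a
    conv_lhs => enter [1,1]; rw [← e3 x_a]
    conv_lhs => rw [e703 u_a_a_a_a (i x_a)]
    conv_lhs => enter [1]; rw [e3 x_a]
  have e718 : ∀ u_a_a x_a_a : S, (m (i (m x_a_a (m (i x_a_a) u_a_a))) x_a_a) = (i (m (i x_a_a) u_a_a)) := by
    intro u_a_a x_a_a
    conv_lhs => enter [1,1]; rw [← e714 u_a_a x_a_a]
    conv_lhs => rw [e687 u_a_a x_a_a]
  have e720 : ∀ x_a x_a_a : S, (i (m x_a_a (m (i x_a_a) x_a))) = (m (m (i x_a) x_a_a) (i x_a_a)) := by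
    intro x_a x_a_a
    conv_lhs => enter [1]; rw [← e714 x_a x_a_a]
    conv_lhs => rw [e710 x_a x_a_a]
  have e729 : ∀ u_a_a_a x_a_a_a : S, (m (i x_a_a_a) (m x_a_a_a (m (i x_a_a_a) u_a_a_a))) = (m (i x_a_a_a) u_a_a_a) := by
    intro u_a_a_a x_a_a_a
    conv_lhs => rw [← e703 (m (i x_a_a_a) u_a_a_a) x_a_a_a]
    conv_lhs => rw [← e682 (m (i x_a_a_a) u_a_a_a) x_a_a_a x_a_a_a]
    conv_lhs => enter [1]; rw [e718 u_a_a_a x_a_a_a]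
    conv_lhs => rw [e3 (m (i x_a_a_a) u_a_a_a)]
  have e730 : ∀ u_a_a_a x_a : S, (m x_a (m (i x_a) (m x_a u_a_a_a))) = (m x_a u_a_a_a) := by
    intro u_a_a_a x_a
    conv_lhs => enter [2,2,1]; rw [← e3 x_a]
    conv_lhs => enter [1]; rw [← e3 x_a]
    conv_lhs => rw [e729 u_a_a_a (i x_a)]
    conv_lhs => enter [1]; rw [e3 x_a]
  have e732 : ∀ u_a_a_a_a x_a_a : S, (m (m (i (m x_a_a u_a_a_a_a)) x_a_a) (i x_a_a)) = (i (m x_a_a u_a_a_a_a)) := by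
    intro u_a_a_a_a x_a_a
    conv_lhs => rw [← e720 (m x_a_a u_a_a_a_a) x_a_a]
    conv_lhs => enter [1]; rw [e730 u_a_a_a_a x_a_a]
  have e743 : ∀ u_a_a_a w_a_a_a z_a_a_a : S, (m (i (m (m w_a_a_a z_a_a_a) u_a_a_a)) w_a_a_a) = (m (i (m w_a_a_a (m z_a_a_a u_a_a_a))) w_a_a_a) := by
    intro u_a_a_a w_a_a_a z_a_a_a
    conv_lhs => enter [1]; rw [← e681 u_a_a_a w_a_a_a z_a_a_a]
    conv_lhs => rw [e706 (m z_a_a_a u_a_a_a) w_a_a_a]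
  have e809 : ∀ u_a_a_a w_a_a x_a_a z_a_a_a : S, (i (m (m w_a_a (m (i x_a_a) z_a_a_a)) u_a_a_a)) = (m (m (i (m z_a_a_a u_a_a_a)) x_a_a) (i w_a_a)) := by
    intro u_a_a_a w_a_a x_a_a z_a_a_a
    conv_lhs => rw [← e681 u_a_a_a w_a_a (m (i x_a_a) z_a_a_a)]
    conv_lhs => enter [1]; rw [e683 u_a_a_a x_a_a z_a_a_a]
  have e810 : ∀ u_a_a_a u_a_a_a_a x_a_a : S, (i (m (m x_a_a u_a_a_a_a) u_a_a_a)) = (i (m x_a_a (m u_a_a_a_a u_a_a_a))) := by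
    intro u_a_a_a u_a_a_a_a x_a_a
    conv_lhs => enter [1,1]; rw [← e730 u_a_a_a_a x_a_a]
    conv_lhs => rw [e809 u_a_a_a x_a_a x_a_a (m x_a_a u_a_a_a_a)]
    conv_lhs => enter [1]; rw [e743 u_a_a_a x_a_a u_a_a_a_a]
    conv_lhs => rw [e732 (m u_a_a_a_a u_a_a_a) x_a_a]
  have e812 : ∀ u_a_a_a_a u_a_a_a_a_a x_a_a_a : S, (m (m x_a_a_a u_a_a_a_a_a) u_a_a_a_a) = (m x_a_a_a (m u_a_a_a_a_a u_a_a_a_a)) := by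
    intro u_a_a_a_a u_a_a_a_a_a x_a_a_a
    conv_lhs => rw [← e3 (m (m x_a_a_a u_a_a_a_a_a) u_a_a_a_a)]
    conv_lhs => enter [1]; rw [e810 u_a_a_a_a u_a_a_a_a_a x_a_a_a]
    conv_lhs => rw [e3 (m x_a_a_a (m u_a_a_a_a_a u_a_a_a_a))]
  have e827 : ∀ w_a x_a : S, (i (m (i x_a) (i w_a))) = (m w_a x_a) := by
    intro w_a x_a
    conv_lhs => rw [← e685 w_a x_a]
    conv_lhs => rw [e812 (m (i x_a) x_a) x_a w_a]
    conv_lhs => enter [2]; rw [e4 x_a]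
  have e828 : ∀ w_a_a x_a_a : S, (m (i x_a_a) (i w_a_a)) = (i (m w_a_a x_a_a)) := by
    intro w_a_a x_a_a
    conv_lhs => rw [← e3 (m (i x_a_a) (i w_a_a))]
    conv_lhs => enter [1]; rw [e827 w_a_a x_a_a]
  intro x y
  conv_rhs => rw [e828 x y]
end

section
/- In the magma with x·(x'·x) = x and the long identity, the derived identity ((x'·x'')''·x')' = x holds. -/
theorem two_base_derived_14 {S : Type*} (m : S → S → S) (i : S → S)
    (hA : ∀ x, m x (m (i x) x) = x)
    (hB : ∀ x y z u w,
      m x (m (i x) (m y (m (i y) (i (m (i (m z u)) (i w)))))) =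
      m y (m (i y) (m x (m (i x) (m (m w z) u))))) :
    ∀ x, i (m (i (i (m (i x) (i (i x))))) (i x)) = x := by
  have e0 : ∀ a, m a (m (i a) a) = a := by
    intro a
    calc m a (m (i a) a)
      _ = a := (hA a)
  have e1 : ∀ a b c d e, m a (m (i a) (m b (m (i b) (i (m (i (m c d)) (i e)))))) = m b (m (i b) (m a (m (i a) (m (m e c) d)))) := by
    intro a b c d e
    calc m a (m (i a) (m b (m (i b) (i (m (i (m c d)) (i e))))))
      _ = m b (m (i b) (m a (m (i a) (m (m e c) d)))) := (hB a b c d e)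
  have e2 : ∀ a b c d, m a (m (i a) (i (m (i (m b c)) (i d)))) = m (i (m (i (m b c)) (i d))) (m (i (i (m (i (m b c)) (i d)))) (m a (m (i a) (m (m d b) c)))) := by
    intro a b c d
    calc m a (m (i a) (i (m (i (m b c)) (i d))))
      _ = m a (m (i a) (m (i (m (i (m b c)) (i d))) (m (i (i (m (i (m b c)) (i d)))) (i (m (i (m b c)) (i d)))))) := congrArg (fun ξ => m a (m (i a) ξ)) (e0 (i (m (i (m b c)) (i d)))).symm
      _ = m (i (m (i (m b c)) (i d))) (m (i (i (m (i (m b c)) (i d)))) (m a (m (i a) (m (m d b) c)))) := (e1 a (i (m (i (m b c)) (i d))) b c d)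
  have e8 : ∀ a b c, m (i (m (i (m a b)) (i c))) (m (i (i (m (i (m a b)) (i c)))) (m (m c a) b)) = m (m (m c a) b) (m (i (m (m c a) b)) (i (m (i (m a b)) (i c)))) := by
    intro a b c
    calc m (i (m (i (m a b)) (i c))) (m (i (i (m (i (m a b)) (i c)))) (m (m c a) b))
      _ = m (i (m (i (m a b)) (i c))) (m (i (i (m (i (m a b)) (i c)))) (m (m (m c a) b) (m (i (m (m c a) b)) (m (m c a) b)))) := congrArg (fun ξ => m (i (m (i (m a b)) (i c))) (m (i (i (m (i (m a b)) (i c)))) ξ)) (e0 (m (m c a) b)).symm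
      _ = m (m (m c a) b) (m (i (m (m c a) b)) (i (m (i (m a b)) (i c)))) := (e2 (m (m c a) b) a b c).symm
  have e13 : ∀ a b c, m (m a b) c = i (m (i (m b c)) (i a)) := by
    intro a b c
    calc m (m a b) c
      _ = m (m (m a b) c) (m (i (m (m a b) c)) (m (m a b) c)) := (e0 (m (m a b) c)).symm
      _ = m (m (m a b) c) (m (i (m (m a b) c)) (m (m (m a b) c) (m (i (m (m a b) c)) (m (m a b) c)))) := congrArg (fun ξ => m (m (m a b) c) (m (i (m (m a b) c)) ξ)) (e0 (m (m a b) c)).symm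
      _ = m (m (m a b) c) (m (i (m (m a b) c)) (m (m (m a b) c) (m (i (m (m a b) c)) (i (m (i (m b c)) (i a)))))) := (e1 (m (m a b) c) (m (m a b) c) b c a).symm
      _ = m (m (m a b) c) (m (i (m (m a b) c)) (m (i (m (i (m b c)) (i a))) (m (i (i (m (i (m b c)) (i a)))) (m (m a b) c)))) := congrArg (fun ξ => m (m (m a b) c) (m (i (m (m a b) c)) ξ)) (e8 b c a).symm
      _ = m (i (m (i (m b c)) (i a))) (m (i (i (m (i (m b c)) (i a)))) (m (m (m a b) c) (m (i (m (m a b) c)) (i (m (i (m b c)) (i a)))))) := (e1 (i (m (i (m b c)) (i a))) (m (m a b) c) b c a).symm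
      _ = m (i (m (i (m b c)) (i a))) (m (i (i (m (i (m b c)) (i a)))) (m (i (m (i (m b c)) (i a))) (m (i (i (m (i (m b c)) (i a)))) (m (m a b) c)))) := congrArg (fun ξ => m (i (m (i (m b c)) (i a))) (m (i (i (m (i (m b c)) (i a)))) ξ)) (e8 b c a).symm
      _ = m (i (m (i (m b c)) (i a))) (m (i (i (m (i (m b c)) (i a)))) (i (m (i (m b c)) (i a)))) := (e2 (i (m (i (m b c)) (i a))) b c a).symm
      _ = i (m (i (m b c)) (i a)) := (e0 (i (m (i (m b c)) (i a))))
  have e15 : ∀ a b, i (m (i a) (i b)) = m (m b a) (m (i a) a) := by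
    intro a b
    calc i (m (i a) (i b))
      _ = i (m (i (m a (m (i a) a))) (i b)) := congrArg (fun ξ => i (m (i ξ) (i b))) (e0 a).symm
      _ = m (m b a) (m (i a) a) := (e13 b a (m (i a) a)).symm
  have e37 : ∀ a b c, i (m (i (i (m (i a) (i b)))) (i c)) = m (m c (m b a)) (m (i a) a) := by
    intro a b c
    calc i (m (i (i (m (i a) (i b)))) (i c))
      _ = i (m (i (m (m b a) (m (i a) a))) (i c)) := congrArg (fun ξ => i (m (i ξ) (i c))) (e15 a b)
      _ = m (m c (m b a)) (m (i a) a) := (e13 c (m b a) (m (i a) a)).symm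
  intro x
  calc i (m (i (i (m (i x) (i (i x))))) (i x))
    _ = m (m x (m (i x) x)) (m (i x) x) := (e37 x (i x) x)
    _ = m x (m (i x) x) := congrArg (fun ξ => m ξ (m (i x) x)) (e0 x)
    _ = x := (e0 x)
end

section
/- In the magma with x·(x'·x) = x and the long identity, the derived identities x'·(x·x') = x' and x''·x' = x·x' hold. -/
theorem two_base_derived_15 {S : Type*} (m : S → S → S) (i : S → S)
    (hA : ∀ x, m x (m (i x) x) = x)
    (hB : ∀ x y z u w,
      m x (m (i x) (m y (m (i y) (i (m (i (m z u)) (i w)))))) =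
      m y (m (i y) (m x (m (i x) (m (m w z) u))))) :
    (∀ x, m (i x) (m x (i x)) = i x) ∧ (∀ x, m (i (i x)) (i x) = m x (i x)) := by
  have e3 : ∀ x0 x1 x2 x3, (m (i (m (i (m x0 x1)) (i x2))) (m (i (i (m (i (m x0 x1)) (i x2)))) (m x3 (m (i x3) (m (m x2 x0) x1))))) = (m x3 (m (i x3) (i (m (i (m x0 x1)) (i x2))))) := fun x0 x1 x2 x3 => ((hB x3 (i (m (i (m x0 x1)) (i x2))) x0 x1 x2).symm.trans (congrArg (fun Z => (m x3 (m (i x3) Z))) (hA (i (m (i (m x0 x1)) (i x2))))))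
  have e16 : ∀ x0 x1 x2, (m (i (m (i (m x0 x1)) (i x2))) (m (i (i (m (i (m x0 x1)) (i x2)))) (m (m x2 x0) x1))) = (m (m (m x2 x0) x1) (m (i (m (m x2 x0) x1)) (i (m (i (m x0 x1)) (i x2))))) := fun x0 x1 x2 => ((congrArg (fun Z => (m (i (m (i (m x0 x1)) (i x2))) (m (i (i (m (i (m x0 x1)) (i x2)))) Z))) (hA (m (m x2 x0) x1)).symm).trans (e3 x0 x1 x2 (m (m x2 x0) x1)))
  have e66 : ∀ x0 x1 x2, (i (m (i (m x0 x1)) (i x2))) = (m (m x2 x0) x1) := fun x0 x1 x2 => ((((((((hA (i (m (i (m x0 x1)) (i x2)))).symm.trans (e3 x0 x1 x2 (i (m (i (m x0 x1)) (i x2)))).symm).trans (congrArg (fun Z => (m (i (m (i (m x0 x1)) (i x2))) (m (i (i (m (i (m x0 x1)) (i x2)))) Z))) (e16 x0 x1 x2))).trans (hB (i (m (i (m x0 x1)) (i x2))) (m (m x2 x0) x1) x0 x1 x2)).trans (congrArg (fun Z => (m (m (m x2 x0) x1) (m (i (m (m x2 x0) x1)) Z))) (e16 x0 x1 x2))).trans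 (hB (m (m x2 x0) x1) (m (m x2 x0) x1) x0 x1 x2)).trans (congrArg (fun Z => (m (m (m x2 x0) x1) (m (i (m (m x2 x0) x1)) Z))) (hA (m (m x2 x0) x1)))).trans (hA (m (m x2 x0) x1)))
  have e75 : ∀ x0 x1 x2, (m (m (i (m x0 x1)) (i x2)) (m (m (m x2 x0) x1) (m (i (m x0 x1)) (i x2)))) = (m (i (m x0 x1)) (i x2)) := fun x0 x1 x2 => ((congrArg (fun Z => (m (m (i (m x0 x1)) (i x2)) (m Z (m (i (m x0 x1)) (i x2))))) (e66 x0 x1 x2).symm).trans (hA (m (i (m x0 x1)) (i x2))))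
  have e76 : ∀ x0 x1, (m (m x0 x1) (m (i x1) x1)) = (i (m (i x1) (i x0))) := fun x0 x1 => ((e66 x1 (m (i x1) x1) x0).symm.trans (congrArg (fun Z => (i (m (i Z) (i x0)))) (hA x1)))
  have e102 : ∀ x0 x1 x2 x3, (i (m (m (m x0 x1) x2) (i x3))) = (m (m x3 (i (m x1 x2))) (i x0)) := fun x0 x1 x2 x3 => ((congrArg (fun Z => (i (m Z (i x3)))) (e66 x1 x2 x0).symm).trans (e66 (i (m x1 x2)) (i x0) x3))
  have e103 : ∀ x0 x1 x2 x3 x4, (i (m (i (m x0 x1)) (m (m x2 x3) x4))) = (m (m (m (i (m x3 x4)) (i x2)) x0) x1) := fun x0 x1 x2 x3 x4 => ((congrArg (fun Z => (i (m (i (m x0 x1)) Z))) (e66 x3 x4 x2).symm).trans (e66 x0 x1 (m (i (m x3 x4)) (i x2))))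
  have e104 : ∀ x0, (m x0 (m (i (m (i x0) x0)) (m (i x0) x0))) = (m (m x0 (i x0)) x0) := fun x0 => (((congrArg (fun Z => (m Z (m (i (m (i x0) x0)) (m (i x0) x0)))) (hA x0).symm).trans (e76 x0 (m (i x0) x0))).trans (e66 (i x0) x0 x0))
  have e123 : ∀ x0 x1 x2, (m (m x0 (i (m x1 (m (i (m x2 x1)) (m x2 x1))))) (i x2)) = (i (m (m x2 x1) (i x0))) := fun x0 x1 x2 => ((e102 x2 x1 (m (i (m x2 x1)) (m x2 x1)) x0).symm.trans (congrArg (fun Z => (i (m Z (i x0)))) (hA (m x2 x1))))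
  have e124 : ∀ x0 x1 x2, (m (m x0 (i (m (m (i x1) x1) x2))) (i x1)) = (i (m (m x1 x2) (i x0))) := fun x0 x1 x2 => ((e102 x1 (m (i x1) x1) x2 x0).symm.trans (congrArg (fun Z => (i (m (m Z x2) (i x0)))) (hA x1)))
  have e162 : ∀ x0 x1, (m (m x0 x1) (m (i (m (i x1) x1)) (m (i x1) x1))) = (m (m x0 (m x1 (i x1))) x1) := fun x0 x1 => (((e66 x1 (m (i (m (i x1) x1)) (m (i x1) x1)) x0).symm.trans (congrArg (fun Z => (i (m (i Z) (i x0)))) (e104 x1))).trans (e66 (m x1 (i x1)) x1 x0))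
  have e183 : ∀ x0 x1, (m (m x0 (i (i (m (i x1) (i (i x1)))))) (i x1)) = (i (m x1 (i x0))) := fun x0 x1 => (((congrArg (fun Z => (m (m x0 (i Z)) (i x1))) (e76 (i x1) x1).symm).trans (e124 x0 x1 (m (i x1) x1))).trans (congrArg (fun Z => (i (m Z (i x0)))) (hA x1)))
  have e200 : ∀ x0 x1 x2, (m (m x0 (m x1 (i (i (m (i x2) (i (i x2))))))) (i x2)) = (i (m (i (i (m x2 (i x1)))) (i x0))) := fun x0 x1 x2 => ((e66 (m x1 (i (i (m (i x2) (i (i x2)))))) (i x2) x0).symm.trans (congrArg (fun Z => (i (m (i Z) (i x0)))) (e183 x1 x2)))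
  have e201 : ∀ x0 x1 x2, (m (m x0 (i (m (m (i (m x1 x2)) x1) x2))) (i (m x1 x2))) = (i (m (m x1 x2) (i x0))) := fun x0 x1 x2 => ((congrArg (fun Z => (m (m x0 (i Z)) (i (m x1 x2)))) (e66 x1 x2 (i (m x1 x2))).symm).trans (e183 x0 (m x1 x2)))
  have e214 : ∀ x0 x1 x2 x3, (m (m (m (i (m (m (i x0) x0) x1)) (i x0)) x2) x3) = (i (m (i (m x2 x3)) (m x0 x1))) := fun x0 x1 x2 x3 => ((e103 x2 x3 x0 (m (i x0) x0) x1).symm.trans (congrArg (fun Z => (i (m (i (m x2 x3)) (m Z x1)))) (hA x0)))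
  have e251 : ∀ x0, (m (m (i x0) (m x0 (i x0))) x0) = (m (i x0) x0) := fun x0 => ((e162 (i x0) x0).symm.trans (hA (m (i x0) x0)))
  have e294 : ∀ x0 x1, (m (m x0 (m (i x1) (m x1 (i x1)))) x1) = (m (m x0 (i x1)) x1) := fun x0 x1 => (((e66 (m (i x1) (m x1 (i x1))) x1 x0).symm.trans (congrArg (fun Z => (i (m (i Z) (i x0)))) (e251 x1))).trans (e66 (i x1) x1 x0))
  have e296 : ∀ x0, (i (m (i x0) (i (m (i x0) (m x0 (i x0)))))) = (i (m (i x0) (i (i x0)))) := fun x0 => (((e76 (m (i x0) (m x0 (i x0))) x0).symm.trans (congrArg (fun Z => (m Z (m (i x0) x0))) (e251 x0))).trans (e76 (i x0) x0))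
  have e297 : ∀ x0 x1, (m (m x0 (i (m (m x1 (i x1)) x1))) (i (i x1))) = (i (m (m (i x1) x1) (i x0))) := fun x0 x1 => ((e102 (i x1) (m x1 (i x1)) x1 x0).symm.trans (congrArg (fun Z => (i (m Z (i x0)))) (e251 x1)))
  have e306 : ∀ x0, (m (m (m (i x0) (m x0 (i x0))) (m x0 (i x0))) x0) = (m (i x0) x0) := fun x0 => ((((e162 (m (i x0) (m x0 (i x0))) x0).symm.trans (congrArg (fun Z => (m Z (m (i (m (i x0) x0)) (m (i x0) x0)))) (e251 x0))).trans (e162 (i x0) x0)).trans (e251 x0))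
  have e319 : ∀ x0 x1, (i (m (i x0) (i (m x1 (m (i x0) (m x0 (i x0))))))) = (i (m (i x0) (i (m x1 (i x0))))) := fun x0 x1 => (((e76 (m x1 (m (i x0) (m x0 (i x0)))) x0).symm.trans (congrArg (fun Z => (m Z (m (i x0) x0))) (e294 x1 x0))).trans (e76 (m x1 (i x0)) x0))
  have e381 : ∀ x0 x1, (m (m x0 (i x1)) (i (m (i x1) (m x1 (i x1))))) = (m (m x0 (i x1)) (i (i x1))) := fun x0 x1 => (((e66 (i x1) (i (m (i x1) (m x1 (i x1)))) x0).symm.trans (congrArg (fun Z => (i (m Z (i x0)))) (e296 x1))).trans (e66 (i x1) (i (i x1)) x0))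
  have e473 : ∀ x0 x1 x2, (m (m x0 (m x1 (i x2))) (i (m (i x2) (m x2 (i x2))))) = (m (m x0 (m x1 (i x2))) (i (i x2))) := fun x0 x1 x2 => (((e66 (m x1 (i x2)) (i (m (i x2) (m x2 (i x2)))) x0).symm.trans (congrArg (fun Z => (i (m (i Z) (i x0)))) (e381 x1 x2))).trans (e66 (m x1 (i x2)) (i (i x2)) x0))
  have e477 : ∀ x0 x1 x2, (m (m (m (i x0) (m x0 (i x0))) (i (m x1 (i x0)))) (i x2)) = (m (m (i x0) (i (m x1 (i x0)))) (i x2)) := fun x0 x1 x2 => (((e102 x2 x1 (i x0) (m (i x0) (m x0 (i x0)))).symm.trans (congrArg (fun Z => (i Z)) (e381 (m x2 x1) x0))).trans (e102 x2 x1 (i x0) (i x0)))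
  have e483 : ∀ x0 x1, (m (i (m x0 (i x1))) (i (m (i x0) (m x0 (i x0))))) = (m (i (m x0 (i x1))) (i (i x0))) := fun x0 x1 => (((congrArg (fun Z => (m Z (i (m (i x0) (m x0 (i x0)))))) (e183 x1 x0).symm).trans (e381 (m x1 (i (i (m (i x0) (i (i x0)))))) x0)).trans (congrArg (fun Z => (m Z (i (i x0)))) (e183 x1 x0)))
  have e706 : ∀ x0 x1 x2, (m (m (m (i (i (m (i x0) (i (i x0))))) (i x0)) x1) x2) = (i (m (i (m x1 x2)) x0)) := fun x0 x1 x2 => (((congrArg (fun Z => (m (m (m (i Z) (i x0)) x1) x2)) (e76 (i x0) x0).symm).trans (e214 x0 (m (i x0) x0) x1 x2)).trans (congrArg (fun Z => (i (m (i (m x1 x2)) Z))) (hA x0)))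
  have e715 : ∀ x0 x1 x2, (i (m (i (m (i (i (m (i x0) (i (i x0))))) (i x0))) (m x1 x2))) = (i (m x0 (m x1 x2))) := fun x0 x1 x2 => ((((e214 x1 x2 (i (i (m (i x0) (i (i x0))))) (i x0)).symm.trans (e183 (m (i (m (m (i x1) x1) x2)) (i x1)) x0)).trans (congrArg (fun Z => (i (m x0 Z))) (e66 (m (i x1) x1) x2 x1))).trans (congrArg (fun Z => (i (m x0 (m Z x2)))) (hA x1)))
  have e785 : ∀ x0 x1, (i (m (i x0) (i (m (i (i (m (i x1) (i (i x1))))) (i x1))))) = (i (m (i x0) x1)) := fun x0 x1 => (((e76 (m (i (i (m (i x1) (i (i x1))))) (i x1)) x0).symm.trans (e706 x1 x0 (m (i x0) x0))).trans (congrArg (fun Z => (i (m (i Z) x1))) (hA x0)))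
  have e787 : ∀ x0 x1 x2, (m (m x0 (i (m (i x1) x2))) (i (i (i (m (i x1) (i (i x1))))))) = (i (i (m (i (m x2 (i x0))) x1))) := fun x0 x1 x2 => ((e102 (i (i (m (i x1) (i (i x1))))) (i x1) x2 x0).symm.trans (congrArg (fun Z => (i Z)) (e706 x1 x2 (i x0))))
  have e914 : ∀ x0 x1 x2, (m (m x0 (i x1)) (i (m x2 (m (i x1) (m x1 (i x1)))))) = (m (m x0 (i x1)) (i (m x2 (i x1)))) := fun x0 x1 x2 => (((e66 (i x1) (i (m x2 (m (i x1) (m x1 (i x1))))) x0).symm.trans (congrArg (fun Z => (i (m Z (i x0)))) (e319 x1 x2))).trans (e66 (i x1) (i (m x2 (i x1))) x0))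
  have e1056 : ∀ x0 x1, (i (m (i (m (i (i (m (i x0) (i (i x0))))) (i x0))) x1)) = (i (m x0 x1)) := fun x0 x1 => (((congrArg (fun Z => (i (m (i (m (i (i (m (i x0) (i (i x0))))) (i x0))) Z))) (hA x1).symm).trans (e715 x0 x1 (m (i x1) x1))).trans (congrArg (fun Z => (i (m x0 Z))) (hA x1)))
  have e1155 : ∀ x0 x1 x2, (m (m x0 (i (m (i (i (m (i x1) (i (i x1))))) (i x1)))) x2) = (m (m x0 x1) x2) := fun x0 x1 x2 => (((e66 (i (m (i (i (m (i x1) (i (i x1))))) (i x1))) x2 x0).symm.trans (congrArg (fun Z => (i (m Z (i x0)))) (e1056 x1 x2))).trans (e66 x1 x2 x0))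
  have e1156 : ∀ x0 x1 x2 x3, (m (m (m (i (m (i (i (m (i x0) (i (i x0))))) (i x0))) x1) x2) x3) = (m (m (m x0 x1) x2) x3) := fun x0 x1 x2 x3 => (((e66 x2 x3 (m (i (m (i (i (m (i x0) (i (i x0))))) (i x0))) x1)).symm.trans (congrArg (fun Z => (i (m (i (m x2 x3)) Z))) (e1056 x0 x1))).trans (e66 x2 x3 (m x0 x1)))
  have e1157 : ∀ x0 x1 x2, (i (m (m (m (m x0 x1) (m (i (m x0 x1)) x0)) x1) x2)) = (i (m (m x0 x1) x2)) := fun x0 x1 x2 => (((congrArg (fun Z => (i (m Z x2))) (e66 (m (i (m x0 x1)) x0) x1 (m x0 x1)).symm).trans (congrArg (fun Z => (i (m (i (m (i Z) (i (m x0 x1)))) x2))) (e66 x0 x1 (i (m x0 x1))).symm)).trans (e1056 (m x0 x1) x2))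
  have e1190 : ∀ x0 x1, (i (m x0 (i (m (i (i (m (i x1) (i (i x1))))) (i x1))))) = (i (m x0 x1)) := fun x0 x1 => (((e1056 x0 (i (m (i (i (m (i x1) (i (i x1))))) (i x1)))).symm.trans (e785 (m (i (i (m (i x0) (i (i x0))))) (i x0)) x1)).trans (e1056 x0 x1))
  have e1234 : ∀ x0 x1 x2, (m (m x0 x1) (i (m (i (i (m (i x2) (i (i x2))))) (i x2)))) = (m (m x0 x1) x2) := fun x0 x1 x2 => (((e66 x1 (i (m (i (i (m (i x2) (i (i x2))))) (i x2))) x0).symm.trans (congrArg (fun Z => (i (m Z (i x0)))) (e1190 x1 x2))).trans (e66 x1 x2 x0))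
  have e1286 : ∀ x0 x1, (m (i (m x0 x1)) (i (m (i x0) (m x0 (i x0))))) = (m (i (m x0 x1)) (i (i x0))) := fun x0 x1 => (((congrArg (fun Z => (m Z (i (m (i x0) (m x0 (i x0)))))) (e1190 x0 x1).symm).trans (e483 x0 (m (i (i (m (i x1) (i (i x1))))) (i x1)))).trans (congrArg (fun Z => (m Z (i (i x0)))) (e1190 x0 x1)))
  have e1390 : ∀ x0 x1, (i (i (m (i x0) (i (m (m x1 x0) (m (i (m x1 x0)) x1)))))) = (i (i (m (i x0) (i x1)))) := fun x0 x1 => (((congrArg (fun Z => (i Z)) (e76 (m (m x1 x0) (m (i (m x1 x0)) x1)) x0).symm).trans (e1157 x1 x0 (m (i x0) x0))).trans (congrArg (fun Z => (i Z)) (e76 x1 x0)))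
  have e1472 : ∀ x0 x1, (m x0 (i (m (i (i (m (i x1) (i (i x1))))) (i x1)))) = (m x0 x1) := fun x0 x1 => (((congrArg (fun Z => (m Z (i (m (i (i (m (i x1) (i (i x1))))) (i x1))))) (hA x0).symm).trans (e1234 x0 (m (i x0) x0) x1)).trans (congrArg (fun Z => (m Z x1)) (hA x0)))
  have e1535 : ∀ x0 x1 x2, (m x0 (m (m (m x1 x2) (m (i (m x1 x2)) x1)) x2)) = (m x0 (m x1 x2)) := fun x0 x1 x2 => (((congrArg (fun Z => (m x0 Z)) (e66 (m (i (m x1 x2)) x1) x2 (m x1 x2)).symm).trans (congrArg (fun Z => (m x0 (i (m (i Z) (i (m x1 x2)))))) (e66 x1 x2 (i (m x1 x2))).symm)).trans (e1472 x0 (m x1 x2)))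
  have e1611 : ∀ x0, (m (i x0) (i (m (i x0) (m x0 (i x0))))) = (m (i x0) (i (i x0))) := fun x0 => (((congrArg (fun Z => (m (i Z) (i (m (i x0) (m x0 (i x0)))))) (hA x0).symm).trans (e1286 x0 (m (i x0) x0))).trans (congrArg (fun Z => (m (i Z) (i (i x0)))) (hA x0)))
  have e1966 : ∀ x0 x1 x2, (m (m x0 (i x1)) (i (m (m x2 x1) (m (i (m x2 x1)) x2)))) = (m (m x0 (i x1)) (i x2)) := fun x0 x1 x2 => (((((((e66 (i x1) (i (m (m x2 x1) (m (i (m x2 x1)) x2))) x0).symm.trans (e183 x0 (i (m (i x1) (i (m (m x2 x1) (m (i (m x2 x1)) x2)))))).symm).trans (congrArg (fun Z => (m (m x0 (i (i (m Z (i (i (i (m (i x1) (i (m (m x2 x1) (m (i (m x2 x1)) x2))))))))))) (i (i (m (i x1) (i (m (m x2 x1) (m (i (m x2 x1)) x2)))))))) (e1390 x1 x2))).trans (congrArg (fun Z => (m (m x0 (i (i (m (i (i (m (i x1) (i x2)))) (i Z))))) (i (i (m (i x1) (i (m (m x2 x1) (m (i (m x2 x1)) x2)))))))) (e1390 x1 x2))).trans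 (congrArg (fun Z => (m (m x0 (i (i (m (i (i (m (i x1) (i x2)))) (i (i (i (m (i x1) (i x2))))))))) Z)) (e1390 x1 x2))).trans (e183 x0 (i (m (i x1) (i x2))))).trans (e66 (i x1) (i x2) x0))
  have e2182 : ∀ x0 x1 x2, (i (m (i (m (i (m (m x0 x1) (m (i (m x0 x1)) x0))) x2)) x1)) = (i (m (i (m (i x0) x2)) x1)) := fun x0 x1 x2 => (((e706 x1 (i (m (m x0 x1) (m (i (m x0 x1)) x0))) x2).symm.trans (congrArg (fun Z => (m Z x2)) (e1966 (i (i (m (i x1) (i (i x1))))) x1 x0))).trans (e706 x1 (i x0) x2))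
  have e3279 : ∀ x0 x1, (m (i (m (i (i x0)) (i x1))) (i (m (i x0) (m x0 (i x0))))) = (m (i (m (i (i x0)) (i x1))) (i (i x0))) := fun x0 x1 => (((congrArg (fun Z => (m Z (i (m (i x0) (m x0 (i x0)))))) (e76 x1 (i x0)).symm).trans (e473 (m x1 (i x0)) (i (i x0)) x0)).trans (congrArg (fun Z => (m Z (i (i x0)))) (e76 x1 (i x0))))
  have e3485 : ∀ x0 x1 x2, (i (m (m x0 (m (i x1) (m x1 (i x1)))) (i (m x2 (i x1))))) = (i (m (m x0 (i x1)) (i (m x2 (i x1))))) := fun x0 x1 x2 => (((e124 (m x2 (i x1)) x0 (m (i x1) (m x1 (i x1)))).symm.trans (congrArg (fun Z => (m Z (i x0))) (e914 x2 x1 (m (i x0) x0)))).trans (e124 (m x2 (i x1)) x0 (i x1)))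
  have e3487 : ∀ x0 x1 x2, (m (i (m x0 (i x1))) (i (m x2 (m (i x0) (m x0 (i x0)))))) = (m (i (m x0 (i x1))) (i (m x2 (i x0)))) := fun x0 x1 x2 => (((congrArg (fun Z => (m Z (i (m x2 (m (i x0) (m x0 (i x0))))))) (e183 x1 x0).symm).trans (e914 (m x1 (i (i (m (i x0) (i (i x0)))))) x0 x2)).trans (congrArg (fun Z => (m Z (i (m x2 (i x0))))) (e183 x1 x0)))
  have e3629 : ∀ x0 x1 x2, (i (m (m (i (m (i (i (m (i x0) (i (i x0))))) (i x0))) x1) x2)) = (i (m (m x0 x1) x2)) := fun x0 x1 x2 => (((((e1157 (i (m (i (i (m (i x0) (i (i x0))))) (i x0))) x1 x2).symm.trans (congrArg (fun Z => (i (m Z x2))) (e1156 x0 x1 (m (i (m (i (m (i (i (m (i x0) (i (i x0))))) (i x0))) x1)) (i (m (i (i (m (i x0) (i (i x0))))) (i x0)))) x1))).trans (congrArg (fun Z => (i (m (m (m (m x0 x1) Z) x1) x2))) (e1472 (i (m (i (m (i (i (m (i x0) (i (i x0))))) (i x0))) x1)) x0))).trans (congrArg (fun Z => (i (m (m (m (m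 x0 x1) (m Z x0)) x1) x2))) (e1056 x0 x1))).trans (e1157 x0 x1 x2))
  have e3634 : ∀ x0 x1 x2, (m x0 (m (i (m (i (i (m (i x1) (i (i x1))))) (i x1))) x2)) = (m x0 (m x1 x2)) := fun x0 x1 x2 => (((((e1535 x0 (i (m (i (i (m (i x1) (i (i x1))))) (i x1))) x2).symm.trans (congrArg (fun Z => (m x0 Z)) (e1156 x1 x2 (m (i (m (i (m (i (i (m (i x1) (i (i x1))))) (i x1))) x2)) (i (m (i (i (m (i x1) (i (i x1))))) (i x1)))) x2))).trans (congrArg (fun Z => (m x0 (m (m (m x1 x2) Z) x2))) (e1472 (i (m (i (m (i (i (m (i x1) (i (i x1))))) (i x1))) x2)) x1))).trans (congrArg (fun Z => (m x0 (m (m (m x1 x2) (m Z x1)) x2))) (e1056 x1 x2))).trans (e1535 x0 x1 x2))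
  have e3690 : ∀ x0 x1, (m x0 (m x1 (m (i (i (m (i (i (m (i x1) (i (i x1))))) (i x1)))) x1))) = (m x0 x1) := fun x0 x1 => ((((congrArg (fun Z => (m x0 (m x1 Z))) (e1472 (i (i (m (i (i (m (i x1) (i (i x1))))) (i x1)))) x1).symm).trans (e3634 x0 x1 (m (i (i (m (i (i (m (i x1) (i (i x1))))) (i x1)))) (i (m (i (i (m (i x1) (i (i x1))))) (i x1))))).symm).trans (congrArg (fun Z => (m x0 Z)) (hA (i (m (i (i (m (i x1) (i (i x1))))) (i x1)))))).trans (e1472 x0 x1))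
  have e3701 : ∀ x0 x1 x2 x3, (m x0 (m (m (m (m x1 x2) (m (i (m x1 x2)) x1)) x2) x3)) = (m x0 (m (m x1 x2) x3)) := fun x0 x1 x2 x3 => (((congrArg (fun Z => (m x0 (m Z x3))) (e66 (m (i (m x1 x2)) x1) x2 (m x1 x2)).symm).trans (congrArg (fun Z => (m x0 (m (i (m (i Z) (i (m x1 x2)))) x3))) (e66 x1 x2 (i (m x1 x2))).symm)).trans (e3634 x0 (m x1 x2) x3))
  have e3752 : ∀ x0 x1, (m x0 (m (i (i (m (i x1) (i (i x1))))) (i x1))) = (m x0 (i (m (i (i (m x1 (i x1)))) x1))) := fun x0 x1 => ((((e1535 x0 (i (i (m (i x1) (i (i x1))))) (i x1)).symm.trans (congrArg (fun Z => (m x0 (m Z (i x1)))) (e3634 (m (i (i (m (i x1) (i (i x1))))) (i x1)) x1 (i (i (m (i x1) (i (i x1)))))))).trans (congrArg (fun Z => (m x0 Z)) (e200 (m (i (i (m (i x1) (i (i x1))))) (i x1)) x1 x1))).trans (congrArg (fun Z => (m x0 Z)) (e785 (i (m x1 (i x1))) x1)))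
  have e3879 : ∀ x0 x1, (i (m (m x0 (m (i (i (m (i (i (m (i x0) (i (i x0))))) (i x0)))) x0)) x1)) = (i (m x0 x1)) := fun x0 x1 => ((((congrArg (fun Z => (i (m (m x0 Z) x1))) (e1472 (i (i (m (i (i (m (i x0) (i (i x0))))) (i x0)))) x0).symm).trans (e3629 x0 (m (i (i (m (i (i (m (i x0) (i (i x0))))) (i x0)))) (i (m (i (i (m (i x0) (i (i x0))))) (i x0)))) x1).symm).trans (congrArg (fun Z => (i (m Z x1))) (hA (i (m (i (i (m (i x0) (i (i x0))))) (i x0)))))).trans (e1056 x0 x1))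
  have e3919 : ∀ x0 x1 x2, (i (m (m (i (m (i (i (m x0 (i x0)))) x0)) x1) x2)) = (i (i (m (i (m x1 x2)) x0))) := fun x0 x1 x2 => ((((((congrArg (fun Z => (i (m (m (i (m (i Z) x0)) x1) x2))) (e183 x0 x0).symm).trans (congrArg (fun Z => (i (m (m (i (m Z x0)) x1) x2))) (e3629 x0 (i (i (m (i x0) (i (i x0))))) (i x0)).symm)).trans (congrArg (fun Z => (i (m (m (i (m (i Z) x0)) x1) x2))) (e66 (i (i (m (i x0) (i (i x0))))) (i x0) (i (m (i (i (m (i x0) (i (i x0))))) (i x0)))).symm)).trans (congrArg (fun Z => (i (m (m Z x1) x2))) (e785 (i (m (i (m (i (i (m (i x0) (i (i x0))))) (i x0))) (i (i (m (i (i (m (i x0) (i (i x0))))) (i x0)))))) x0).symm)).trans (e3629 (m (i (i (m (i x0) (i (i x0))))) (i x0)) x1 x2)).trans (congrArg (fun Z => (i Z)) (e706 x0 x1 x2)))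
  have e4007 : ∀ x0 x1 x2 x3, (m (m x0 (m (i (m (i (i (m x1 (i x1)))) x1)) x2)) x3) = (i (m (i (i (m (i (m x2 x3)) x1))) (i x0))) := fun x0 x1 x2 x3 => ((e66 (m (i (m (i (i (m x1 (i x1)))) x1)) x2) x3 x0).symm.trans (congrArg (fun Z => (i (m Z (i x0)))) (e3919 x1 x2 x3)))
  have e4023 : ∀ x0 x1, (i (i (m x0 (i (i (m (i (i (m x1 (i x1)))) x1)))))) = (i (i (m x0 x1))) := fun x0 x1 => (((congrArg (fun Z => (i Z)) (e183 (i (m (i (i (m x1 (i x1)))) x1)) x0).symm).trans (e3919 x1 (i (i (m (i x0) (i (i x0))))) (i x0))).trans (congrArg (fun Z => (i Z)) (e1056 x0 x1)))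
  have e4189 : ∀ x0 x1 x2, (m (m x0 x1) (i (i (m (i (i (m x2 (i x2)))) x2)))) = (m (m x0 x1) x2) := fun x0 x1 x2 => (((((((e66 x1 (i (i (m (i (i (m x2 (i x2)))) x2))) x0).symm.trans (e183 x0 (i (m x1 (i (i (m (i (i (m x2 (i x2)))) x2)))))).symm).trans (congrArg (fun Z => (m (m x0 (i (i (m Z (i (i (i (m x1 (i (i (m (i (i (m x2 (i x2)))) x2))))))))))) (i (i (m x1 (i (i (m (i (i (m x2 (i x2)))) x2)))))))) (e4023 x1 x2))).trans (congrArg (fun Z => (m (m x0 (i (i (m (i (i (m x1 x2))) (i Z))))) (i (i (m x1 (i (i (m (i (i (m x2 (i x2)))) x2)))))))) (e4023 x1 x2))).trans (congrArg (fun Z => (m (m x0 (i (i (m (i (i (m x1 x2))) (i (i (i (m x1 x2)))))))) Z)) (e4023 x1 x2))).trans (e183 x0 (i (m x1 x2)))).trans (e66 x1 x2 x0))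
  have e4318 : ∀ x0 x1, (m x0 (i (i (m (i (i (m x1 (i x1)))) x1)))) = (m x0 x1) := fun x0 x1 => (((congrArg (fun Z => (m Z (i (i (m (i (i (m x1 (i x1)))) x1))))) (hA x0).symm).trans (e4189 x0 (m (i x0) x0) x1)).trans (congrArg (fun Z => (m Z x1)) (hA x0)))
  have e4418 : ∀ x0 x1 x2, (m (m (i (m (i (i (m x0 (i x0)))) x0)) x1) x2) = (i (m (i (m x1 x2)) x0)) := fun x0 x1 x2 => ((e66 x1 x2 (i (m (i (i (m x0 (i x0)))) x0))).symm.trans (congrArg (fun Z => (i Z)) (e4318 (i (m x1 x2)) x0)))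
  have e4530 : ∀ x0 x1 x2 x3, (m (m (m (m (m x0 x1) (m (i (m x0 x1)) x0)) x1) x2) x3) = (m (m (m x0 x1) x2) x3) := fun x0 x1 x2 x3 => ((((congrArg (fun Z => (m (m Z x2) x3)) (e66 (m (i (m x0 x1)) x0) x1 (m x0 x1)).symm).trans (congrArg (fun Z => (m (m (i (m (i Z) (i (m x0 x1)))) x2) x3)) (e66 x0 x1 (i (m x0 x1))).symm)).trans (e4418 (i (m x0 x1)) x2 x3)).trans (e66 x2 x3 (m x0 x1)))
  have e5155 : ∀ x0 x1 x2, (m (m (m (m x0 x1) (m (i (m x0 x1)) x0)) x1) x2) = (m (m x0 x1) x2) := fun x0 x1 x2 => (((((hA (m (m (m (m x0 x1) (m (i (m x0 x1)) x0)) x1) x2)).symm.trans (e4530 x0 x1 x2 (m (i (m (m (m (m x0 x1) (m (i (m x0 x1)) x0)) x1) x2)) (m (m (m (m x0 x1) (m (i (m x0 x1)) x0)) x1) x2)))).trans (congrArg (fun Z => (m (m (m x0 x1) x2) Z)) (e3701 (i (m (m (m (m x0 x1) (m (i (m x0 x1)) x0)) x1) x2)) x0 x1 x2))).trans (congrArg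 (fun Z => (m (m (m x0 x1) x2) (m Z (m (m x0 x1) x2)))) (e1157 x0 x1 x2))).trans (hA (m (m x0 x1) x2)))
  have e5287 : ∀ x0 x1, (m (m (i (i (m (i x0) (i (i x0))))) (i x0)) x1) = (m (i (m (i (i (m x0 (i x0)))) x0)) x1) := fun x0 x1 => ((((e5155 (i (i (m (i x0) (i (i x0))))) (i x0) x1).symm.trans (congrArg (fun Z => (m Z x1)) (e706 x0 (m (i (m (i (i (m (i x0) (i (i x0))))) (i x0))) (i (i (m (i x0) (i (i x0)))))) (i x0)))).trans (congrArg (fun Z => (m (i (m Z x0)) x1)) (e3629 x0 (i (i (m (i x0) (i (i x0))))) (i x0)))).trans (congrArg (fun Z => (m (i (m (i Z) x0)) x1)) (e183 x0 x0)))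
  have e5941 : ∀ x0 x1 x2, (m x0 (m (m x1 (m (i (i (m (i (i (m (i x1) (i (i x1))))) (i x1)))) x1)) x2)) = (m x0 (m x1 x2)) := fun x0 x1 x2 => (((((((e1472 x0 (m (m x1 (m (i (i (m (i (i (m (i x1) (i (i x1))))) (i x1)))) x1)) x2)).symm.trans (congrArg (fun Z => (m x0 (i (m (i (i (m (i (m (m x1 (m (i (i (m (i (i (m (i x1) (i (i x1))))) (i x1)))) x1)) x2)) (i (i (m (m x1 (m (i (i (m (i (i (m (i x1) (i (i x1))))) (i x1)))) x1)) x2)))))) Z)))) (e3879 x1 x2))).trans (congrArg (fun Z => (m x0 (i (m (i Z) (i (m x1 x2)))))) (e66 (m x1 (m (i (i (m (i (i (m (i x1) (i (i x1))))) (i x1)))) x1)) x2 (i (m (m x1 (m (i (i (m (i (i (m (i x1) (i (i x1))))) (i x1)))) x1)) x2))))).trans (congrArg (fun Z => (m x0 Z)) (e66 (m (i (m (m x1 (m (i (i (m (i (i (m (i x1) (i (i x1))))) (i x1)))) x1)) x2)) (m x1 (m (i (i (m (i (i (m (i x1) (i (i x1))))) (i x1)))) x1))) x2 (m x1 x2)))).trans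 (congrArg (fun Z => (m x0 (m (m (m x1 x2) Z) x2))) (e3690 (i (m (m x1 (m (i (i (m (i (i (m (i x1) (i (i x1))))) (i x1)))) x1)) x2)) x1))).trans (congrArg (fun Z => (m x0 (m (m (m x1 x2) (m Z x1)) x2))) (e3879 x1 x2))).trans (e1535 x0 x1 x2))
  have e6081 : ∀ x0 x1 x2, (m (m (i x0) (i (m (m x1 x0) (m (i (m x1 x0)) x1)))) x2) = (m (m (i x0) (i x1)) x2) := fun x0 x1 x2 => (((((((((((e5155 (i x0) (i (m (m x1 x0) (m (i (m x1 x0)) x1))) x2).symm.trans (congrArg (fun Z => (m Z x2)) (e66 (m (i (m (i x0) (i (m (m x1 x0) (m (i (m x1 x0)) x1))))) (i x0)) (i (m (m x1 x0) (m (i (m x1 x0)) x1))) (m (i x0) (i (m (m x1 x0) (m (i (m x1 x0)) x1))))).symm)).trans (congrArg (fun Z => (m (i (m (i Z) (i (m (i x0) (i (m (m x1 x0) (m (i (m x1 x0)) x1))))))) x2)) (e66 (i x0) (i (m (m x1 x0) (m (i (m x1 x0)) x1))) (i (m (i x0) (i (m (m x1 x0) (m (i (m x1 x0)) x1)))))).symm)).trans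 (e5287 (i (m (i x0) (i (m (m x1 x0) (m (i (m x1 x0)) x1))))) x2).symm).trans (congrArg (fun Z => (m (m (i (i (m Z (i (i (i (m (i x0) (i (m (m x1 x0) (m (i (m x1 x0)) x1)))))))))) (i (i (m (i x0) (i (m (m x1 x0) (m (i (m x1 x0)) x1))))))) x2)) (e1390 x0 x1))).trans (congrArg (fun Z => (m (m (i (i (m (i (i (m (i x0) (i x1)))) (i Z)))) (i (i (m (i x0) (i (m (m x1 x0) (m (i (m x1 x0)) x1))))))) x2)) (e1390 x0 x1))).trans (congrArg (fun Z => (m (m (i (i (m (i (i (m (i x0) (i x1)))) (i (i (i (m (i x0) (i x1)))))))) Z) x2)) (e1390 x0 x1))).trans (e5287 (i (m (i x0) (i x1))) x2)).trans (congrArg (fun Z => (m (i (m (i Z) (i (m (i x0) (i x1))))) x2)) (e66 (i x0) (i x1) (i (m (i x0) (i x1)))))).trans (congrArg (fun Z => (m Z x2)) (e66 (m (i (m (i x0) (i x1))) (i x0)) (i x1) (m (i x0) (i x1))))).trans (e5155 (i x0) (i x1) x2))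
  have e6317 : ∀ x0, (i (m (m x0 (m (i (m (i x0) x0)) (i x0))) (i (i x0)))) = (m (m (i x0) (i (i x0))) (i x0)) := fun x0 => ((e124 (i x0) x0 (m (i (m (i x0) x0)) (i x0))).symm.trans (e6081 x0 (i x0) (i x0)))
  have e7292 : ∀ x0 x1 x2, (m (m x0 (i (m (m x1 (i x0)) (m (i (m x1 (i x0))) x1)))) x2) = (m (m x0 (i x1)) x2) := fun x0 x1 x2 => (((e66 (i (m (m x1 (i x0)) (m (i (m x1 (i x0))) x1))) x2 x0).symm.trans (e2182 x1 (i x0) x2)).trans (e66 (i x1) x2 x0))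
  have e7295 : ∀ x0 x1 x2, (i (m (m (m x0 (m x1 x2)) (m (i (m x1 x2)) x1)) x2)) = (i (m (i (m (i x1) (i x0))) x2)) := fun x0 x1 x2 => ((congrArg (fun Z => (i (m Z x2))) (e66 (m x1 x2) (m (i (m x1 x2)) x1) x0).symm).trans (e2182 x1 x2 (i x0)))
  have e7811 : ∀ x0 x1 x2 x3, (i (m (m (m x0 (m (m x1 x2) (m (i (m x1 x2)) x1))) x2) x3)) = (i (m (m (m x0 x1) x2) x3)) := fun x0 x1 x2 x3 => (((((((congrArg (fun Z => (i (m Z x3))) (e66 (m (m x1 x2) (m (i (m x1 x2)) x1)) x2 x0).symm).trans (e7295 x0 (m (m (m x1 x2) (m (i (m x1 x2)) x1)) x2) x3).symm).trans (congrArg (fun Z => (i (m (m (m x0 (m (m (m (m x1 x2) (m (i (m x1 x2)) x1)) x2) x3)) (m Z (m (m (m x1 x2) (m (i (m x1 x2)) x1)) x2))) x3))) (e1157 x1 x2 x3))).trans (congrArg (fun Z => (i (m (m Z (m (i (m (m x1 x2) x3)) (m (m (m x1 x2) (m (i (m x1 x2)) x1)) x2))) x3))) (e3701 x0 x1 x2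 x3))).trans (congrArg (fun Z => (i (m (m (m x0 (m (m x1 x2) x3)) Z) x3))) (e1535 (i (m (m x1 x2) x3)) x1 x2))).trans (e7295 x0 (m x1 x2) x3)).trans (congrArg (fun Z => (i (m Z x3))) (e66 x1 x2 x0)))
  have e7881 : ∀ x0 x1, (m (m (m (i x0) (m x0 (i x0))) (i (i x0))) (i x1)) = (m (m (i x0) (i (i x0))) (i x1)) := fun x0 x1 => (((((((e66 (i (i x0)) (i x1) (m (i x0) (m x0 (i x0)))).symm.trans (e7295 x1 (i x0) (i (m (i x0) (m x0 (i x0))))).symm).trans (congrArg (fun Z => (i Z)) (e473 (m x1 (m (i x0) (i (m (i x0) (m x0 (i x0)))))) (i (m (i x0) (i (m (i x0) (m x0 (i x0)))))) x0))).trans (e102 x1 (m (i x0) (i (m (i x0) (m x0 (i x0))))) (m (i (m (i x0) (i (m (i x0) (m x0 (i x0)))))) (i x0)) (i x0))).trans (congrArg (fun Z => (m (m (i x0) (i (m Z (m (i (m (i x0) (i (m (i x0) (m x0 (i x0)))))) (i x0))))) (i x1))) (e1611 x0))).trans (congrArg (fun Z => (m (m (i x0) (i (m (m (i x0) (i (i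 x0))) (m Z (i x0))))) (i x1))) (e296 x0))).trans (e7292 (i x0) (i x0) (i x1)))
  have e8224 : ∀ x0 x1, (m (m (m (i x0) (m x0 (i x0))) (i (i x0))) x1) = (m (m (i x0) (i (i x0))) x1) := fun x0 x1 => (((e1234 (m (i x0) (m x0 (i x0))) (i (i x0)) x1).symm.trans (e7881 x0 (m (i (i (m (i x1) (i (i x1))))) (i x1)))).trans (e1234 (i x0) (i (i x0)) x1))
  have e8356 : ∀ x0 x1, (m (m (m x0 (m (i (m (i (i (m x0 (i x0)))) x0)) x0)) (i x0)) x1) = (m (m x0 (i x0)) x1) := fun x0 x1 => ((((((((congrArg (fun Z => (m (m (m x0 Z) (i x0)) x1)) (e5287 x0 x0).symm).trans (congrArg (fun Z => (m Z x1)) (e4189 x0 (m (m (i (i (m (i x0) (i (i x0))))) (i x0)) x0) (i x0)).symm)).trans (e1156 x0 (m (m (i (i (m (i x0) (i (i x0))))) (i x0)) x0) (i (i (m (i (i (m (i x0) (i (i x0))))) (i x0)))) x1).symm).trans (congrArg (fun Z => (m (m (m (i (m (i (i (m (i x0) (i (i x0))))) (i x0))) Z) (i (i (m (i (i (m (i x0)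 (i (i x0))))) (i x0))))) x1)) (e1234 (i (i (m (i x0) (i (i x0))))) (i x0) x0).symm)).trans (e8224 (m (i (i (m (i x0) (i (i x0))))) (i x0)) x1)).trans (e4418 (i x0) (i (i (m (i (i (m (i x0) (i (i x0))))) (i x0)))) x1)).trans (e66 (i (i (m (i (i (m (i x0) (i (i x0))))) (i x0)))) x1 x0)).trans (congrArg (fun Z => (m Z x1)) (e4318 x0 (i x0))))
  have e8667 : ∀ x0 x1, (m (m x0 (i (i (m (i (m x1 (i x1))) x1)))) (i x1)) = (i (m (m x1 (i x1)) (i x0))) := fun x0 x1 => (((congrArg (fun Z => (m (m x0 Z) (i x1))) (e3919 x1 x1 (i x1)).symm).trans (e102 x1 (m (i (m (i (i (m x1 (i x1)))) x1)) x1) (i x1) x0).symm).trans (congrArg (fun Z => (i Z)) (e8356 x1 (i x0))))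
  have e8886 : ∀ x0 x1, (i (m (i (m (i (i (m (i (m x0 (i x0))) x0))) (i x0))) x1)) = (i (m (m x0 (i x0)) x1)) := fun x0 x1 => (((e706 x1 (i (i (m (i (m x0 (i x0))) x0))) (i x0)).symm.trans (e8667 (m (i (i (m (i x1) (i (i x1))))) (i x1)) x0)).trans (e1190 (m x0 (i x0)) x1))
  have e9015 : ∀ x0 x1 x2, (m (m x0 (i (m (i (i (m (i (m x1 (i x1))) x1))) (i x1)))) x2) = (m (m x0 (m x1 (i x1))) x2) := fun x0 x1 x2 => (((e66 (i (m (i (i (m (i (m x1 (i x1))) x1))) (i x1))) x2 x0).symm.trans (congrArg (fun Z => (i (m Z (i x0)))) (e8886 x1 x2))).trans (e66 (m x1 (i x1)) x2 x0))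
  have e9871 : ∀ x0 x1 x2, (i (i (m (i x0) (i (m x1 (m (m x2 x0) (m (i (m x2 x0)) x2))))))) = (i (i (m (i x0) (i (m x1 x2))))) := fun x0 x1 x2 => (((congrArg (fun Z => (i Z)) (e76 (m x1 (m (m x2 x0) (m (i (m x2 x0)) x2))) x0).symm).trans (e7811 x1 x2 x0 (m (i x0) x0))).trans (congrArg (fun Z => (i Z)) (e76 (m x1 x2) x0)))
  have e15508 : ∀ x0 x1 x2, (m (m (m (i x0) (m x0 (i x0))) (i (m x1 (i x0)))) x2) = (m (m (i x0) (i (m x1 (i x0)))) x2) := fun x0 x1 x2 => (((e1234 (m (i x0) (m x0 (i x0))) (i (m x1 (i x0))) x2).symm.trans (e477 x0 x1 (m (i (i (m (i x2) (i (i x2))))) (i x2)))).trans (e1234 (i x0) (i (m x1 (i x0))) x2))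
  have e15723 : ∀ x0 x1 x2 x3, (m (m (m (i x0) (m x0 (i x0))) (m (m x0 x1) x2)) x3) = (m (m (i x0) (m (m x0 x1) x2)) x3) := fun x0 x1 x2 x3 => (((congrArg (fun Z => (m (m (m (i x0) (m x0 (i x0))) Z) x3)) (e66 x1 x2 x0).symm).trans (e15508 x0 (i (m x1 x2)) x3)).trans (congrArg (fun Z => (m (m (i x0) Z) x3)) (e66 x1 x2 x0)))
  have e15886 : ∀ x0 x1, (m (m (m (i x0) (m x0 (i x0))) (m x0 (i x0))) x1) = (m (m (i x0) (m x0 (i x0))) x1) := fun x0 x1 => (((e9015 (m (i x0) (m x0 (i x0))) x0 x1).symm.trans (e15508 x0 (i (i (m (i (m x0 (i x0))) x0))) x1)).trans (e9015 (i x0) x0 x1))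
  have e16157 : ∀ x0 x1 x2, (m (m (m (i x0) (m x0 (i x0))) (m x0 x1)) x2) = (m (m (i x0) (m x0 x1)) x2) := fun x0 x1 x2 => (((congrArg (fun Z => (m (m (m (i x0) (m x0 (i x0))) Z) x2)) (hA (m x0 x1)).symm).trans (e15723 x0 x1 (m (i (m x0 x1)) (m x0 x1)) x2)).trans (congrArg (fun Z => (m (m (i x0) Z) x2)) (hA (m x0 x1))))
  have e16479 : ∀ x0 x1 x2, (m (m x0 (i (m (m x1 (i x1)) (m x1 x2)))) (i (i x1))) = (i (m (m (i x1) (m x1 x2)) (i x0))) := fun x0 x1 x2 => ((e102 (i x1) (m x1 (i x1)) (m x1 x2) x0).symm.trans (congrArg (fun Z => (i Z)) (e16157 x1 x2 (i x0))))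
  have e22374 : ∀ x0 x1, (m (i (m (i (i x0)) x1)) (i (m (i x0) (m x0 (i x0))))) = (m (i (m (i (i x0)) x1)) (i (i x0))) := fun x0 x1 => (((congrArg (fun Z => (m Z (i (m (i x0) (m x0 (i x0)))))) (e785 (i x0) x1).symm).trans (e3279 x0 (m (i (i (m (i x1) (i (i x1))))) (i x1)))).trans (congrArg (fun Z => (m Z (i (i x0)))) (e785 (i x0) x1)))
  have e22517 : ∀ x0, (m (i (i (i x0))) (i (m (i x0) (m x0 (i x0))))) = (m (i (i (i x0))) (i (i x0))) := fun x0 => (((congrArg (fun Z => (m (i Z) (i (m (i x0) (m x0 (i x0)))))) (hA (i (i x0))).symm).trans (e22374 x0 (m (i (i (i x0))) (i (i x0))))).trans (congrArg (fun Z => (m (i Z) (i (i x0)))) (hA (i (i x0)))))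
  have e23147 : ∀ x0 x1 x2 x3, (i (m (m x0 (m (i x1) (m x1 (i x1)))) (m (m x1 x2) x3))) = (i (m (m x0 (i x1)) (m (m x1 x2) x3))) := fun x0 x1 x2 x3 => (((congrArg (fun Z => (i (m (m x0 (m (i x1) (m x1 (i x1)))) Z))) (e66 x2 x3 x1).symm).trans (e3485 x0 x1 (i (m x2 x3)))).trans (congrArg (fun Z => (i (m (m x0 (i x1)) Z))) (e66 x2 x3 x1)))
  have e23613 : ∀ x0 x1 x2, (m (i (m x0 x1)) (i (m x2 (m (i x0) (m x0 (i x0)))))) = (m (i (m x0 x1)) (i (m x2 (i x0)))) := fun x0 x1 x2 => (((congrArg (fun Z => (m Z (i (m x2 (m (i x0) (m x0 (i x0))))))) (e1190 x0 x1).symm).trans (e3487 x0 (m (i (i (m (i x1) (i (i x1))))) (i x1)) x2)).trans (congrArg (fun Z => (m Z (i (m x2 (i x0))))) (e1190 x0 x1)))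
  have e23791 : ∀ x0 x1, (m (i x0) (i (m x1 (m (i x0) (m x0 (i x0)))))) = (m (i x0) (i (m x1 (i x0)))) := fun x0 x1 => (((congrArg (fun Z => (m (i Z) (i (m x1 (m (i x0) (m x0 (i x0))))))) (hA x0).symm).trans (e23613 x0 (m (i x0) x0) x1)).trans (congrArg (fun Z => (m (i Z) (i (m x1 (i x0))))) (hA x0)))
  have e24001 : ∀ x0 x1, (i (m (m x0 (m (i x1) (m x1 (i x1)))) (i (i x1)))) = (i (m (m x0 (i x1)) (i (i x1)))) := fun x0 x1 => (((e124 (i x1) x0 (m (i x1) (m x1 (i x1)))).symm.trans (congrArg (fun Z => (m Z (i x0))) (e23791 x1 (m (i x0) x0)))).trans (e124 (i x1) x0 (i x1)))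
  have e24095 : ∀ x0 x1, (i (i (m (i (m (m (i x0) (m x0 (i x0))) (i (i x0)))) x1))) = (i (i (m (i (m (i x0) (i (i x0)))) x1))) := fun x0 x1 => (((e787 (i x0) x1 (m (i x0) (m x0 (i x0)))).symm.trans (congrArg (fun Z => (m Z (i (i (i (m (i x1) (i (i x1)))))))) (e23791 x0 (i x1)))).trans (e787 (i x0) x1 (i x0)))
  have e24160 : ∀ x0 x1 x2, (m (m x0 (m x1 (m (i x2) (m x2 (i x2))))) (i (i x2))) = (m (m x0 (m x1 (i x2))) (i (i x2))) := fun x0 x1 x2 => (((e66 (m x1 (m (i x2) (m x2 (i x2)))) (i (i x2)) x0).symm.trans (congrArg (fun Z => (i (m Z (i x0)))) (e24001 x1 x2))).trans (e66 (m x1 (i x2)) (i (i x2)) x0))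
  have e25313 : ∀ x0 x1, (m (i (m (i (i (m (i (m x0 (i x0))) x0))) (i x0))) x1) = (m (m x0 (i x0)) x1) := fun x0 x1 => ((congrArg (fun Z => (m Z x1)) (e4007 x0 x0 x0 (i x0)).symm).trans (e8356 x0 x1))
  have e28689 : ∀ x0 x1 x2 x3, (m (m (i x0) (i (m x1 (m (m x2 x0) (m (i (m x2 x0)) x2))))) x3) = (m (m (i x0) (i (m x1 x2))) x3) := fun x0 x1 x2 x3 => (((((((((((e5155 (i x0) (i (m x1 (m (m x2 x0) (m (i (m x2 x0)) x2)))) x3).symm.trans (congrArg (fun Z => (m Z x3)) (e66 (m (i (m (i x0) (i (m x1 (m (m x2 x0) (m (i (m x2 x0)) x2)))))) (i x0)) (i (m x1 (m (m x2 x0) (m (i (m x2 x0)) x2)))) (m (i x0) (i (m x1 (m (m x2 x0) (m (i (m x2 x0)) x2)))))).symm)).trans (congrArg (fun Z => (m (i (m (i Z) (i (m (i x0) (i (m x1 (m (m x2 x0) (m (i (m x2 x0)) x2)))))))) x3)) (e66 (i x0) (i (m x1 (m (m x2 x0) (m (i (m x2 x0)) x2)))) (i (m (i x0) (i (m x1 (m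 (m x2 x0) (m (i (m x2 x0)) x2))))))).symm)).trans (e5287 (i (m (i x0) (i (m x1 (m (m x2 x0) (m (i (m x2 x0)) x2)))))) x3).symm).trans (congrArg (fun Z => (m (m (i (i (m Z (i (i (i (m (i x0) (i (m x1 (m (m x2 x0) (m (i (m x2 x0)) x2))))))))))) (i (i (m (i x0) (i (m x1 (m (m x2 x0) (m (i (m x2 x0)) x2)))))))) x3)) (e9871 x0 x1 x2))).trans (congrArg (fun Z => (m (m (i (i (m (i (i (m (i x0) (i (m x1 x2))))) (i Z)))) (i (i (m (i x0) (i (m x1 (m (m x2 x0) (m (i (m x2 x0)) x2)))))))) x3)) (e9871 x0 x1 x2))).trans (congrArg (fun Z => (m (m (i (i (m (i (i (m (i x0) (i (m x1 x2))))) (i (i (i (m (i x0) (i (m x1 x2))))))))) Z) x3)) (e9871 x0 x1 x2))).trans (e5287 (i (m (i x0) (i (m x1 x2)))) x3)).trans (congrArg (fun Z => (m (i (m (i Z) (i (m (i x0) (i (m x1 x2)))))) x3)) (e66 (i x0) (i (m x1 x2)) (i (m (i x0) (i (m x1 x2))))))).trans (congrArg (fun Z => (m Z x3)) (e66 (m (i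 (m (i x0) (i (m x1 x2)))) (i x0)) (i (m x1 x2)) (m (i x0) (i (m x1 x2)))))).trans (e5155 (i x0) (i (m x1 x2)) x3))
  have e34491 : ∀ x0 x1 x2, (i (m (m x0 (m (i x1) (m x1 (i x1)))) (m x1 x2))) = (i (m (m x0 (i x1)) (m x1 x2))) := fun x0 x1 x2 => (((congrArg (fun Z => (i (m (m x0 (m (i x1) (m x1 (i x1)))) Z))) (hA (m x1 x2)).symm).trans (e23147 x0 x1 x2 (m (i (m x1 x2)) (m x1 x2)))).trans (congrArg (fun Z => (i (m (m x0 (i x1)) Z))) (hA (m x1 x2))))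
  have e35021 : ∀ x0 x1 x2 x3, (m (m x0 (m x1 (m (i x2) (m x2 (i x2))))) (m x2 x3)) = (m (m x0 (m x1 (i x2))) (m x2 x3)) := fun x0 x1 x2 x3 => (((e66 (m x1 (m (i x2) (m x2 (i x2)))) (m x2 x3) x0).symm.trans (congrArg (fun Z => (i (m Z (i x0)))) (e34491 x1 x2 x3))).trans (e66 (m x1 (i x2)) (m x2 x3) x0))
  have e35072 : ∀ x0 x1 x2, (i (i (m (i (m (m (i x0) (m x0 (i x0))) (m x0 x1))) x2))) = (i (i (m (i (m (i x0) (m x0 x1))) x2))) := fun x0 x1 x2 => (((congrArg (fun Z => (i Z)) (e706 x2 (m (i x0) (m x0 (i x0))) (m x0 x1)).symm).trans (e34491 (m (i (i (m (i x2) (i (i x2))))) (i x2)) x0 x1)).trans (congrArg (fun Z => (i Z)) (e706 x2 (i x0) (m x0 x1))))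
  have e36372 : ∀ x0 x1 x2, (m x0 (m (i (m (m (i x1) (m x1 (i x1))) (i (i x1)))) x2)) = (m x0 (m (i (m (i x1) (i (i x1)))) x2)) := fun x0 x1 x2 => (((((((e1472 x0 (m (i (m (m (i x1) (m x1 (i x1))) (i (i x1)))) x2)).symm.trans (e3752 x0 (i (m (i (m (m (i x1) (m x1 (i x1))) (i (i x1)))) x2))).symm).trans (congrArg (fun Z => (m x0 (m (i (i (m Z (i (i (i (m (i (m (m (i x1) (m x1 (i x1))) (i (i x1)))) x2))))))) (i (i (m (i (m (m (i x1) (m x1 (i x1))) (i (i x1)))) x2)))))) (e24095 x1 x2))).trans (congrArg (fun Z => (m x0 (m (i (i (m (i (i (m (i (m (i x1) (i (i x1)))) x2))) (i Z)))) (i (i (m (i (m (m (i x1) (m x1 (i x1))) (i (i x1)))) x2)))))) (e24095 x1 x2))).trans (congrArg (fun Z => (m x0 (m (i (i (m (i (i (m (i (m (i x1) (i (i x1)))) x2))) (i (i (i (m (i (m (i x1) (i (i x1)))) x2))))))) Z))) (e24095 x1 x2))).trans (e3752 x0 (i (m (i (m (i x1) (i (i x1)))) x2)))).trans (e1472 x0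 (m (i (m (i x1) (i (i x1)))) x2)))
  have e37459 : ∀ x0 x1 x2, (i (m (m x0 (m (m x1 x2) (m (i (m x1 x2)) x1))) (i (i x2)))) = (i (m (m x0 x1) (i (i x2)))) := fun x0 x1 x2 => (((e124 (i x2) x0 (m (m x1 x2) (m (i (m x1 x2)) x1))).symm.trans (e28689 x2 (m (i x0) x0) x1 (i x0))).trans (e124 (i x2) x0 x1))
  have e37970 : ∀ x0 x1 x2 x3, (m (m x0 (m x1 (m (m x2 x3) (m (i (m x2 x3)) x2)))) (i (i x3))) = (m (m x0 (m x1 x2)) (i (i x3))) := fun x0 x1 x2 x3 => (((e66 (m x1 (m (m x2 x3) (m (i (m x2 x3)) x2))) (i (i x3)) x0).symm.trans (congrArg (fun Z => (i (m Z (i x0)))) (e37459 x1 x2 x3))).trans (e66 (m x1 x2) (i (i x3)) x0))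
  have e38932 : ∀ x0 x1 x2 x3, (m x0 (m (i (m (m (i x1) (m x1 (i x1))) (m x1 x2))) x3)) = (m x0 (m (i (m (i x1) (m x1 x2))) x3)) := fun x0 x1 x2 x3 => (((((((e1472 x0 (m (i (m (m (i x1) (m x1 (i x1))) (m x1 x2))) x3)).symm.trans (e3752 x0 (i (m (i (m (m (i x1) (m x1 (i x1))) (m x1 x2))) x3))).symm).trans (congrArg (fun Z => (m x0 (m (i (i (m Z (i (i (i (m (i (m (m (i x1) (m x1 (i x1))) (m x1 x2))) x3))))))) (i (i (m (i (m (m (i x1) (m x1 (i x1))) (m x1 x2))) x3)))))) (e35072 x1 x2 x3))).trans (congrArg (fun Z => (m x0 (m (i (i (m (i (i (m (i (m (i x1) (m x1 x2))) x3))) (i Z)))) (i (i (m (i (m (m (i x1) (m x1 (i x1))) (m x1 x2))) x3)))))) (e35072 x1 x2 x3))).trans (congrArg (fun Z => (m x0 (m (i (i (m (i (i (m (i (m (i x1) (m x1 x2))) x3))) (i (i (i (m (i (m (i x1) (m x1 x2))) x3))))))) Z))) (e35072 x1 x2 x3))).trans (e3752 x0 (i (m (i (m (i x1) (m x1 x2)))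 x3)))).trans (e1472 x0 (m (i (m (i x1) (m x1 x2))) x3)))
  have e39664 : ∀ x0 x1, (m x0 (m (m (i x1) (m x1 (i x1))) (i (i x1)))) = (m x0 (m (i x1) (i (i x1)))) := fun x0 x1 => (((((e1535 x0 (m (i x1) (m x1 (i x1))) (i (i x1))).symm.trans (congrArg (fun Z => (m x0 (m Z (i (i x1))))) (e36372 (m (m (i x1) (m x1 (i x1))) (i (i x1))) x1 (m (i x1) (m x1 (i x1)))))).trans (congrArg (fun Z => (m x0 Z)) (e24160 (m (m (i x1) (m x1 (i x1))) (i (i x1))) (i (m (i x1) (i (i x1)))) x1))).trans (congrArg (fun Z => (m x0 (m Z (i (i x1))))) (e8224 x1 (m (i (m (i x1) (i (i x1)))) (i x1))))).trans (e1535 x0 (i x1) (i (i x1))))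
  have e39983 : ∀ x0, (m (m (i x0) (m x0 (i x0))) (i (i x0))) = (m (i x0) (i (i x0))) := fun x0 => (((((hA (m (m (i x0) (m x0 (i x0))) (i (i x0)))).symm.trans (congrArg (fun Z => (m (m (m (i x0) (m x0 (i x0))) (i (i x0))) Z)) (e39664 (i (m (m (i x0) (m x0 (i x0))) (i (i x0)))) x0))).trans (e8224 x0 (m (i (m (m (i x0) (m x0 (i x0))) (i (i x0)))) (m (i x0) (i (i x0)))))).trans (e36372 (m (i x0) (i (i x0))) x0 (m (i x0) (i (i x0))))).trans (hA (m (i x0) (i (i x0)))))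
  have e40004 : ∀ x0 x1, (m x0 (i (m (i (i (m (i (m x1 (i x1))) x1))) (i x1)))) = (m x0 (m x1 (i x1))) := fun x0 x1 => (((((((((congrArg (fun Z => (m x0 Z)) (e4007 x1 x1 x1 (i x1)).symm).trans (congrArg (fun Z => (m x0 (m (m x1 Z) (i x1)))) (e5287 x1 x1).symm)).trans (congrArg (fun Z => (m x0 Z)) (e66 (m (m (i (i (m (i x1) (i (i x1))))) (i x1)) x1) (i x1) x1).symm)).trans (congrArg (fun Z => (m x0 Z)) (e4418 (i x1) (m (m (i (i (m (i x1) (i (i x1))))) (i x1)) x1) (i x1)).symm)).trans (congrArg (fun Z => (m x0 Z)) (e4189 (i (m (i (i (m (i x1) (i (i x1))))) (i x1))) (m (m (i (i (m (i x1) (i (i x1))))) (i x1)) x1) (i x1)).symm)).trans (congrArg (fun Z => (m x0 (m (m (i (m (i (i (m (i x1) (i (i x1))))) (i x1))) Z) (i (i (m (i (i (m (i x1) (i (i x1))))) (i x1))))))) (e1234 (i (i (m (i x1) (i (i x1))))) (i x1) x1).symm)).trans (e39664 x0 (m (i (i (m (i x1) (i (i x1))))) (i x1)))).trans (e3634 x0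 x1 (i (i (m (i (i (m (i x1) (i (i x1))))) (i x1)))))).trans (congrArg (fun Z => (m x0 Z)) (e4318 x1 (i x1))))
  have e40168 : ∀ x0, (i (i (m (i (i (m (i (m x0 (i x0))) x0))) (i x0)))) = (i (m x0 (i x0))) := fun x0 => (((((((((congrArg (fun Z => (i Z)) (e4007 x0 x0 x0 (i x0)).symm).trans (congrArg (fun Z => (i (m (m x0 Z) (i x0)))) (e5287 x0 x0).symm)).trans (congrArg (fun Z => (i (m (m x0 Z) (i x0)))) (e1234 (i (i (m (i x0) (i (i x0))))) (i x0) x0).symm)).trans (congrArg (fun Z => (i Z)) (e4189 x0 (m (m (i (i (m (i x0) (i (i x0))))) (i x0)) (i (m (i (i (m (i x0) (i (i x0))))) (i x0)))) (i x0)).symm)).trans (e3629 x0 (m (m (i (i (m (i x0) (i (i x0))))) (i x0)) (i (m (i (i (m (i x0) (i (i x0))))) (i x0)))) (i (i (m (i (i (m (i x0) (i (i x0))))) (i x0))))).symm).trans (congrArg (fun Z => (i Z)) (e39983 (m (i (i (m (i x0) (i (i x0))))) (i x0))))).trans (e66 (i (i (m (i x0) (i (i x0))))) (i x0) (i (m (i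 (i (m (i x0) (i (i x0))))) (i x0))))).trans (e183 (i (m (i (i (m (i x0) (i (i x0))))) (i x0))) x0)).trans (congrArg (fun Z => (i Z)) (e4318 x0 (i x0))))
  have e40606 : ∀ x0, (i (m (i (i (m (i (m x0 (i x0))) x0))) (i x0))) = (m x0 (i x0)) := fun x0 => (((((hA (i (m (i (i (m (i (m x0 (i x0))) x0))) (i x0)))).symm.trans (congrArg (fun Z => (m (i (m (i (i (m (i (m x0 (i x0))) x0))) (i x0))) Z)) (e40004 (i (i (m (i (i (m (i (m x0 (i x0))) x0))) (i x0)))) x0))).trans (e25313 x0 (m (i (i (m (i (i (m (i (m x0 (i x0))) x0))) (i x0)))) (m x0 (i x0))))).trans (congrArg (fun Z => (m (m x0 (i x0)) (m Z (m x0 (i x0))))) (e40168 x0))).trans (hA (m x0 (i x0))))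
  have e40868 : ∀ x0, (m (i (m (i (i (m (i x0) (i (i x0))))) (i x0))) (i x0)) = (m x0 (i x0)) := fun x0 => ((((((((e4318 (i (m (i (i (m (i x0) (i (i x0))))) (i x0))) (i x0)).symm.trans (e40606 (i (m (i (i (m (i x0) (i (i x0))))) (i x0)))).symm).trans (congrArg (fun Z => (i (m (i Z) (i (i (m (i (i (m (i x0) (i (i x0))))) (i x0))))))) (e785 (m (i (m (i (i (m (i x0) (i (i x0))))) (i x0))) (i (i (m (i (i (m (i x0) (i (i x0))))) (i x0))))) x0))).trans (congrArg (fun Z => (i Z)) (e4318 (i (i (m (i (m (i (m (i (i (m (i x0) (i (i x0))))) (i x0))) (i (i (m (i (i (m (i x0) (i (i x0))))) (i x0)))))) x0))) (i x0)))).trans (congrArg (fun Z => (i (m (i (i (m Z x0))) (i x0)))) (e66 (i (i (m (i x0) (i (i x0))))) (i x0) (i (m (i (i (m (i x0) (i (i x0))))) (i x0)))))).trans (congrArg (fun Z => (i (m (i (i Z)) (i x0)))) (e1156 x0 (i (i (m (i x0) (i (i x0))))) (i x0) x0))).trans (congrArg (fun Z => (i (m (i (i (m Z x0))) (i x0))))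 (e183 x0 x0))).trans (e40606 x0))
  have e42295 : ∀ x0 x1 x2, (m x0 (m (m (i x1) (m x1 (i x1))) (m x1 x2))) = (m x0 (m (i x1) (m x1 x2))) := fun x0 x1 x2 => (((((e1535 x0 (m (i x1) (m x1 (i x1))) (m x1 x2)).symm.trans (congrArg (fun Z => (m x0 (m Z (m x1 x2)))) (e38932 (m (m (i x1) (m x1 (i x1))) (m x1 x2)) x1 x2 (m (i x1) (m x1 (i x1)))))).trans (congrArg (fun Z => (m x0 Z)) (e35021 (m (m (i x1) (m x1 (i x1))) (m x1 x2)) (i (m (i x1) (m x1 x2))) x1 x2))).trans (congrArg (fun Z => (m x0 (m Z (m x1 x2)))) (e16157 x1 x2 (m (i (m (i x1) (m x1 x2))) (i x1))))).trans (e1535 x0 (i x1) (m x1 x2)))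
  have e42665 : ∀ x0 x1, (m (m (i x0) (m x0 (i x0))) (m x0 x1)) = (m (i x0) (m x0 x1)) := fun x0 x1 => (((((hA (m (m (i x0) (m x0 (i x0))) (m x0 x1))).symm.trans (congrArg (fun Z => (m (m (m (i x0) (m x0 (i x0))) (m x0 x1)) Z)) (e42295 (i (m (m (i x0) (m x0 (i x0))) (m x0 x1))) x0 x1))).trans (e16157 x0 x1 (m (i (m (m (i x0) (m x0 (i x0))) (m x0 x1))) (m (i x0) (m x0 x1))))).trans (e38932 (m (i x0) (m x0 x1)) x0 x1 (m (i x0) (m x0 x1)))).trans (hA (m (i x0) (m x0 x1))))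
  have e44063 : ∀ x0 x1, (m (i (m (i (i (m (i x0) (i (i x0))))) (i x0))) (i x1)) = (m x0 (i x1)) := fun x0 x1 => ((((((e75 (i (i (m (i x0) (i (i x0))))) (i x0) x1).symm.trans (congrArg (fun Z => (m (m (i (m (i (i (m (i x0) (i (i x0))))) (i x0))) (i x1)) (m Z (m (i (m (i (i (m (i x0) (i (i x0))))) (i x0))) (i x1))))) (e183 x1 x0))).trans (e4418 (i x0) (i x1) (m (i (m x0 (i x1))) (m (i (m (i (i (m (i x0) (i (i x0))))) (i x0))) (i x1))))).trans (e66 (i x1) (m (i (m x0 (i x1))) (m (i (m (i (i (m (i x0) (i (i x0))))) (i x0))) (i x1))) x0)).trans (congrArg (fun Z => (m (m x0 (i x1)) Z)) (e3634 (i (m x0 (i x1))) x0 (i x1)))).trans (hA (m x0 (i x1))))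
  have e44385 : ∀ x0 x1, (m (i (m (i (i (m (i x0) (i (i x0))))) (i x0))) x1) = (m x0 x1) := fun x0 x1 => (((e1472 (i (m (i (i (m (i x0) (i (i x0))))) (i x0))) x1).symm.trans (e44063 x0 (m (i (i (m (i x1) (i (i x1))))) (i x1)))).trans (e1472 x0 x1))
  have e44539 : ∀ x0 x1 x2, (m (m (m x0 (m (i (i (m (i (i (m (i x0) (i (i x0))))) (i x0)))) x0)) x1) x2) = (m (m x0 x1) x2) := fun x0 x1 x2 => (((((((e44385 (m (m x0 (m (i (i (m (i (i (m (i x0) (i (i x0))))) (i x0)))) x0)) x1) x2).symm.trans (congrArg (fun Z => (m (i (m (i (i (m (i (m (m x0 (m (i (i (m (i (i (m (i x0) (i (i x0))))) (i x0)))) x0)) x1)) (i (i (m (m x0 (m (i (i (m (i (i (m (i x0) (i (i x0))))) (i x0)))) x0)) x1)))))) Z)) x2)) (e3879 x0 x1))).trans (congrArg (fun Z => (m (i (m (i Z) (i (m x0 x1)))) x2)) (e66 (m x0 (m (i (i (m (i (i (m (i x0) (i (i x0))))) (i x0)))) x0)) x1 (i (m (m x0 (m (i (i (m (i (i (m (i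 x0) (i (i x0))))) (i x0)))) x0)) x1))))).trans (congrArg (fun Z => (m Z x2)) (e66 (m (i (m (m x0 (m (i (i (m (i (i (m (i x0) (i (i x0))))) (i x0)))) x0)) x1)) (m x0 (m (i (i (m (i (i (m (i x0) (i (i x0))))) (i x0)))) x0))) x1 (m x0 x1)))).trans (congrArg (fun Z => (m (m (m (m x0 x1) Z) x1) x2)) (e3690 (i (m (m x0 (m (i (i (m (i (i (m (i x0) (i (i x0))))) (i x0)))) x0)) x1)) x0))).trans (congrArg (fun Z => (m (m (m (m x0 x1) (m Z x0)) x1) x2)) (e3879 x0 x1))).trans (e5155 x0 x1 x2))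
  have e45576 : ∀ x0 x1, (m (m x0 (m (i (i (m (i (i (m (i x0) (i (i x0))))) (i x0)))) x0)) x1) = (m x0 x1) := fun x0 x1 => (((((hA (m (m x0 (m (i (i (m (i (i (m (i x0) (i (i x0))))) (i x0)))) x0)) x1)).symm.trans (e44539 x0 x1 (m (i (m (m x0 (m (i (i (m (i (i (m (i x0) (i (i x0))))) (i x0)))) x0)) x1)) (m (m x0 (m (i (i (m (i (i (m (i x0) (i (i x0))))) (i x0)))) x0)) x1)))).trans (congrArg (fun Z => (m (m x0 x1) Z)) (e5941 (i (m (m x0 (m (i (i (m (i (i (m (i x0) (i (i x0))))) (i x0)))) x0)) x1)) x0 x1))).trans (congrArg (fun Z => (m (m x0 x1) (m Z (m x0 x1)))) (e3879 x0 x1))).trans (hA (m x0 x1)))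
  have e45920 : ∀ x0 x1 x2, (m (m x0 x1) (m (i (m x0 x1)) (m x2 (m (i x2) (m x0 x1))))) = (m x2 (m (i x2) (m x0 x1))) := fun x0 x1 x2 => ((((((((congrArg (fun Z => (m (m x0 x1) (m Z (m x2 (m (i x2) (m x0 x1)))))) (e3879 x0 x1).symm).trans (congrArg (fun Z => (m (m x0 x1) (m (i Z) (m x2 (m (i x2) (m x0 x1)))))) (e66 (m (i (i (m (i (i (m (i x0) (i (i x0))))) (i x0)))) x0) x1 x0).symm)).trans (e44539 x0 x1 (m (i (i (m (i (m (m (i (i (m (i (i (m (i x0) (i (i x0))))) (i x0)))) x0) x1)) (i x0)))) (m x2 (m (i x2) (m x0 x1))))).symm).trans (congrArg (fun Z => (m Z (m (i (i (m (i (m (m (i (i (m (i (i (m (i x0) (i (i x0))))) (i x0)))) x0) x1)) (i x0)))) (m x2 (m (i x2) (m x0 x1)))))) (e66 (m (i (i (m (i (i (m (i x0) (i (i x0))))) (i x0)))) x0) x1 x0).symm)).trans (congrArg (fun Z => (m (i (m (i (m (m (i (i (m (i (i (m (i x0) (i (i x0))))) (i x0)))) x0) x1)) (i x0))) (m (i (i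 (m (i (m (m (i (i (m (i (i (m (i x0) (i (i x0))))) (i x0)))) x0) x1)) (i x0)))) (m x2 (m (i x2) Z))))) (e45576 x0 x1).symm)).trans (e3 (m (i (i (m (i (i (m (i x0) (i (i x0))))) (i x0)))) x0) x1 x0 x2)).trans (congrArg (fun Z => (m x2 (m (i x2) Z))) (e66 (m (i (i (m (i (i (m (i x0) (i (i x0))))) (i x0)))) x0) x1 x0))).trans (congrArg (fun Z => (m x2 Z)) (e5941 (i x2) x0 x1)))
  have e46102 : ∀ x0 x1, (m x0 (m (i x0) (m x1 (m (i x1) x0)))) = (m x1 (m (i x1) x0)) := fun x0 x1 => (((((congrArg (fun Z => (m x0 (m (i x0) (m x1 (m (i x1) Z))))) (hA x0).symm).trans (congrArg (fun Z => (m x0 (m (i Z) (m x1 (m (i x1) (m x0 (m (i x0) x0))))))) (hA x0).symm)).trans (congrArg (fun Z => (m Z (m (i (m x0 (m (i x0) x0))) (m x1 (m (i x1) (m x0 (m (i x0) x0))))))) (hA x0).symm)).trans (e45920 x0 (m (i x0) x0) x1)).trans (congrArg (fun Z => (m x1 (m (i x1) Z))) (hA x0)))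
  have e46103 : ∀ x0, (m (m (i (i x0)) (i x0)) (m (i (m (i (i x0)) (i x0))) (m x0 (i x0)))) = (m x0 (i x0)) := fun x0 => (((congrArg (fun Z => (m (m (i (i x0)) (i x0)) (m (i (m (i (i x0)) (i x0))) (m x0 Z)))) (hA (i x0)).symm).trans (e45920 (i (i x0)) (i x0) x0)).trans (congrArg (fun Z => (m x0 Z)) (hA (i x0))))
  have e46385 : ∀ x0 x1 x2, (m (m x0 x1) (m (i x1) (m x2 (m (i x2) x1)))) = (m (m x0 x2) (m (i x2) x1)) := fun x0 x1 x2 => (((e66 x1 (m (i x1) (m x2 (m (i x2) x1))) x0).symm.trans (congrArg (fun Z => (i (m (i Z) (i x0)))) (e46102 x1 x2))).trans (e66 x2 (m (i x2) x1) x0))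
  have e46394 : ∀ x0 x1 x2, (m (m x0 (i (m (m (i x1) x2) (m (i x2) x1)))) (i x1)) = (i (m (m x2 (m (i x2) x1)) (i x0))) := fun x0 x1 x2 => ((((((congrArg (fun Z => (m (m x0 (i Z)) (i x1))) (e66 x2 (m (i x2) x1) (i x1)).symm).trans (congrArg (fun Z => (m (m x0 (i Z)) (i x1))) (e76 (i x1) (m x2 (m (i x2) x1))).symm)).trans (congrArg (fun Z => (m (m x0 (i (m (m (i x1) (m x2 (m (i x2) x1))) (m (i (m x2 (m (i x2) x1))) Z)))) (i x1))) (e46102 x1 x2).symm)).trans (congrArg (fun Z => (m (m x0 (i (m (m (i x1) (m x2 (m (i x2) x1))) (m (i Z) (m x1 (m (i x1) (m x2 (m (i x2) x1)))))))) (i x1))) (e46102 x1 x2).symm)).trans (e123 x0 (m (i x1) (m x2 (m (i x2) x1))) x1)).trans (congrArg (fun Z => (i (m Z (i x0)))) (e46102 x1 x2)))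
  have e46509 : ∀ x0, (m (i (m (i x0) (m x0 (i x0)))) (m (i (i (m (i x0) (m x0 (i x0))))) (i (i x0)))) = (i (i x0)) := fun x0 => (((((congrArg (fun Z => (m (i (m (i x0) (m x0 (i x0)))) (m (i (i (m (i x0) (m x0 (i x0))))) Z))) (hA (i (i x0))).symm).trans (congrArg (fun Z => (m (i (m (i x0) (m x0 (i x0)))) (m (i (i (m (i x0) (m x0 (i x0))))) (m (i (i x0)) Z)))) (e22517 x0).symm)).trans (e46102 (i (m (i x0) (m x0 (i x0)))) (i (i x0)))).trans (congrArg (fun Z => (m (i (i x0)) Z)) (e22517 x0))).trans (hA (i (i x0))))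
  have e46563 : ∀ x0 x1, (m (m (m x0 x1) (m (i (m x0 x1)) x0)) (i (i x1))) = (m x0 (i (i x1))) := fun x0 x1 => (((congrArg (fun Z => (m Z (i (i x1)))) (e46102 x0 (m x0 x1)).symm).trans (e37970 x0 (i x0) x0 x1)).trans (congrArg (fun Z => (m Z (i (i x1)))) (hA x0)))
  have e46590 : ∀ x0 x1 x2, (m (m x0 (m (m x1 x2) (m (i (m x1 x2)) x1))) (i (i x2))) = (m (m x0 x1) (i (i x2))) := fun x0 x1 x2 => (((e66 (m (m x1 x2) (m (i (m x1 x2)) x1)) (i (i x2)) x0).symm.trans (congrArg (fun Z => (i (m (i Z) (i x0)))) (e46563 x1 x2))).trans (e66 x1 (i (i x2)) x0))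
  have e46889 : ∀ x0 x1, (m (m x0 (m (i (i x1)) (i x1))) (m (i (m (i (i x1)) (i x1))) (m x1 (i x1)))) = (m (m x0 x1) (i x1)) := fun x0 x1 => (((congrArg (fun Z => (m (m x0 (m (i (i x1)) (i x1))) (m (i (m (i (i x1)) (i x1))) (m x1 Z)))) (hA (i x1)).symm).trans (e46385 x0 (m (i (i x1)) (i x1)) x1)).trans (congrArg (fun Z => (m (m x0 x1) Z)) (hA (i x1))))
  have e46909 : ∀ x0 x1 x2 x3, (m (m x0 (m x1 x2)) (m (i x2) (m x3 (m (i x3) x2)))) = (m (m x0 (m x1 x3)) (m (i x3) x2)) := fun x0 x1 x2 x3 => (((e66 (m x1 x2) (m (i x2) (m x3 (m (i x3) x2))) x0).symm.trans (congrArg (fun Z => (i (m (i Z) (i x0)))) (e46385 x1 x2 x3))).trans (e66 (m x1 x3) (m (i x3) x2) x0))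
  have e49042 : ∀ x0 x1 x2, (i (m (m (m x0 (m (i x0) x1)) (m (i x1) x0)) x2)) = (i (m (m x1 (m (i x1) x0)) x2)) := fun x0 x1 x2 => ((((congrArg (fun Z => (i (m Z x2))) (e66 (m (i x0) x1) (m (i x1) x0) x0).symm).trans (e706 x2 (i (m (m (i x0) x1) (m (i x1) x0))) (i x0)).symm).trans (e46394 (m (i (i (m (i x2) (i (i x2))))) (i x2)) x0 x1)).trans (e1190 (m x1 (m (i x1) x0)) x2))
  have e49401 : ∀ x0 x1, (i (m (m (m x0 (m (i x0) x1)) (i x1)) x0)) = (i (m (m x1 (i x1)) x0)) := fun x0 x1 => (((((congrArg (fun Z => (i Z)) (e66 (i x1) x0 (m x0 (m (i x0) x1))).symm).trans (congrArg (fun Z => (i Z)) (e76 (m x0 (m (i x0) x1)) (m (i x1) x0)).symm)).trans (e49042 x0 x1 (m (i (m (i x1) x0)) (m (i x1) x0)))).trans (congrArg (fun Z => (i Z)) (e76 x1 (m (i x1) x0)))).trans (congrArg (fun Z => (i Z)) (e66 (i x1) x0 x1)))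
  have e50048 : ∀ x0 x1 x2, (m (m x0 (i (m (i x1) x2))) (i (m x2 (m (i x2) x1)))) = (m (m x0 (i (m (i x1) x2))) (i x1)) := fun x0 x1 x2 => ((((((((e102 (m x2 (m (i x2) x1)) (i x1) x2 x0).symm.trans (e183 x0 (m (m (m x2 (m (i x2) x1)) (i x1)) x2)).symm).trans (congrArg (fun Z => (m (m x0 (i (i (m Z (i (i (m (m (m x2 (m (i x2) x1)) (i x1)) x2))))))) (i (m (m (m x2 (m (i x2) x1)) (i x1)) x2)))) (e49401 x2 x1))).trans (congrArg (fun Z => (m (m x0 (i Z)) (i (m (m (m x2 (m (i x2) x1)) (i x1)) x2)))) (e66 (m x1 (i x1)) x2 (i (m (m (m x2 (m (i x2) x1)) (i x1)) x2))))).trans (congrArg (fun Z => (m (m x0 (i (m (m Z (m x1 (i x1))) x2))) (i (m (m (m x2 (m (i x2) x1)) (i x1)) x2)))) (e49401 x2 x1))).trans (congrArg (fun Z => (m (m x0 (i (m (m (i (m (m x1 (i x1)) x2)) (m x1 (i x1))) x2))) Z)) (e49401 x2 x1))).trans (e201 x0 (m x1 (i x1)) x2)).trans (e102 x1 (i x1)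 x2 x0))
  have e52563 : ∀ x0 x1, (m (m x0 (m (i x0) x1)) (m (i x1) x0)) = (m x1 (m (i x1) x0)) := fun x0 x1 => (((e46909 x0 (i x0) x0 x1).symm.trans (congrArg (fun Z => (m Z (m (i x0) (m x1 (m (i x1) x0))))) (hA x0))).trans (e46102 x0 x1))
  have e52999 : ∀ x0 x1, (m (m (m x0 (m (i x0) x1)) (i x1)) x0) = (m (m x1 (i x1)) x0) := fun x0 x1 => (((((e66 (i x1) x0 (m x0 (m (i x0) x1))).symm.trans (e76 (m x0 (m (i x0) x1)) (m (i x1) x0)).symm).trans (congrArg (fun Z => (m Z (m (i (m (i x1) x0)) (m (i x1) x0)))) (e52563 x0 x1))).trans (e76 x1 (m (i x1) x0))).trans (e66 (i x1) x0 x1))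
  have e53316 : ∀ x0 x1, (m (m (m x0 (m (i x0) (i (m (i (i (m x1 (i x1)))) x1)))) x1) x0) = (i (m (i (m x1 x0)) x1)) := fun x0 x1 => (((((congrArg (fun Z => (m (m (m x0 Z) x1) x0)) (e3752 (i x0) x1).symm).trans (e1155 (m x0 (m (i x0) (m (i (i (m (i x1) (i (i x1))))) (i x1)))) x1 x0).symm).trans (e52999 x0 (m (i (i (m (i x1) (i (i x1))))) (i x1)))).trans (e706 x1 (i (m (i (i (m (i x1) (i (i x1))))) (i x1))) x0)).trans (congrArg (fun Z => (i (m Z x1))) (e1056 x1 x0)))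
  have e56866 : ∀ x0 x1 x2, (m (i (m (m (i x0) x1) (i x2))) (i (m x1 (m (i x1) x0)))) = (m (i (m (m (i x0) x1) (i x2))) (i x0)) := fun x0 x1 x2 => (((congrArg (fun Z => (m Z (i (m x1 (m (i x1) x0))))) (e183 x2 (m (i x0) x1)).symm).trans (e50048 (m x2 (i (i (m (i (m (i x0) x1)) (i (i (m (i x0) x1))))))) x0 x1)).trans (congrArg (fun Z => (m Z (i x0))) (e183 x2 (m (i x0) x1))))
  have e58493 : ∀ x0, (i (m (i (m (i x0) x0)) (m (i x0) (m x0 (i x0))))) = (m (m x0 (i x0)) x0) := fun x0 => ((((((((congrArg (fun Z => (i (m (i Z) (m (i x0) (m x0 (i x0)))))) (e251 x0).symm).trans (e53316 x0 (m (i x0) (m x0 (i x0)))).symm).trans (e294 (m x0 (m (i x0) (i (m (i (i (m (m (i x0) (m x0 (i x0))) (i (m (i x0) (m x0 (i x0))))))) (m (i x0) (m x0 (i x0))))))) x0)).trans (congrArg (fun Z => (m (m (m x0 Z) (i x0)) x0)) (e23791 x0 (i (i (m (m (i x0) (m x0 (i x0))) (i (m (i x0) (m x0 (i x0)))))))))).trans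 (congrArg (fun Z => (m (m (m x0 (m (i x0) (i (m (i (i Z)) (i x0))))) (i x0)) x0)) (e473 (i x0) x0 x0))).trans (congrArg (fun Z => (m (m (m x0 (m (i x0) (i (m (i (i Z)) (i x0))))) (i x0)) x0)) (e39983 x0))).trans (e53316 x0 (i x0))).trans (e66 (i x0) x0 x0))
  have e58952 : ∀ x0 x1, (m (m x0 (i (m (i x1) x1))) (m (i x1) (m x1 (i x1)))) = (m (m x0 (i (m (i x1) x1))) (i x1)) := fun x0 x1 => (((e66 (i (m (i x1) x1)) (m (i x1) (m x1 (i x1))) x0).symm.trans (congrArg (fun Z => (i (m Z (i x0)))) (e58493 x1))).trans (e102 x1 (i x1) x1 x0))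
  have e63958 : ∀ x0 x1, (m (i (m (m (i x0) x0) (i x1))) (m (i x0) (m x0 (i x0)))) = (m (i (m (m (i x0) x0) (i x1))) (i x0)) := fun x0 x1 => (((congrArg (fun Z => (m Z (m (i x0) (m x0 (i x0))))) (e183 x1 (m (i x0) x0)).symm).trans (e58952 (m x1 (i (i (m (i (m (i x0) x0)) (i (i (m (i x0) x0))))))) x0)).trans (congrArg (fun Z => (m Z (i x0))) (e183 x1 (m (i x0) x0))))
  have e72625 : ∀ x0, (m (i x0) (m (i (m (i (i x0)) (i x0))) (m x0 (i x0)))) = (m (m (i x0) x0) (i x0)) := fun x0 => ((congrArg (fun Z => (m Z (m (i (m (i (i x0)) (i x0))) (m x0 (i x0))))) (hA (i x0)).symm).trans (e46889 (i x0) x0))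
  have e72862 : ∀ x0 x1, (m (m x0 (i x1)) (m (i (m (i (i x1)) (i x1))) (m x1 (i x1)))) = (m (m x0 (m (i x1) x1)) (i x1)) := fun x0 x1 => (((e66 (i x1) (m (i (m (i (i x1)) (i x1))) (m x1 (i x1))) x0).symm.trans (congrArg (fun Z => (i (m (i Z) (i x0)))) (e72625 x1))).trans (e66 (m (i x1) x1) (i x1) x0))
  have e73120 : ∀ x0, (m (m (i (i x0)) (m (i x0) x0)) (i x0)) = (m x0 (i x0)) := fun x0 => ((((e16157 (i x0) x0 (i x0)).symm.trans (e72862 (m (i (i x0)) (m (i x0) (i (i x0)))) x0).symm).trans (congrArg (fun Z => (m Z (m (i (m (i (i x0)) (i x0))) (m x0 (i x0))))) (e251 (i x0)))).trans (e46103 x0))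
  have e73205 : ∀ x0, (m (i (m (i (i (m (i x0) x0))) (i x0))) (i x0)) = (m x0 (i x0)) := fun x0 => ((((((congrArg (fun Z => (m (i (m (i (i (m (i Z) x0))) (i x0))) (i x0))) (hA x0).symm).trans (congrArg (fun Z => (m Z (i x0))) (e4007 x0 x0 x0 (m (i x0) x0)).symm)).trans (e72862 (m x0 (m (i (m (i (i (m x0 (i x0)))) x0)) x0)) x0).symm).trans (e8356 x0 (m (i (m (i (i x0)) (i x0))) (m x0 (i x0))))).trans (e72862 x0 x0)).trans (congrArg (fun Z => (m Z (i x0))) (hA x0)))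
  have e73649 : ∀ x0, (m (m (m (i (i x0)) (m (i x0) x0)) (m (i x0) x0)) (i x0)) = (m x0 (i x0)) := fun x0 => ((((e72862 (m (i (i x0)) (m (i x0) x0)) x0).symm.trans (congrArg (fun Z => (m Z (m (i (m (i (i x0)) (i x0))) (m x0 (i x0))))) (e73120 x0))).trans (e72862 x0 x0)).trans (congrArg (fun Z => (m Z (i x0))) (hA x0)))
  have e73666 : ∀ x0, (m (m x0 (i (i (m (i x0) x0)))) (i x0)) = (i (m x0 (i x0))) := fun x0 => ((e66 (i (i (m (i x0) x0))) (i x0) x0).symm.trans (congrArg (fun Z => (i Z)) (e73205 x0)))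
  have e73669 : ∀ x0, (i (m (i (i x0)) (i (i (m (i (i (m (i x0) x0))) (i x0)))))) = (i (m (i (i x0)) (i x0))) := fun x0 => (((e76 (i (m (i (i (m (i x0) x0))) (i x0))) (i x0)).symm.trans (congrArg (fun Z => (m Z (m (i (i x0)) (i x0)))) (e73205 x0))).trans (e76 x0 (i x0)))
  have e73997 : ∀ x0 x1, (m (m x0 (m x1 (i (i (m (i x1) x1))))) (i x1)) = (i (m (i (i (m x1 (i x1)))) (i x0))) := fun x0 x1 => ((e66 (m x1 (i (i (m (i x1) x1)))) (i x1) x0).symm.trans (congrArg (fun Z => (i (m (i Z) (i x0)))) (e73666 x1)))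
  have e74495 : ∀ x0, (m (m x0 (i (i (m (i x0) (i (i x0)))))) (i (i (i x0)))) = (i (m x0 (i x0))) := fun x0 => (((congrArg (fun Z => (m (m x0 (i Z)) (i (i (i x0))))) (e76 (i x0) x0).symm).trans (e102 (i (i x0)) (m (i x0) x0) (m (i x0) x0) x0).symm).trans (congrArg (fun Z => (i Z)) (e73649 x0)))
  have e76369 : ∀ x0 x1, (m (m x0 (i (i x1))) (i (i (m (i (i (m (i x1) x1))) (i x1))))) = (m (m x0 (i (i x1))) (i x1)) := fun x0 x1 => (((e66 (i (i x1)) (i (i (m (i (i (m (i x1) x1))) (i x1)))) x0).symm.trans (congrArg (fun Z => (i (m Z (i x0)))) (e73669 x1))).trans (e66 (i (i x1)) (i x1) x0))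
  have e83793 : ∀ x0, (m x0 (i (i (m (i (i (m (i x0) x0))) (i x0))))) = (m x0 (i x0)) := fun x0 => (((((e44063 x0 (i (m (i (i (m (i x0) x0))) (i x0)))).symm.trans (e5287 (i x0) (i (i (m (i (i (m (i x0) x0))) (i x0))))).symm).trans (e76369 (i (i (m (i (i x0)) (i (i (i x0)))))) x0)).trans (e5287 (i x0) (i x0))).trans (e40868 x0))
  have e116911 : ∀ x0 x1 x2, (m (i (m (m (i x0) x1) x2)) (i (m x1 (m (i x1) x0)))) = (m (i (m (m (i x0) x1) x2)) (i x0)) := fun x0 x1 x2 => (((congrArg (fun Z => (m Z (i (m x1 (m (i x1) x0))))) (e1190 (m (i x0) x1) x2).symm).trans (e56866 x0 x1 (m (i (i (m (i x2) (i (i x2))))) (i x2)))).trans (congrArg (fun Z => (m Z (i x0))) (e1190 (m (i x0) x1) x2)))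
  have e117364 : ∀ x0 x1, (m (i (m (i x0) x1)) (i (m x1 (m (i x1) x0)))) = (m (i (m (i x0) x1)) (i x0)) := fun x0 x1 => (((congrArg (fun Z => (m (i Z) (i (m x1 (m (i x1) x0))))) (hA (m (i x0) x1)).symm).trans (e116911 x0 x1 (m (i (m (i x0) x1)) (m (i x0) x1)))).trans (congrArg (fun Z => (m (i Z) (i x0))) (hA (m (i x0) x1))))
  have e117871 : ∀ x0 x1, (m (i (m x0 x1)) (i (m x1 (m (i x1) (i (m (i (i (m x0 (i x0)))) x0)))))) = (m (i (m x0 x1)) x0) := fun x0 x1 => (((((congrArg (fun Z => (m (i (m x0 x1)) (i (m x1 Z)))) (e3752 (i x1) x0).symm).trans (congrArg (fun Z => (m Z (i (m x1 (m (i x1) (m (i (i (m (i x0) (i (i x0))))) (i x0))))))) (e1056 x0 x1).symm)).trans (e117364 (m (i (i (m (i x0) (i (i x0))))) (i x0)) x1)).trans (e1472 (i (m (i (m (i (i (m (i x0) (i (i x0))))) (i x0))) x1)) x0)).trans (congrArg (fun Z => (m Z x0)) (e1056 x0 x1)))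
  have e118515 : ∀ x0 x1, (m (i (m (i x0) (m x0 x1))) (m (i x0) (m x0 (i x0)))) = (m (i (m (i x0) (m x0 x1))) (i x0)) := fun x0 x1 => (((((((congrArg (fun Z => (m (i Z) (m (i x0) (m x0 (i x0))))) (e42665 x0 x1).symm).trans (e117871 (m (i x0) (m x0 (i x0))) (m x0 x1)).symm).trans (congrArg (fun Z => (m (i (m (m (i x0) (m x0 (i x0))) (m x0 x1))) (i (m (m x0 x1) Z)))) (e23613 x0 x1 (i (i (m (m (i x0) (m x0 (i x0))) (i (m (i x0) (m x0 (i x0)))))))))).trans (congrArg (fun Z => (m (i Z) (i (m (m x0 x1) (m (i (m x0 x1)) (i (m (i (i (m (m (i x0) (m x0 (i x0))) (i (m (i x0) (m x0 (i x0))))))) (i x0)))))))) (e42665 x0 x1))).trans (congrArg (fun Z => (m (i (m (i x0) (m x0 x1))) (i (m (m x0 x1) (m (i (m x0 x1)) (i (m (i (i Z)) (i x0)))))))) (e473 (i x0) x0 x0))).trans (congrArg (fun Z => (m (i (m (i x0) (m x0 x1))) (i (m (m x0 x1) (m (i (m x0 x1)) (i (m (i (i Z)) (i x0)))))))) (e39983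 x0))).trans (e117871 (i x0) (m x0 x1)))
  have e119767 : ∀ x0, (m (m (i x0) (m x0 (i x0))) (m (i (m (i x0) (m x0 (i x0)))) (i x0))) = (m (i x0) (m x0 (i x0))) := fun x0 => ((congrArg (fun Z => (m (m (i x0) (m x0 (i x0))) Z)) (e118515 x0 (i x0)).symm).trans (hA (m (i x0) (m x0 (i x0)))))
  have e120489 : ∀ x0, (m (i x0) (m (i (i x0)) (m (i x0) (m x0 (i x0))))) = (m (i x0) (m x0 (i x0))) := fun x0 => (((congrArg (fun Z => (m (i x0) (m (i (i x0)) Z))) (e119767 x0).symm).trans (e46102 (i x0) (m (i x0) (m x0 (i x0))))).trans (e119767 x0))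
  have e134274 : ∀ x0 x1, (m (i (m (m (i x0) x0) x1)) (m (i x0) (m x0 (i x0)))) = (m (i (m (m (i x0) x0) x1)) (i x0)) := fun x0 x1 => (((congrArg (fun Z => (m Z (m (i x0) (m x0 (i x0))))) (e1190 (m (i x0) x0) x1).symm).trans (e63958 x0 (m (i (i (m (i x1) (i (i x1))))) (i x1)))).trans (congrArg (fun Z => (m Z (i x0))) (e1190 (m (i x0) x0) x1)))
  have e134557 : ∀ x0 x1 x2, (m (m x0 (i (m (m (i x1) x1) x2))) (m (i x1) (m x1 (i x1)))) = (i (m (m x1 x2) (i x0))) := fun x0 x1 x2 => ((((e66 (i (m (m (i x1) x1) x2)) (m (i x1) (m x1 (i x1))) x0).symm.trans (congrArg (fun Z => (i (m (i Z) (i x0)))) (e134274 x1 x2))).trans (e66 (i (m (m (i x1) x1) x2)) (i x1) x0)).trans (e124 x0 x1 x2))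
  have e134892 : ∀ x0, (m (m (i x0) (i (i x0))) (m (i x0) (m x0 (i x0)))) = (m (m (i x0) (i (i x0))) (i x0)) := fun x0 => (((e6081 x0 (i x0) (m (i x0) (m x0 (i x0)))).symm.trans (e134557 (i x0) x0 (m (i (m (i x0) x0)) (i x0)))).trans (e6317 x0))
  have e135533 : ∀ x0 x1, (i (m (m (i (i x0)) (m (i x0) (m x0 (i x0)))) (i x1))) = (i (m (m (i (i x0)) (i x0)) (i x1))) := fun x0 x1 => (((e16479 x1 (i x0) (m x0 (i x0))).symm.trans (congrArg (fun Z => (m (m x1 (i Z)) (i (i (i x0))))) (e134892 x0))).trans (e297 x1 (i x0)))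
  have e137242 : ∀ x0 x1, (i (m (m (i (i x0)) (m (i x0) (m x0 (i x0)))) x1)) = (i (m (m (i (i x0)) (i x0)) x1)) := fun x0 x1 => (((e1190 (m (i (i x0)) (m (i x0) (m x0 (i x0)))) x1).symm.trans (e135533 x0 (m (i (i (m (i x1) (i (i x1))))) (i x1)))).trans (e1190 (m (i (i x0)) (i x0)) x1))
  have e138084 : ∀ x0 x1 x2, (m (m x0 (m (i (i x1)) (m (i x1) (m x1 (i x1))))) x2) = (m (m x0 (m (i (i x1)) (i x1))) x2) := fun x0 x1 x2 => (((e66 (m (i (i x1)) (m (i x1) (m x1 (i x1)))) x2 x0).symm.trans (congrArg (fun Z => (i (m Z (i x0)))) (e137242 x1 x2))).trans (e66 (m (i (i x1)) (i x1)) x2 x0))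
  have e139568 : ∀ x0 x1, (m (m (i x0) (m x0 (i x0))) x1) = (m (i x0) x1) := fun x0 x1 => (((congrArg (fun Z => (m Z x1)) (e120489 x0).symm).trans (e138084 (i x0) x0 x1)).trans (congrArg (fun Z => (m Z x1)) (hA (i x0))))
  have e139647 : ∀ x0 x1, (i (m x0 (i (m (i x1) (m x1 (i x1)))))) = (i (m x0 (i (i x1)))) := fun x0 x1 => (((e183 (m (i x1) (m x1 (i x1))) x0).symm.trans (congrArg (fun Z => (m Z (i x0))) (e139568 x1 (i (i (m (i x0) (i (i x0)))))))).trans (e183 (i x1) x0))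
  have e139672 : ∀ x0 x1, (i (m (i (i (m (i (m x0 x1)) x0))) (i x0))) = (m x0 x1) := fun x0 x1 => (((((((e4007 x0 x0 x0 x1).symm.trans (congrArg (fun Z => (m (m x0 Z) x1)) (e5287 x0 x0).symm)).trans (e66 (m (m (i (i (m (i x0) (i (i x0))))) (i x0)) x0) x1 x0).symm).trans (e4418 (i x0) (m (m (i (i (m (i x0) (i (i x0))))) (i x0)) x0) x1).symm).trans (congrArg (fun Z => (m (m (i (m (i (i (m (i x0) (i (i x0))))) (i x0))) Z) x1)) (e1234 (i (i (m (i x0) (i (i x0))))) (i x0) x0).symm)).trans (e139568 (m (i (i (m (i x0) (i (i x0))))) (i x0)) x1)).trans (e44385 x0 x1))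
  have e139988 : ∀ x0 x1, (m (m (i x0) (m x0 x1)) (m (i x1) (i x0))) = (m x1 (m (i x1) (i x0))) := fun x0 x1 => (((e46909 (i x0) x0 (i x0) x1).symm.trans (e139568 x0 (m (i (i x0)) (m x1 (m (i x1) (i x0)))))).trans (e46102 (i x0) x1))
  have e140162 : ∀ x0, (i (m (i (i (m (i x0) x0))) (i x0))) = x0 := fun x0 => (((congrArg (fun Z => (i (m (i (i (m (i Z) x0))) (i x0)))) (hA x0).symm).trans (e139672 x0 (m (i x0) x0))).trans (hA x0))
  have e141205 : ∀ x0 x1, (m x0 (i (m (i (i (m x1 (i x1)))) x1))) = (m x0 (m (i (i (m (i x1) x1))) (i x1))) := fun x0 x1 => ((((congrArg (fun Z => (m x0 (i (m (i (i (m x1 (i x1)))) Z)))) (e140162 x1).symm).trans (congrArg (fun Z => (m x0 (i (m (i (i Z)) (i (m (i (i (m (i x1) x1))) (i x1))))))) (e83793 x1).symm)).trans (congrArg (fun Z => (m x0 (i (m (i (i (m Z (i (i (m (i (i (m (i x1) x1))) (i x1))))))) (i (m (i (i (m (i x1) x1))) (i x1))))))) (e140162 x1).symm)).trans (e1472 x0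 (m (i (i (m (i x1) x1))) (i x1))))
  have e141263 : ∀ x0 x1, (m (i (m (i (i (m x0 (i x0)))) x0)) x1) = (m (m (i (i (m (i x0) x0))) (i x0)) x1) := fun x0 x1 => ((((congrArg (fun Z => (m (i (m (i (i (m x0 (i x0)))) Z)) x1)) (e140162 x0).symm).trans (congrArg (fun Z => (m Z x1)) (e73997 (m (i (i (m (i x0) x0))) (i x0)) x0).symm)).trans (congrArg (fun Z => (m (m (m (m (i (i (m (i x0) x0))) (i x0)) (m Z (i (i (m (i x0) x0))))) (i x0)) x1)) (e140162 x0).symm)).trans (e5155 (i (i (m (i x0) x0))) (i x0) x1))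
  have e143873 : ∀ x0 x1, (m x0 (i (m (i x1) (m x1 (i x1))))) = (m x0 (i (i x1))) := fun x0 x1 => (((e139672 x0 (i (m (i x1) (m x1 (i x1))))).symm.trans (congrArg (fun Z => (i (m (i (i (m Z x0))) (i x0)))) (e139647 x0 x1))).trans (e139672 x0 (i (i x1))))
  have e143886 : ∀ x0, (i (m (i x0) (m x0 (i x0)))) = (i (i x0)) := fun x0 => (((hA (i (m (i x0) (m x0 (i x0))))).symm.trans (congrArg (fun Z => (m (i (m (i x0) (m x0 (i x0)))) Z)) (e143873 (i (i (m (i x0) (m x0 (i x0))))) x0))).trans (e46509 x0))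
  have e144458 : ∀ x0 x1, (m (m x0 (i x1)) (m x1 (i x1))) = (i (m (i (i x1)) (i x0))) := fun x0 x1 => ((e66 (i x1) (m x1 (i x1)) x0).symm.trans (congrArg (fun Z => (i (m Z (i x0)))) (e143886 x1)))
  have e144864 : ∀ x0, (m (i x0) (m x0 (i x0))) = (i x0) := fun x0 => ((((e119767 x0).symm.trans (congrArg (fun Z => (m (m (i x0) (m x0 (i x0))) (m Z (i x0)))) (e143886 x0))).trans (e139568 x0 (m (i (i x0)) (i x0)))).trans (hA (i x0)))
  have e144974 : ∀ x0, (m x0 (m (m (i (i (m (i x0) x0))) (i x0)) x0)) = x0 := fun x0 => ((((congrArg (fun Z => (m x0 (m (m (i (i (m (i x0) x0))) (i x0)) Z))) (e140162 x0).symm).trans (congrArg (fun Z => (m Z (m (m (i (i (m (i x0) x0))) (i x0)) (i (m (i (i (m (i x0) x0))) (i x0)))))) (e140162 x0).symm)).trans (e144864 (m (i (i (m (i x0) x0))) (i x0)))).trans (e140162 x0))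
  have e144984 : ∀ x0 x1, (m (m x0 x1) (m (m (i (i (m (i x1) x1))) (i x1)) x1)) = (i (m (i x1) (i x0))) := fun x0 x1 => ((e66 x1 (m (m (i (i (m (i x1) x1))) (i x1)) x1) x0).symm.trans (congrArg (fun Z => (i (m (i Z) (i x0)))) (e144974 x1)))
  have e158892 : ∀ x0 x1, (m x0 (m (i (i (m (i (i x1)) (i x1)))) (i (i x1)))) = (m x0 x1) := fun x0 x1 => ((e141205 x0 (i x1)).symm.trans (e1472 x0 x1))
  have e160096 : ∀ x0, (m (i (i (m (i (i x0)) (i x0)))) (i (i x0))) = x0 := fun x0 => (((((e140162 (m (i (i (m (i (i x0)) (i x0)))) (i (i x0)))).symm.trans (congrArg (fun Z => (i (m (i (i Z)) (i (m (i (i (m (i (i x0)) (i x0)))) (i (i x0))))))) (e158892 (i (m (i (i (m (i (i x0)) (i x0)))) (i (i x0)))) x0))).trans (congrArg (fun Z => (i (m (i (i (m Z x0))) (i (m (i (i (m (i (i x0)) (i x0)))) (i (i x0))))))) (e140162 (i x0)))).trans (congrArg (fun Z => (i (m (i (i (m (i x0) x0))) Z))) (e140162 (i x0)))).trans (e140162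 x0))
  have e164206 : ∀ x0 x1, (i (m (i (i (i (m (i (i (m x0 (i x0)))) x0)))) (i x1))) = (i (m (i x0) (i x1))) := fun x0 x1 => (((((e144458 x1 (i (m (i (i (m x0 (i x0)))) x0))).symm.trans (congrArg (fun Z => (m (m x1 (i (i (m (i (i (m x0 (i x0)))) x0)))) Z)) (e141263 x0 (i (i (m (i (i (m x0 (i x0)))) x0)))))).trans (congrArg (fun Z => (m Z (m (m (i (i (m (i x0) x0))) (i x0)) (i (i (m (i (i (m x0 (i x0)))) x0)))))) (e4318 x1 x0))).trans (congrArg (fun Z => (m (m x1 x0) Z)) (e4189 (i (i (m (i x0) x0))) (i x0) x0))).trans (e144984 x1 x0))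
  have e164294 : ∀ x0 x1, (i (m (i (i (i (m (i (i (m x0 (i x0)))) x0)))) x1)) = (i (m (i x0) x1)) := fun x0 x1 => (((e785 (i (i (m (i (i (m x0 (i x0)))) x0))) x1).symm.trans (e164206 x0 (m (i (i (m (i x1) (i (i x1))))) (i x1)))).trans (e785 x0 x1))
  have e166032 : ∀ x0 x1, (m (i (i (i (m (i (i (m x0 (i x0)))) x0)))) x1) = (m (i x0) x1) := fun x0 x1 => (((((e160096 (m (i (i (i (m (i (i (m x0 (i x0)))) x0)))) x1)).symm.trans (congrArg (fun Z => (m (i (i (m (i Z) (i (m (i (i (i (m (i (i (m x0 (i x0)))) x0)))) x1))))) (i (i (m (i (i (i (m (i (i (m x0 (i x0)))) x0)))) x1))))) (e164294 x0 x1))).trans (congrArg (fun Z => (m (i (i (m (i (i (m (i x0) x1))) Z))) (i (i (m (i (i (i (m (i (i (m x0 (i x0)))) x0)))) x1))))) (e164294 x0 x1))).trans (congrArg (fun Z => (m (i (i (m (i (i (m (i x0) x1))) (i (m (i x0) x1))))) (i Z))) (e164294 x0 x1))).trans (e160096 (m (i x0) x1)))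
  have e166092 : ∀ x0 x1, (m (i (i (m (i (i (m (i x0) (i (i x0))))) (i x0)))) x1) = (m (i x0) x1) := fun x0 x1 => ((((((e166032 (i (m (i (i (m (i x0) (i (i x0))))) (i x0))) x1).symm.trans (congrArg (fun Z => (m (i (i Z)) x1)) (e785 (i (m (i (m (i (i (m (i x0) (i (i x0))))) (i x0))) (i (i (m (i (i (m (i x0) (i (i x0))))) (i x0)))))) x0))).trans (congrArg (fun Z => (m (i (i (i (m Z x0)))) x1)) (e4023 (i (m (i (i (m (i x0) (i (i x0))))) (i x0))) (i x0)))).trans (congrArg (fun Z => (m (i (i (i (m (i Z) x0)))) x1)) (e66 (i (i (m (i x0) (i (i x0))))) (i x0) x0))).trans (congrArg (fun Z => (m (i (i (i (m (i Z) x0)))) x1)) (e183 x0 x0))).trans (e166032 x0 x1))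
  have e167367 : ∀ x0 x1, (m (i (i (m (i (i (m x0 (i x0)))) x0))) x1) = (m x0 x1) := fun x0 x1 => ((((((congrArg (fun Z => (m (i (i (m (i Z) x0))) x1)) (e183 x0 x0).symm).trans (congrArg (fun Z => (m (i (i (m (i Z) x0))) x1)) (e66 (i (i (m (i x0) (i (i x0))))) (i x0) x0).symm)).trans (congrArg (fun Z => (m (i (i (m Z x0))) x1)) (e4023 (i (m (i (i (m (i x0) (i (i x0))))) (i x0))) (i x0)).symm)).trans (congrArg (fun Z => (m (i Z) x1)) (e785 (i (m (i (m (i (i (m (i x0) (i (i x0))))) (i x0))) (i (i (m (i (i (m (i x0) (i (i x0))))) (i x0)))))) x0).symm)).trans (e166092 (m (i (i (m (i x0) (i (i x0))))) (i x0)) x1)).trans (e44385 x0 x1))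
  have e167884 : ∀ x0, (m (i (i (m (i x0) (i (i x0))))) (i x0)) = (m (i (i (m (i x0) x0))) (i x0)) := fun x0 => ((((e160096 (m (i (i (m (i x0) (i (i x0))))) (i x0))).symm.trans (congrArg (fun Z => (m (i (i Z)) (i (i (m (i (i (m (i x0) (i (i x0))))) (i x0)))))) (e166092 x0 (i (m (i (i (m (i x0) (i (i x0))))) (i x0)))))).trans (e4318 (i (i (m (i x0) (i (m (i (i (m (i x0) (i (i x0))))) (i x0)))))) (i x0))).trans (congrArg (fun Z => (m (i Z) (i x0))) (e785 x0 x0)))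
  have e168133 : ∀ x0, (i (i (m (i (i (m x0 (i x0)))) x0))) = x0 := fun x0 => (((((hA (i (i (m (i (i (m x0 (i x0)))) x0)))).symm.trans (e167367 x0 (m (i (i (i (m (i (i (m x0 (i x0)))) x0)))) (i (i (m (i (i (m x0 (i x0)))) x0)))))).trans (congrArg (fun Z => (m x0 Z)) (e166032 x0 (i (i (m (i (i (m x0 (i x0)))) x0)))))).trans (congrArg (fun Z => (m x0 Z)) (e4318 (i x0) x0))).trans (hA x0))
  have e169359 : ∀ x0 x1, (m (m x0 (i (i (m (i x1) (i (i x1)))))) (i (i (i x1)))) = (i (m x1 (i x0))) := fun x0 x1 => (((((((e46590 x0 (i (i (m (i x1) (i (i x1))))) (i x1)).symm.trans (congrArg (fun Z => (m (m x0 (m (m (i (i (m (i x1) (i (i x1))))) (i x1)) (m (i Z) (i (i (m (i x1) (i (i x1)))))))) (i (i (i x1))))) (e167884 x1))).trans (congrArg (fun Z => (m (m x0 Z) (i (i (i x1))))) (e5287 x1 (m (i (m (i (i (m (i x1) x1))) (i x1))) (i (i (m (i x1) (i (i x1))))))))).trans (e4007 x0 x1 (m (i (m (i (i (m (i x1) x1)))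 (i x1))) (i (i (m (i x1) (i (i x1)))))) (i (i (i x1))))).trans (congrArg (fun Z => (i (m (i (i (m (i (m (m Z (i (i (m (i x1) (i (i x1)))))) (i (i (i x1))))) x1))) (i x0)))) (e140162 x1))).trans (congrArg (fun Z => (i (m (i (i (m (i Z) x1))) (i x0)))) (e74495 x1))).trans (congrArg (fun Z => (i Z)) (e167367 x1 (i x0))))
  have e172284 : ∀ x0 x1, (m (m x0 (i (i (m x1 (i x1))))) (i (i x1))) = (m (m x0 (i (i (m x1 (i x1))))) x1) := fun x0 x1 => ((((((congrArg (fun Z => (m (m x0 (i (i (m x1 (i x1))))) (i Z))) (e168133 (i x1)).symm).trans (congrArg (fun Z => (m (m x0 Z) (i (i (i (m (i (i (m (i x1) (i (i x1))))) (i x1))))))) (e4023 x1 (i x1)).symm)).trans (congrArg (fun Z => (m (m x0 (i Z)) (i (i (i (m (i (i (m (i x1) (i (i x1))))) (i x1))))))) (e1056 x1 (i (i (m (i (i (m (i x1) (i (i x1))))) (i x1))))).symm)).trans (e169359 x0 (m (i (i (m (i x1) (i (i x1))))) (i x1)))).trans (congrArg (fun Z => (i Z)) (e5287 x1 (i x0)))).trans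 (e66 (i (i (m x1 (i x1)))) x1 x0))
  have e185058 : ∀ x0, (m (m x0 (i x0)) (i (i x0))) = (m (m x0 (i x0)) x0) := fun x0 => (((((e44063 (m x0 (i x0)) (i x0)).symm.trans (e5287 (i (m x0 (i x0))) (i (i x0))).symm).trans (e172284 (i (i (m (i (i (m x0 (i x0)))) (i (i (i (m x0 (i x0)))))))) x0)).trans (e5287 (i (m x0 (i x0))) x0)).trans (e44385 (m x0 (i x0)) x0))
  have e185270 : ∀ x0 x1, (m (m x0 (m x1 (i x1))) (i (i x1))) = (m (m x0 (m x1 (i x1))) x1) := fun x0 x1 => (((e66 (m x1 (i x1)) (i (i x1)) x0).symm.trans (congrArg (fun Z => (i (m (i Z) (i x0)))) (e185058 x1))).trans (e66 (m x1 (i x1)) x1 x0))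
  have e185927 : ∀ x0, (m (i x0) (i (i x0))) = (m (i x0) x0) := fun x0 => ((((e39983 x0).symm.trans (e15886 x0 (i (i x0))).symm).trans (e185270 (m (i x0) (m x0 (i x0))) x0)).trans (e306 x0))
  have e186186 : ∀ x0 x1, (m (i (i x0)) x1) = (m x0 x1) := fun x0 x1 => ((((((e139568 (i x0) x1).symm.trans (e15886 (i x0) x1).symm).trans (congrArg (fun Z => (m (m (m (i (i x0)) Z) (m (i x0) (i (i x0)))) x1)) (e185927 x0))).trans (congrArg (fun Z => (m Z x1)) (e139988 (i x0) x0))).trans (congrArg (fun Z => (m (m x0 Z) x1)) (e185927 x0))).trans (congrArg (fun Z => (m Z x1)) (hA x0)))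
  exact ⟨fun x => (e144864 x), fun x => (e186186 x (i x))⟩
end
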